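/- arXiv:0709.2644 — 7 statements merged into one kernel-verified Lean document; each statement's English description precedes it below -/
import Mathlib

section
/- Let m' ⊆ m be a Lie triple system, let a' be a Cartan subalgebra of m', and let a be a Cartan subalgebra of m with a' = a ∩ m'. Then: (a) every root α ∈ Δ(m',a') is of the form α = λ|_{a'} for some λ ∈ Δ(m,a) with λ|_{a'} ≠ 0, and for every α ∈ Δ(m',a') the root space of m' satisfies m'_α = (Σ_{λ ∈ Δ(m,a), λ|_{a'} = α} m_λ) ∩ m', the sum running over all roots λ of Δ(m,a) whose restriction to a' equals α. (b) If a' = a, then Δ(m',a') ⊆ Δ(m,a) and m'_α = m_α ∩ m' for every α ∈ Δ(m',a'). -/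
section

variable {L : Type} [LieRing L] [LieAlgebra ℝ L]

/-- A real subspace of a Lie algebra is *flat* if the Lie bracket vanishes on it. -/
def IsFlat (a : Submodule ℝ L) : Prop := ∀ x ∈ a, ∀ y ∈ a, ⁅x, y⁆ = 0

/-- `a` is a *Cartan subalgebra of `m`*: a flat subspace of `m` which is maximal among
flat subspaces of `m`. -/
def IsCartanSubalgebraIn (m a : Submodule ℝ L) : Prop :=
  a ≤ m ∧ IsFlat a ∧ ∀ b : Submodule ℝ L, b ≤ m → IsFlat b → a ≤ b → b = a

/-- `m'` is a *Lie triple system* contained in `m`. -/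
def IsLieTripleSystemIn (m m' : Submodule ℝ L) : Prop :=
  m' ≤ m ∧ ∀ x ∈ m', ∀ y ∈ m', ∀ z ∈ m', ⁅⁅x, y⁆, z⁆ ∈ m'

/-- The root space of `m` relative to the Cartan subalgebra `a`, for the linear form `lam`
on `a`:  `m_lam = {X ∈ m : ∀ Z ∈ a, ⁅Z,⁅Z,X⁆⁆ = -lam(Z)² • X}`. -/
def rootSpaceIn (m a : Submodule ℝ L) (lam : ↥a →ₗ[ℝ] ℝ) : Submodule ℝ L where
  carrier := {X | X ∈ m ∧ ∀ Z : ↥a, ⁅(Z : L), ⁅(Z : L), X⁆⁆ = (-((lam Z) ^ 2)) • X}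
  zero_mem' := ⟨m.zero_mem, fun Z => by simp⟩
  add_mem' := fun hX hY => ⟨m.add_mem hX.1 hY.1, fun Z => by
    rw [lie_add, lie_add, hX.2 Z, hY.2 Z, smul_add]⟩
  smul_mem' := fun c X hX => ⟨m.smul_mem c hX.1, fun Z => by
    rw [lie_smul, lie_smul, hX.2 Z, smul_comm]⟩

/-- The root system `Δ(m,a)`: all nonzero linear forms on `a` with nonzero root space. -/
def rootSystemIn (m a : Submodule ℝ L) : Set (↥a →ₗ[ℝ] ℝ) :=
  {lam | lam ≠ 0 ∧ rootSpaceIn m a lam ≠ ⊥}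

/-- Restriction of a linear form on `a` to a smaller subspace `a' ≤ a`. -/
def restrictForm {a' a : Submodule ℝ L} (h : a' ≤ a) (lam : ↥a →ₗ[ℝ] ℝ) :
    ↥a' →ₗ[ℝ] ℝ :=
  lam.comp (Submodule.inclusion h)

end

section AuxLemmas

variable {L : Type} [LieRing L] [LieAlgebra ℝ L]

lemma mem_rootSpaceIn {m a : Submodule ℝ L} {lam : ↥a →ₗ[ℝ] ℝ} {X : L} :
    X ∈ rootSpaceIn m a lam ↔
      X ∈ m ∧ ∀ Z : ↥a, ⁅(Z : L), ⁅(Z : L), X⁆⁆ = (-((lam Z) ^ 2)) • X :=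
  Iff.rfl

lemma lie_swap_of_lie_eq_zero {Z W : L} (h : ⁅Z, W⁆ = 0) (x : L) :
    ⁅Z, ⁅W, x⁆⁆ = ⁅W, ⁅Z, x⁆⁆ := by
  rw [leibniz_lie, h, zero_lie, zero_add]

lemma two_forms_or {M : Type*} [AddCommGroup M] [Module ℝ M]
    (f g : M →ₗ[ℝ] ℝ) (h : ∀ x, f x = 0 ∨ g x = 0) : f = 0 ∨ g = 0 := by
  by_contra hc
  push_neg at hc
  obtain ⟨hf, hg⟩ := hc
  obtain ⟨u, hu⟩ : ∃ u, f u ≠ 0 := by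
    by_contra h'; push_neg at h'; exact hf (LinearMap.ext fun x => h' x)
  obtain ⟨w, hw⟩ : ∃ w, g w ≠ 0 := by
    by_contra h'; push_neg at h'; exact hg (LinearMap.ext fun x => h' x)
  have hfw : f w = 0 := (h w).resolve_right hw
  have hgu : g u = 0 := (h u).resolve_left hu
  rcases h (u + w) with h1 | h1
  · rw [map_add, hfw, add_zero] at h1; exact hu h1
  · rw [map_add, hgu, zero_add] at h1; exact hw h1

/-- The key spectral-theoretic step: any element of `m` satisfying the root equations over
`a' ≤ a` for a nonzero form `α` lies in the sum of the root spaces of `(m,a)` whose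
restriction to `a'` is `α`. -/
lemma rootSpace_le_iSup
    {L : Type} [LieRing L] [LieAlgebra ℝ L] [Module.Finite ℝ L]
    (hkill : ∀ X : L, X ≠ 0 → killingForm ℝ L X X < 0)
    (k m : Submodule ℝ L)
    (hkm : ∀ x ∈ k, ∀ y ∈ m, ⁅x, y⁆ ∈ m)
    (hmm : ∀ x ∈ m, ∀ y ∈ m, ⁅x, y⁆ ∈ k)
    (a' a : Submodule ℝ L) (h' : a' ≤ a) (ham : a ≤ m) (hflat : IsFlat a)
    (α : ↥a' →ₗ[ℝ] ℝ) (hα : α ≠ 0) :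
    rootSpaceIn m a' α ≤
      ⨆ lam ∈ {l : ↥a →ₗ[ℝ] ℝ | l ∈ rootSystemIn m a ∧ restrictForm h' l = α},
        rootSpaceIn m a lam := by
  classical
  -- the inner product coming from the (negative definite) Killing form
  letI c : InnerProductSpace.Core ℝ L :=
    { inner := fun X Y => - killingForm ℝ L X Y
      conj_inner_symm := fun X Y => by
        show (starRingEnd ℝ) (-(killingForm ℝ L Y X)) = -(killingForm ℝ L X Y)
        rw [starRingEnd_apply, star_trivial, LieModule.traceForm_comm ℝ L L Y X]
      re_inner_nonneg := fun X => by
        show (0 : ℝ) ≤ RCLike.re (-(killingForm ℝ L X X))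
        rcases eq_or_ne X 0 with rfl | h
        · simp
        · have := hkill X h
          simp only [RCLike.re_to_real]
          linarith
      add_left := fun X Y Z => by
        show -(killingForm ℝ L (X + Y) Z) = -(killingForm ℝ L X Z) + -(killingForm ℝ L Y Z)
        rw [map_add, LinearMap.add_apply, neg_add]
      smul_left := fun X Y r => by
        show -(killingForm ℝ L (r • X) Y) = (starRingEnd ℝ) r * -(killingForm ℝ L X Y)
        rw [map_smul, LinearMap.smul_apply, smul_eq_mul, starRingEnd_apply, star_trivial,
          mul_neg]
      definite := fun X hX => by
        by_contra h
        have h2 := hkill X h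
        have hX' : -(killingForm ℝ L X X) = 0 := hX
        linarith }
  letI : NormedAddCommGroup L := c.toNormedAddCommGroup
  letI : InnerProductSpace ℝ L := InnerProductSpace.ofCore c.toCore
  set V : Submodule ℝ L := rootSpaceIn m a' α with hVdef
  -- basic bracket stability facts
  have hkm' : ∀ z ∈ a, ∀ C ∈ k, ⁅z, C⁆ ∈ m := by
    intro z hz C hC
    rw [← lie_skew]
    exact Submodule.neg_mem _ (hkm C hC z (ham hz))
  have had2mem : ∀ (Z : ↥a) (X : L), X ∈ m → ⁅(Z : L), ⁅(Z : L), X⁆⁆ ∈ m := by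
    intro Z X hX
    exact hkm' _ Z.2 _ (hmm _ (ham Z.2) _ hX)
  -- V is invariant under (ad Z)² for Z ∈ a
  have hVinv : ∀ (Z : ↥a), ∀ X ∈ V, ⁅(Z : L), ⁅(Z : L), X⁆⁆ ∈ V := by
    intro Z X hX
    refine ⟨had2mem Z X hX.1, fun W => ?_⟩
    have hc0 : ⁅(W : L), (Z : L)⁆ = 0 := hflat _ (h' W.2) _ Z.2
    have hsw := lie_swap_of_lie_eq_zero hc0
    simp only [hsw]
    rw [hX.2 W, lie_smul, lie_smul]
  -- the commuting family of symmetric operators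
  set T : ↥a → (↥V →ₗ[ℝ] ↥V) := fun Z =>
    LinearMap.restrict ((LieAlgebra.ad ℝ L (Z : L)) ∘ₗ (LieAlgebra.ad ℝ L (Z : L)))
      (fun X hX => by
        simpa only [LinearMap.comp_apply, LieAlgebra.ad_apply] using hVinv Z X hX)
    with hTdef
  have hTapp : ∀ (Z : ↥a) (y : ↥V), ((T Z y : ↥V) : L) = ⁅(Z : L), ⁅(Z : L), (y : L)⁆⁆ := by
    intro Z y
    rw [hTdef]
    rw [LinearMap.restrict_coe_apply]
    simp [LieAlgebra.ad_apply]
  have hskewK : ∀ z u w : L, killingForm ℝ L ⁅z, u⁆ w = - killingForm ℝ L u ⁅z, w⁆ :=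
    fun z u w => LieModule.traceForm_apply_lie_apply' ℝ L L z u w
  have hsym : ∀ Z : ↥a, (T Z).IsSymmetric := by
    intro Z x y
    show (inner ℝ (T Z x) y : ℝ) = inner ℝ x (T Z y)
    rw [Submodule.coe_inner, Submodule.coe_inner, hTapp, hTapp]
    show -(killingForm ℝ L ⁅(Z : L), ⁅(Z : L), (x : L)⁆⁆ (y : L)) =
      -(killingForm ℝ L (x : L) ⁅(Z : L), ⁅(Z : L), (y : L)⁆⁆)
    rw [hskewK, hskewK]
    ring
  have hcomm : Pairwise (Function.onFun Commute T) := by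
    intro Z Z' _
    show T Z * T Z' = T Z' * T Z
    refine LinearMap.ext fun x => Subtype.ext ?_
    have hc0 : ⁅(Z : L), (Z' : L)⁆ = 0 := hflat _ Z.2 _ Z'.2
    have hsw := lie_swap_of_lie_eq_zero hc0
    show ((T Z * T Z') x : L) = ((T Z' * T Z) x : L)
    rw [Module.End.mul_apply, Module.End.mul_apply, hTapp, hTapp, hTapp, hTapp]
    simp only [hsw]
  have htop : (⨆ χ : ↥a → ℝ, ⨅ Z : ↥a, Module.End.eigenspace (T Z) (χ Z)) = ⊤ :=
    LinearMap.IsSymmetric.iSup_iInf_eq_top_of_commute hsym hcomm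
  -- now prove the inclusion
  intro X hX
  have hx : (⟨X, hX⟩ : ↥V) ∈ ⨆ χ : ↥a → ℝ, ⨅ Z : ↥a, Module.End.eigenspace (T Z) (χ Z) := by
    rw [htop]; trivial
  have main : ∀ v : ↥V, v ∈ (⨆ χ : ↥a → ℝ, ⨅ Z : ↥a, Module.End.eigenspace (T Z) (χ Z)) →
      (v : L) ∈ ⨆ lam ∈ {l : ↥a →ₗ[ℝ] ℝ | l ∈ rootSystemIn m a ∧ restrictForm h' l = α},
        rootSpaceIn m a lam := by
    intro v hv
    refine Submodule.iSup_induction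
      (motive := fun v : ↥V => (v : L) ∈
        ⨆ lam ∈ {l : ↥a →ₗ[ℝ] ℝ | l ∈ rootSystemIn m a ∧ restrictForm h' l = α},
          rootSpaceIn m a lam)
      _ hv ?_ ?_ ?_
    · -- the eigenvector case
      intro χ v hv
      rcases eq_or_ne v 0 with rfl | hv0
      · simpa using Submodule.zero_mem _
      obtain ⟨hX₀m, hX₀eig⟩ := mem_rootSpaceIn.mp v.2
      set X₀ : L := (v : L) with hX₀def
      have hX₀ : X₀ ≠ 0 := fun h => hv0 (Subtype.ext h)
      have heig : ∀ Z : ↥a, ⁅(Z : L), ⁅(Z : L), X₀⁆⁆ = χ Z • X₀ := by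
        intro Z
        have h1 : v ∈ Module.End.eigenspace (T Z) (χ Z) := by
          exact (Submodule.mem_iInf _).mp hv Z
        have h2 : T Z v = χ Z • v := Module.End.mem_eigenspace_iff.mp h1
        have h3 := congrArg (Subtype.val) h2
        rw [hTapp] at h3
        simpa using h3
      have cancel : ∀ cc d : ℝ, cc • X₀ = d • X₀ → cc = d := by
        intro cc d hcd
        have h5 : (cc - d) • X₀ = 0 := by rw [sub_smul, hcd, sub_self]
        exact sub_eq_zero.mp ((smul_eq_zero.mp h5).resolve_right hX₀)
      obtain ⟨Z₀', hs⟩ : ∃ Z₀' : ↥a', α Z₀' ≠ 0 := by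
        by_contra hc; push_neg at hc; exact hα (LinearMap.ext fun W => by simpa using hc W)
      set s : ℝ := α Z₀' with hsdef
      set Z₀ : ↥a := Submodule.inclusion h' Z₀' with hZ₀def
      have hχres : ∀ W : ↥a', χ (Submodule.inclusion h' W) = -(α W ^ 2) := by
        intro W
        have h1 := heig (Submodule.inclusion h' W)
        rw [Submodule.coe_inclusion] at h1
        exact cancel _ _ (h1.symm.trans (hX₀eig W))
      have hs2 : χ Z₀ = -(s ^ 2) := hχres Z₀'
      set b : ↥a → ℝ := fun Z => (χ (Z + Z₀) - χ Z - χ Z₀) / 2 with hbdef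
      have hb : ∀ Z : ↥a, ⁅(Z : L), ⁅(Z₀ : L), X₀⁆⁆ = b Z • X₀ := by
        intro Z
        have hc0 : ⁅(Z₀ : L), (Z : L)⁆ = 0 := hflat _ Z₀.2 _ Z.2
        have hsw := lie_swap_of_lie_eq_zero hc0
        have h2 : (2 : ℝ) • ⁅(Z : L), ⁅(Z₀ : L), X₀⁆⁆ = (χ (Z + Z₀) - χ Z - χ Z₀) • X₀ := by
          have h1 := heig (Z + Z₀)
          rw [Submodule.coe_add] at h1
          simp only [add_lie, lie_add] at h1
          rw [hsw, heig Z, heig Z₀] at h1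
          rw [two_smul, sub_smul, sub_smul, ← h1]
          abel
        have h3 : b Z = 2⁻¹ * (χ (Z + Z₀) - χ Z - χ Z₀) := by
          simp only [hbdef]; ring
        rw [h3, ← smul_smul, ← h2, smul_smul]
        norm_num
      have hb2 : ∀ Z : ↥a, b Z ^ 2 = χ Z * χ Z₀ := by
        intro Z
        have hc0 : ⁅(Z₀ : L), (Z : L)⁆ = 0 := hflat _ Z₀.2 _ Z.2
        have hsw := lie_swap_of_lie_eq_zero hc0
        have e1 : ⁅(Z : L), ⁅(Z₀ : L), ⁅(Z : L), ⁅(Z₀ : L), X₀⁆⁆⁆⁆ = (b Z * b Z) • X₀ := by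
          rw [hb Z, lie_smul, lie_smul, hb Z, smul_smul]
        have e2 : ⁅(Z : L), ⁅(Z₀ : L), ⁅(Z : L), ⁅(Z₀ : L), X₀⁆⁆⁆⁆ = (χ Z * χ Z₀) • X₀ := by
          rw [hsw, heig Z₀, lie_smul, lie_smul, heig Z, smul_smul, mul_comm (χ Z₀) (χ Z)]
        rw [pow_two]
        exact cancel _ _ (e1.symm.trans e2)
      have hbZ₀ : b Z₀ = χ Z₀ := cancel _ _ ((hb Z₀).symm.trans (heig Z₀))
      have hbadd : ∀ Z Z' : ↥a, b (Z + Z') = b Z + b Z' := by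
        intro Z Z'
        apply cancel
        rw [← hb (Z + Z'), Submodule.coe_add, add_lie, hb Z, hb Z', add_smul]
      have hbsmul : ∀ (cc : ℝ) (Z : ↥a), b (cc • Z) = cc * b Z := by
        intro cc Z
        apply cancel
        rw [← hb (cc • Z), Submodule.coe_smul, smul_lie, hb Z, smul_smul]
      set lam : ↥a →ₗ[ℝ] ℝ :=
        { toFun := fun Z => b Z / (-s)
          map_add' := fun Z Z' => by
            show b (Z + Z') / (-s) = b Z / (-s) + b Z' / (-s)
            rw [hbadd]; ring
          map_smul' := fun cc Z => by
            show b (cc • Z) / (-s) = (RingHom.id ℝ) cc • (b Z / (-s))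
            rw [hbsmul]; simp only [RingHom.id_apply, smul_eq_mul]; ring } with hlamdef
      have hlam : ∀ Z : ↥a, lam Z = b Z / (-s) := fun Z => rfl
      have hlamsq : ∀ Z : ↥a, lam Z ^ 2 = - χ Z := by
        intro Z
        rw [hlam, div_pow, hb2 Z, hs2]
        have hss : (-s) ^ 2 = s ^ 2 := by ring
        rw [hss]
        field_simp
      have hlamZ₀ : lam Z₀ = s := by
        rw [hlam, hbZ₀, hs2]
        field_simp
      have hX₀root : X₀ ∈ rootSpaceIn m a lam := by
        refine ⟨hX₀m, fun Z => ?_⟩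
        rw [heig Z, hlamsq Z, neg_neg]
      have hlamne : lam ≠ 0 := fun h0 => hs (by rw [← hlamZ₀, h0]; simp)
      have hroot : lam ∈ rootSystemIn m a := by
        refine ⟨hlamne, fun hbot => hX₀ ?_⟩
        rw [hbot] at hX₀root
        exact (Submodule.mem_bot ℝ).mp hX₀root
      have hressq : ∀ W : ↥a', (restrictForm h' lam W) ^ 2 = α W ^ 2 := by
        intro W
        have h6 : restrictForm h' lam W = lam (Submodule.inclusion h' W) := rfl
        rw [h6, hlamsq, hχres W, neg_neg]
      have hor : restrictForm h' lam - α = 0 ∨ restrictForm h' lam + α = 0 := by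
        apply two_forms_or
        intro W
        have h7 : (restrictForm h' lam W - α W) * (restrictForm h' lam W + α W) = 0 := by
          linear_combination hressq W
        rcases mul_eq_zero.mp h7 with h8 | h8
        · left; rw [LinearMap.sub_apply]; exact h8
        · right; rw [LinearMap.add_apply]; exact h8
      rcases hor with hcase | hcase
      · have hres : restrictForm h' lam = α := by rwa [sub_eq_zero] at hcase
        exact Submodule.mem_iSup_of_mem lam
          (Submodule.mem_iSup_of_mem ⟨hroot, hres⟩ hX₀root)
      · have h5 : restrictForm h' lam = -α := eq_neg_of_add_eq_zero_left hcase
        have h6 : restrictForm h' (-lam) = - restrictForm h' lam := by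
          ext W; simp [restrictForm]
        have hres : restrictForm h' (-lam) = α := by rw [h6, h5, neg_neg]
        have hX₀rootneg : X₀ ∈ rootSpaceIn m a (-lam) := by
          refine ⟨hX₀m, fun Z => ?_⟩
          simp only [LinearMap.neg_apply, neg_sq]
          exact hX₀root.2 Z
        have hrootneg : (-lam) ∈ rootSystemIn m a := by
          refine ⟨fun h0 => hlamne ?_, fun hbot => hX₀ ?_⟩
          · rw [← neg_neg lam, h0, neg_zero]
          · rw [hbot] at hX₀rootneg; exact (Submodule.mem_bot ℝ).mp hX₀rootneg
        exact Submodule.mem_iSup_of_mem (-lam)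
          (Submodule.mem_iSup_of_mem ⟨hrootneg, hres⟩ hX₀rootneg)
    · simpa using Submodule.zero_mem _
    · intro u w hu hw
      rw [Submodule.coe_add]
      exact Submodule.add_mem _ hu hw
  exact main _ hx

end AuxLemmas

/-- Proposition 2.1: relation between the roots and root spaces of a Lie triple system `m'`
and those of the ambient space `m`. -/
theorem stmt0 {L : Type} [LieRing L] [LieAlgebra ℝ L] [Module.Finite ℝ L]
    (hkill : ∀ X : L, X ≠ 0 → killingForm ℝ L X X < 0)
    (k m : Submodule ℝ L) (hcompl : IsCompl k m)
    (hkk : ∀ x ∈ k, ∀ y ∈ k, ⁅x, y⁆ ∈ k)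
    (hkm : ∀ x ∈ k, ∀ y ∈ m, ⁅x, y⁆ ∈ m)
    (hmm : ∀ x ∈ m, ∀ y ∈ m, ⁅x, y⁆ ∈ k)
    (m' : Submodule ℝ L) (hm' : IsLieTripleSystemIn m m')
    (a' a : Submodule ℝ L)
    (ha' : IsCartanSubalgebraIn m' a') (ha : IsCartanSubalgebraIn m a)
    (haa' : a' = a ⊓ m') :
    (∀ α ∈ rootSystemIn m' a',
      (∃ lam ∈ rootSystemIn m a,
          restrictForm (haa'.trans_le inf_le_left) lam ≠ 0 ∧
          restrictForm (haa'.trans_le inf_le_left) lam = α) ∧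
      rootSpaceIn m' a' α =
        (⨆ lam ∈ {l : ↥a →ₗ[ℝ] ℝ | l ∈ rootSystemIn m a ∧
            restrictForm (haa'.trans_le inf_le_left) l = α}, rootSpaceIn m a lam) ⊓ m') ∧
    (a' = a → ∀ α ∈ rootSystemIn m' a',
      ∃ lam ∈ rootSystemIn m a,
        restrictForm (haa'.trans_le inf_le_left) lam = α ∧
        rootSpaceIn m' a' α = rootSpaceIn m a lam ⊓ m') := by
  have h' : a' ≤ a := haa'.trans_le inf_le_left
  have hm'm : m' ≤ m := hm'.1
  have ham : a ≤ m := ha.1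
  have hflat : IsFlat a := ha.2.1
  constructor
  · -- part (a)
    intro α hα
    -- the supremum of the relevant root spaces kills everything down to the `a'`-root
    -- equations:
    have hle : (⨆ lam ∈ {l : ↥a →ₗ[ℝ] ℝ | l ∈ rootSystemIn m a ∧
          restrictForm (haa'.trans_le inf_le_left) l = α}, rootSpaceIn m a lam)
        ≤ rootSpaceIn ⊤ a' α := by
      refine iSup₂_le fun l hl => ?_
      intro X hX
      refine ⟨Submodule.mem_top, fun W => ?_⟩
      have h1 : l (Submodule.inclusion h' W) = α W := by
        have := congrArg (fun f : ↥a' →ₗ[ℝ] ℝ => f W) hl.2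
        exact this
      rw [← h1]
      have h2 := hX.2 (Submodule.inclusion h' W)
      rwa [Submodule.coe_inclusion] at h2
    -- the hard inclusion, from the spectral theorem
    have hhard : rootSpaceIn m' a' α ≤
        ⨆ lam ∈ {l : ↥a →ₗ[ℝ] ℝ | l ∈ rootSystemIn m a ∧
          restrictForm (haa'.trans_le inf_le_left) l = α}, rootSpaceIn m a lam := by
      intro X hX
      exact rootSpace_le_iSup hkill k m hkm hmm a' a h' ham hflat α hα.1
        ⟨hm'm hX.1, hX.2⟩
    have heq : rootSpaceIn m' a' α =
        (⨆ lam ∈ {l : ↥a →ₗ[ℝ] ℝ | l ∈ rootSystemIn m a ∧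
          restrictForm (haa'.trans_le inf_le_left) l = α}, rootSpaceIn m a lam) ⊓ m' := by
      apply le_antisymm
      · intro X hX
        exact Submodule.mem_inf.mpr ⟨hhard hX, hX.1⟩
      · intro X hX
        obtain ⟨h1, h2⟩ := Submodule.mem_inf.mp hX
        exact ⟨h2, fun W => (hle h1).2 W⟩
    refine ⟨?_, heq⟩
    -- existence of a restricting root
    obtain ⟨X, hXmem, hXne⟩ := (Submodule.ne_bot_iff _).mp hα.2
    have hXsup := hhard hXmem
    rcases Set.eq_empty_or_nonempty {l : ↥a →ₗ[ℝ] ℝ | l ∈ rootSystemIn m a ∧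
        restrictForm (haa'.trans_le inf_le_left) l = α} with hS | ⟨l, hl⟩
    · exfalso
      rw [hS] at hXsup
      simp only [Set.mem_empty_iff_false, iSup_false, iSup_bot, Submodule.mem_bot] at hXsup
      exact hXne hXsup
    · exact ⟨l, hl.1, by rw [hl.2]; exact hα.1, hl.2⟩
  · -- part (b)
    intro h α hα
    have hle' : a ≤ a' := le_of_eq h.symm
    set lam : ↥a →ₗ[ℝ] ℝ := α.comp (Submodule.inclusion hle') with hlamdef
    have hresteq : restrictForm (haa'.trans_le inf_le_left) lam = α := by
      ext W
      exact congrArg α (Subtype.ext rfl)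
    have hlamne : lam ≠ 0 := by
      intro h0
      apply hα.1
      rw [← hresteq, h0]
      exact LinearMap.zero_comp _
    have heq : rootSpaceIn m' a' α = rootSpaceIn m a lam ⊓ m' := by
      ext X
      rw [Submodule.mem_inf]
      constructor
      · intro hX
        refine ⟨⟨hm'm hX.1, fun Z => ?_⟩, hX.1⟩
        have h1 := hX.2 (Submodule.inclusion hle' Z)
        have hlz : lam Z = α (Submodule.inclusion hle' Z) := rfl
        rw [hlz]
        rwa [Submodule.coe_inclusion] at h1
      · rintro ⟨⟨hXm, hXeig⟩, hXm'⟩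
        refine ⟨hXm', fun W => ?_⟩
        have h1 := hXeig (Submodule.inclusion h.le W)
        have hlw : lam (Submodule.inclusion h.le W) = α W := congrArg α (Subtype.ext rfl)
        rw [hlw] at h1
        rwa [Submodule.coe_inclusion] at h1
    refine ⟨lam, ⟨hlamne, fun hbot => hα.2 ?_⟩, hresteq, heq⟩
    rw [heq, hbot, bot_inf_eq]
end

section
/- Let m' ⊆ m be a Lie triple system, a' a Cartan subalgebra of m', a a Cartan subalgebra of m with a' = a ∩ m', and α ∈ Δ(m',a'). (a) If there is exactly one root λ ∈ Δ(m,a) with λ|_{a'} = α (α is elementary), then the Riesz vector λ^♯ lies in a'. (b) If λ, μ ∈ Δ(m,a) are two distinct roots with λ|_{a'} = α = μ|_{a'} (α is composite), then λ^♯ − μ^♯ is orthogonal to a' with respect to ⟨·,·⟩. -/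
section Helpers

variable {L : Type} [LieRing L] [LieAlgebra ℝ L]

local notation "κ" => killingForm ℝ L

lemma kf_symm (x y : L) : κ x y = κ y x := LieModule.traceForm_comm ℝ L L x y

lemma kf_inv (x y z : L) : κ ⁅x, y⁆ z = κ x ⁅y, z⁆ :=
  LieModule.traceForm_apply_lie_apply ℝ L L x y z

lemma kf_skew (z x y : L) : κ ⁅z, x⁆ y = -κ x ⁅z, y⁆ := by
  have h : κ ⁅x, z⁆ y = κ x ⁅z, y⁆ := kf_inv x z y
  rw [show (⁅z, x⁆ : L) = -⁅x, z⁆ from (lie_skew z x).symm, map_neg, LinearMap.neg_apply, h]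

lemma kf_skew' (z x y : L) : κ x ⁅z, y⁆ = -κ ⁅z, x⁆ y := by rw [kf_skew]; ring

section kill
variable (hkill : ∀ X : L, X ≠ 0 → killingForm ℝ L X X < 0)

include hkill in
lemma kf_zero {x : L} (h : κ x x = 0) : x = 0 := by
  by_contra hx
  exact absurd h (ne_of_lt (hkill x hx))

include hkill in
lemma kf_nonpos (x : L) : κ x x ≤ 0 := by
  by_cases hx : x = 0
  · simp [hx]
  · exact le_of_lt (hkill x hx)

end kill

/-- If two real linear forms have equal squares pointwise, they agree up to sign. -/
lemma form_sq_eq {M : Type*} [AddCommGroup M] [Module ℝ M] (f g : M →ₗ[ℝ] ℝ)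
    (h : ∀ x, (f x) ^ 2 = (g x) ^ 2) : f = g ∨ f = -g := by
  have hpm : ∀ x, f x = g x ∨ f x = -g x := fun x => sq_eq_sq_iff_eq_or_eq_neg.mp (h x)
  by_cases hfg : f = g
  · exact Or.inl hfg
  · right
    obtain ⟨y, hy⟩ : ∃ y, f y ≠ g y := by
      by_contra hc; push_neg at hc; exact hfg (LinearMap.ext hc)
    have hfy : f y = -g y := (hpm y).resolve_left hy
    have hgy : g y ≠ 0 := by
      intro h0; apply hy; rw [hfy, h0, neg_zero]
    ext x
    rcases hpm x with hx | hx
    · rcases hpm (x + y) with hxy | hxy <;>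
        simp only [map_add, LinearMap.neg_apply] at hx hxy ⊢
      · rw [hx, hfy] at hxy
        have : g y = 0 := by linarith
        exact absurd this hgy
      · rw [hx, hfy] at hxy
        have hgx : g x = 0 := by linarith
        rw [hx, hgx, neg_zero]
    · simpa using hx

/-- commuting of brackets by elements of a flat subspace -/
lemma flat_swap {a : Submodule ℝ L} (ha : IsFlat a) (u u' : ↥a) (y : L) :
    ⁅(u : L), ⁅(u' : L), y⁆⁆ = ⁅(u' : L), ⁅(u : L), y⁆⁆ := by
  have h := lie_lie (u : L) (u' : L) y
  rw [ha u u.2 u' u'.2] at h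
  simp only [zero_lie] at h
  exact (sub_eq_zero.mp h.symm)

/-- polarization -/
lemma polar {a : Submodule ℝ L} (ha : IsFlat a) {x : L} {f : ↥a →ₗ[ℝ] ℝ}
    (h : ∀ u : ↥a, ⁅(u : L), ⁅(u : L), x⁆⁆ = (-(f u ^ 2)) • x) (u u' : ↥a) :
    ⁅(u : L), ⁅(u' : L), x⁆⁆ = (-(f u * f u')) • x := by
  have hsw := flat_swap ha u' u x
  have hu := h u
  have hu' := h u'
  have huu := h (u + u')
  have hc : ((u + u' : ↥a) : L) = (u : L) + (u' : L) := rfl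
  rw [hc] at huu
  simp only [add_lie, lie_add] at huu
  rw [hsw, hu, hu', map_add] at huu
  have key : ⁅(u : L), ⁅(u' : L), x⁆⁆ + ⁅(u : L), ⁅(u' : L), x⁆⁆
      = (-(2 * (f u * f u'))) • x := by
    have e1 : ⁅(u : L), ⁅(u' : L), x⁆⁆ + ⁅(u : L), ⁅(u' : L), x⁆⁆
        = (-((f u + f u') ^ 2)) • x - (-(f u ^ 2)) • x - (-(f u' ^ 2)) • x := by
      rw [← huu]; abel
    rw [e1, ← sub_smul, ← sub_smul]
    congr 1
    ring
  have h2 : (2 : ℝ) • ⁅(u : L), ⁅(u' : L), x⁆⁆ = (2 : ℝ) • ((-(f u * f u')) • x) := by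
    rw [two_smul, key, smul_smul]
    congr 1
    ring
  have := smul_right_injective L (by norm_num : (2:ℝ) ≠ 0) h2
  exact this

/-- expansion of a submodule element in a basis, in the ambient space -/
lemma coe_basis_expand {p : Submodule ℝ L} {ι : Type*} [Fintype ι] (b : Module.Basis ι ℝ ↥p)
    (x : ↥p) : (x : L) = ∑ i, b.repr x i • ((b i : L)) := by
  have := congrArg (p.subtype) (b.sum_repr x)
  simp only [map_sum, map_smul, Submodule.subtype_apply] at this
  exact this.symm


/-- stronger version of flat_swap for ambient elements -/
lemma flat_swap'' {a : Submodule ℝ L} (ha : IsFlat a) {u u' : L} (hu : u ∈ a)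
    (hu' : u' ∈ a) (y : L) : ⁅u, ⁅u', y⁆⁆ = ⁅u', ⁅u, y⁆⁆ := by
  have h := lie_lie u u' y
  rw [ha u hu u' hu'] at h
  simp only [zero_lie] at h
  exact (sub_eq_zero.mp h.symm)

lemma flat_swap2 {a : Submodule ℝ L} (ha : IsFlat a) {z A B : L} (hz : z ∈ a)
    (hA : A ∈ a) (hB : B ∈ a) (y : L) :
    ⁅z, ⁅A, ⁅B, y⁆⁆⁆ = ⁅A, ⁅B, ⁅z, y⁆⁆⁆ := by
  rw [flat_swap'' ha hz hA, flat_swap'' ha hz hB]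

section kill2
variable (hkill : ∀ X : L, X ≠ 0 → killingForm ℝ L X X < 0)

/-- The inner product space core given by the negative of the Killing form. -/
noncomputable def negKillingCore : InnerProductSpace.Core ℝ L where
  inner x y := -killingForm ℝ L x y
  conj_inner_symm x y := by simp [kf_symm y x]
  re_inner_nonneg x := by simpa using neg_nonneg.mpr (kf_nonpos hkill x)
  add_left x y z := by simp; ring
  smul_left x y r := by simp
  definite x h := kf_zero hkill (by simpa using neg_eq_zero.mp h)

include hkill in
/-- rank one lemma: the joint eigenvalue matrix of a joint eigenvector has rank one -/
lemma rank_one_aux {n : ℕ} (Z : Fin n → L) (v : L) (hv : v ≠ 0)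
    (c : Fin n → Fin n → ℝ)
    (hswap : ∀ i j, ∀ y : L, ⁅Z i, ⁅Z j, y⁆⁆ = ⁅Z j, ⁅Z i, y⁆⁆)
    (hrel : ∀ i j, ⁅Z i, ⁅Z j, v⁆⁆ = c i j • v) :
    ∃ l : Fin n → ℝ, ∀ i j, c i j = -(l i * l j) := by
  classical
  set w : Fin n → L := fun i => ⁅Z i, v⁆ with hw
  have hGram : ∀ i j, killingForm ℝ L (w i) (w j) = -(c i j * killingForm ℝ L v v) := by
    intro i j
    have h1 : killingForm ℝ L (w i) (w j) = -killingForm ℝ L v ⁅Z i, w j⁆ := kf_skew _ _ _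
    rw [h1]
    have : (⁅Z i, w j⁆ : L) = c i j • v := hrel i j
    rw [this, map_smul]
    simp [smul_eq_mul]
  by_cases hw0 : ∀ i, w i = 0
  · refine ⟨0, fun i j => ?_⟩
    have h0 : c i j • v = 0 := by
      rw [← hrel i j, show (⁅Z j, v⁆ : L) = w j from rfl, hw0 j, lie_zero]
    rcases smul_eq_zero.mp h0 with h | h
    · simp [h]
    · exact absurd h hv
  · push_neg at hw0
    obtain ⟨i₀, hi₀⟩ := hw0
    have hκv : killingForm ℝ L v v < 0 := hkill v hv
    have hκw : killingForm ℝ L (w i₀) (w i₀) < 0 := hkill _ hi₀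
    have hc₀ : c i₀ i₀ < 0 := by nlinarith [hGram i₀ i₀]
    set t : Fin n → ℝ := fun j => c j i₀ / c i₀ i₀ with ht
    have hwj : ∀ j, w j = t j • w i₀ := by
      intro j
      have e1 : ⁅Z i₀, ⁅Z j, ⁅Z i₀, v⁆⁆⁆ = c j i₀ • w i₀ := by
        rw [hrel j i₀, lie_smul]
      have e2 : ⁅Z i₀, ⁅Z j, ⁅Z i₀, v⁆⁆⁆ = c i₀ i₀ • w j := by
        rw [hswap i₀ j, hrel i₀ i₀, lie_smul]
      have hs : c j i₀ • w i₀ = c i₀ i₀ • w j := e1.symm.trans e2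
      have : (c i₀ i₀)⁻¹ • (c i₀ i₀ • w j) = w j := by
        rw [smul_smul, inv_mul_cancel₀ hc₀.ne, one_smul]
      rw [← this, ← hs, smul_smul, ht]
      simp only
      rw [div_eq_inv_mul]
    set q : ℝ := killingForm ℝ L (w i₀) (w i₀) / killingForm ℝ L v v with hq'
    have hq : 0 < q := div_pos_of_neg_of_neg hκw hκv
    refine ⟨fun i => t i * Real.sqrt q, fun i j => ?_⟩
    have h1 : killingForm ℝ L (w i) (w j)
        = t i * t j * killingForm ℝ L (w i₀) (w i₀) := by
      rw [hwj i, hwj j]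
      simp only [map_smul, LinearMap.smul_apply, smul_eq_mul]
      ring
    have h2 := hGram i j
    have hne : killingForm ℝ L v v ≠ 0 := hκv.ne
    have hc : c i j = -(t i * t j * q) := by
      have hmul : c i j * killingForm ℝ L v v
          = -(t i * t j * killingForm ℝ L (w i₀) (w i₀)) := by linarith [h1, h2]
      rw [hq']
      field_simp
      linarith [hmul]
    have hsq : Real.sqrt q ^ 2 = q := Real.sq_sqrt hq.le
    rw [hc]
    linear_combination (t i * t j) * hsq

end kill2


lemma my_sum_lie {ι : Type*} (s : Finset ι) (f : ι → L) (y : L) :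
    ⁅∑ i ∈ s, f i, y⁆ = ∑ i ∈ s, ⁅f i, y⁆ := by
  induction s using Finset.cons_induction with
  | empty => simp
  | cons i s hi ih => simp [Finset.sum_cons, add_lie, ih]

lemma my_lie_sum {ι : Type*} (x : L) (s : Finset ι) (f : ι → L) :
    ⁅x, ∑ i ∈ s, f i⁆ = ∑ i ∈ s, ⁅x, f i⁆ := by
  induction s using Finset.cons_induction with
  | empty => simp
  | cons i s hi ih => simp [Finset.sum_cons, lie_add, ih]

/-- expansion of the eigen-relation from a basis to all elements -/
lemma eigen_expand {a : Submodule ℝ L} {n : ℕ} (b : Module.Basis (Fin n) ℝ ↥a) (v : L)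
    (l : Fin n → ℝ) (hrel : ∀ i j, ⁅(b i : L), ⁅(b j : L), v⁆⁆ = (-(l i * l j)) • v)
    (u : ↥a) : ⁅(u : L), ⁅(u : L), v⁆⁆ = (-(((b.constr ℝ) l u) ^ 2)) • v := by
  classical
  have hu : (u : L) = ∑ i, b.repr u i • ((b i : L)) := coe_basis_expand b u
  have hconstr : (b.constr ℝ) l u = ∑ i, b.repr u i * l i := by
    rw [Module.Basis.constr_apply_fintype]
    refine Finset.sum_congr rfl fun i _ => ?_
    rw [Module.Basis.equivFun_apply, smul_eq_mul]
  rw [hu]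
  simp only [my_sum_lie, my_lie_sum, smul_lie, lie_smul, hrel, Finset.smul_sum, smul_smul]
  simp only [← Finset.sum_smul]
  congr 1
  rw [hconstr, sq, Finset.sum_mul_sum]
  have hterm : ∀ i j : Fin n, b.repr u i * (b.repr u j * -(l i * l j))
      = -((b.repr u i * l i) * (b.repr u j * l j)) := by intro i j; ring
  rw [← Finset.sum_neg_distrib]
  refine Finset.sum_congr rfl fun i _ => ?_
  rw [← Finset.sum_neg_distrib]
  refine Finset.sum_congr rfl fun j _ => ?_
  ring

end Helpers


/-- Key lemma: if `α` is elementary (every root of `m` restricting to `α` equals `lam`),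
then the root space of `α` w.r.t. `a'` inside `m` is contained in the `lam`-root space. -/
lemma root_space_le {L : Type} [LieRing L] [LieAlgebra ℝ L] [Module.Finite ℝ L]
    (hkill : ∀ X : L, X ≠ 0 → killingForm ℝ L X X < 0)
    (k m : Submodule ℝ L)
    (hkm : ∀ x ∈ k, ∀ y ∈ m, ⁅x, y⁆ ∈ m)
    (hmm : ∀ x ∈ m, ∀ y ∈ m, ⁅x, y⁆ ∈ k)
    (a' a : Submodule ℝ L) (ha : IsCartanSubalgebraIn m a) (ha'a : a' ≤ a)
    (α : ↥a' →ₗ[ℝ] ℝ) (hα0 : α ≠ 0)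
    (lam : ↥a →ₗ[ℝ] ℝ)
    (huniq : ∀ mu ∈ rootSystemIn m a, restrictForm ha'a mu = α → mu = lam) :
    rootSpaceIn m a' α ≤ rootSpaceIn m a lam := by
  classical
  letI core : InnerProductSpace.Core ℝ L := negKillingCore hkill
  letI : NormedAddCommGroup L := core.toNormedAddCommGroup
  letI : InnerProductSpace ℝ L := InnerProductSpace.ofCore core.toCore
  have haflat : IsFlat a := ha.2.1
  have ham : a ≤ m := ha.1
  set W : Submodule ℝ L := rootSpaceIn m a' α with hWdef
  set N : Submodule ℝ L := rootSpaceIn m a lam with hNdef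
  set n := Module.finrank ℝ ↥a with hn
  set bZ : Module.Basis (Fin n) ℝ ↥a := Module.finBasis ℝ ↥a with hbZ
  set ZL : Fin n → L := fun i => ((bZ i : L)) with hZL
  have hZa : ∀ i, ZL i ∈ a := fun i => (bZ i).2
  set S : Fin n × Fin n → Module.End ℝ L :=
    fun p => (LieAlgebra.ad ℝ L (ZL p.1)) ∘ₗ (LieAlgebra.ad ℝ L (ZL p.2)) with hS
  have hSapp : ∀ p x, S p x = ⁅ZL p.1, ⁅ZL p.2, x⁆⁆ := fun p x => rfl
  have hWinv : ∀ p : Fin n × Fin n, ∀ x ∈ W, S p x ∈ W := by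
    intro p x hx
    rw [hSapp]
    constructor
    · have h1 : ⁅ZL p.2, x⁆ ∈ k := hmm _ (ham (hZa p.2)) _ hx.1
      have h2 : ⁅⁅ZL p.2, x⁆, ZL p.1⁆ ∈ m := hkm _ h1 _ (ham (hZa p.1))
      have h3 : (⁅ZL p.1, ⁅ZL p.2, x⁆⁆ : L) = -⁅⁅ZL p.2, x⁆, ZL p.1⁆ :=
        (lie_skew _ _).symm
      rw [h3]
      exact m.neg_mem h2
    · intro Z
      have hZ : (Z : L) ∈ a := ha'a Z.2
      rw [flat_swap2 haflat hZ (hZa p.1) (hZa p.2) x,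
          flat_swap2 haflat hZ (hZa p.1) (hZa p.2) ⁅(Z : L), x⁆, hx.2 Z,
          lie_smul, lie_smul]
  set T : Fin n × Fin n → Module.End ℝ ↥W := fun p => (S p).restrict (hWinv p) with hT
  have hTcoe : ∀ p (v : ↥W), ((T p v : ↥W) : L) = S p (v : L) := fun p v => rfl
  have hinnerW : ∀ v w : ↥W, (inner ℝ v w : ℝ) = -killingForm ℝ L (v : L) (w : L) :=
    fun v w => rfl
  have hκS : ∀ p, ∀ x y : L,
      killingForm ℝ L (S p x) y = killingForm ℝ L x (S p y) := by
    intro p x y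
    rw [hSapp, hSapp]
    rw [kf_skew (ZL p.1) ⁅ZL p.2, x⁆ y, kf_skew (ZL p.2) x ⁅ZL p.1, y⁆, neg_neg,
        flat_swap'' haflat (hZa p.2) (hZa p.1) y]
  have hTsym : ∀ p, (T p).IsSymmetric := by
    intro p v w
    rw [hinnerW, hinnerW, hTcoe, hTcoe, hκS]
  have hScomm : ∀ p q : Fin n × Fin n, ∀ x : L, S p (S q x) = S q (S p x) := by
    intro p q x
    simp only [hSapp]
    rw [flat_swap2 haflat (hZa p.2) (hZa q.1) (hZa q.2) x,
        flat_swap2 haflat (hZa p.1) (hZa q.1) (hZa q.2) ⁅ZL p.2, x⁆]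
  have hTcomm : Pairwise (Function.onFun Commute T) := by
    intro p q _
    show T p * T q = T q * T p
    ext v
    rw [Module.End.mul_apply, Module.End.mul_apply, hTcoe, hTcoe, hTcoe, hTcoe, hScomm]
  have htop : (⨆ χ : (Fin n × Fin n) → ℝ, ⨅ p, Module.End.eigenspace (T p) (χ p)) = ⊤ :=
    LinearMap.IsSymmetric.iSup_iInf_eq_top_of_commute hTsym hTcomm
  have hkey : ∀ χ : (Fin n × Fin n) → ℝ,
      (⨅ p, Module.End.eigenspace (T p) (χ p)) ≤ N.comap W.subtype := by
    intro χ v hv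
    rw [Submodule.mem_comap]
    show (v : L) ∈ N
    by_cases hv0 : (v : L) = 0
    · rw [hv0]; exact N.zero_mem
    · have hrel : ∀ i j, ⁅ZL i, ⁅ZL j, (v : L)⁆⁆ = χ (i, j) • (v : L) := by
        intro i j
        have h1 := (Submodule.mem_iInf _).mp hv (i, j)
        rw [Module.End.mem_eigenspace_iff] at h1
        have h2 := congrArg (fun z : ↥W => (z : L)) h1
        simpa [hTcoe, hSapp] using h2
      obtain ⟨l, hl⟩ := rank_one_aux hkill ZL (v : L) hv0 (fun i j => χ (i, j))
        (fun i j y => flat_swap'' haflat (hZa i) (hZa j) y) hrel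
      have hrel' : ∀ i j, ⁅(bZ i : L), ⁅(bZ j : L), (v : L)⁆⁆
          = (-(l i * l j)) • (v : L) := by
        intro i j
        rw [show ((bZ i : L)) = ZL i from rfl, show ((bZ j : L)) = ZL j from rfl,
          hrel i j, hl i j]
      set μ : ↥a →ₗ[ℝ] ℝ := (bZ.constr ℝ) l with hμdef
      have hμv : ∀ u : ↥a, ⁅(u : L), ⁅(u : L), (v : L)⁆⁆ = (-(μ u ^ 2)) • (v : L) :=
        fun u => eigen_expand bZ (v : L) l hrel' u
      have hvW : (v : L) ∈ W := v.2
      have hsq : ∀ Z : ↥a', ((restrictForm ha'a μ) Z) ^ 2 = (α Z) ^ 2 := by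
        intro Z
        have h1 := hvW.2 Z
        have h2 := hμv (Submodule.inclusion ha'a Z)
        rw [show ((Submodule.inclusion ha'a Z : ↥a) : L) = (Z : L) from rfl] at h2
        have h3 : (-(α Z ^ 2)) • (v : L) = (-((restrictForm ha'a μ) Z ^ 2)) • (v : L) :=
          h1.symm.trans h2
        have h4 := smul_left_injective ℝ hv0 h3
        linarith [h4]
      rcases form_sq_eq (restrictForm ha'a μ) α hsq with hcase | hcase
      · have hμ0 : μ ≠ 0 := by
          intro h0
          apply hα0
          rw [← hcase, h0]
          ext Z
          simp [restrictForm]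
        have hμroot : μ ∈ rootSystemIn m a := by
          refine ⟨hμ0, ?_⟩
          rw [Submodule.ne_bot_iff]
          exact ⟨(v : L), ⟨hvW.1, hμv⟩, hv0⟩
        have heq := huniq μ hμroot hcase
        exact ⟨hvW.1, fun Z => by rw [← heq]; exact hμv Z⟩
      · set ν : ↥a →ₗ[ℝ] ℝ := -μ with hνdef
        have hνrel : ∀ u : ↥a, ⁅(u : L), ⁅(u : L), (v : L)⁆⁆ = (-(ν u ^ 2)) • (v : L) := by
          intro u
          rw [hμv u]
          congr 1
          simp [hνdef]
        have hνres : restrictForm ha'a ν = α := by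
          ext Z
          have hc := congrArg (fun f : ↥a' →ₗ[ℝ] ℝ => f Z) hcase
          simp only [LinearMap.neg_apply] at hc
          show ν (Submodule.inclusion ha'a Z) = α Z
          rw [hνdef]
          simp only [LinearMap.neg_apply]
          have : (restrictForm ha'a μ) Z = μ (Submodule.inclusion ha'a Z) := rfl
          rw [← this, hc]
          ring
        have hν0 : ν ≠ 0 := by
          intro h0
          apply hα0
          rw [← hνres, h0]
          ext Z
          simp [restrictForm]
        have hνroot : ν ∈ rootSystemIn m a := by
          refine ⟨hν0, ?_⟩
          rw [Submodule.ne_bot_iff]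
          exact ⟨(v : L), ⟨hvW.1, hνrel⟩, hv0⟩
        have heq := huniq ν hνroot hνres
        exact ⟨hvW.1, fun Z => by rw [← heq]; exact hνrel Z⟩
  intro X hX
  have hmem : (⟨X, hX⟩ : ↥W) ∈ (⊤ : Submodule ℝ ↥W) := trivial
  rw [← htop] at hmem
  have hle : (⨆ χ : (Fin n × Fin n) → ℝ, ⨅ p, Module.End.eigenspace (T p) (χ p))
      ≤ N.comap W.subtype := iSup_le hkey
  exact Submodule.mem_comap.mp (hle hmem)

/-- Proposition 2.3: (a) the Riesz vector of the unique root above an elementary root of a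
Lie triple system lies in `a'`; (b) the difference of Riesz vectors of two roots restricting to
the same composite root is orthogonal to `a'` (w.r.t. `⟨X,Y⟩ = -κ(X,Y)`). -/
theorem stmt1 {L : Type} [LieRing L] [LieAlgebra ℝ L] [Module.Finite ℝ L]
    (hkill : ∀ X : L, X ≠ 0 → killingForm ℝ L X X < 0)
    (k m : Submodule ℝ L) (hcompl : IsCompl k m)
    (hkk : ∀ x ∈ k, ∀ y ∈ k, ⁅x, y⁆ ∈ k)
    (hkm : ∀ x ∈ k, ∀ y ∈ m, ⁅x, y⁆ ∈ m)
    (hmm : ∀ x ∈ m, ∀ y ∈ m, ⁅x, y⁆ ∈ k)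
    (m' : Submodule ℝ L) (hm' : IsLieTripleSystemIn m m')
    (a' a : Submodule ℝ L)
    (ha' : IsCartanSubalgebraIn m' a') (ha : IsCartanSubalgebraIn m a)
    (haa' : a' = a ⊓ m')
    (α : ↥a' →ₗ[ℝ] ℝ) (hα : α ∈ rootSystemIn m' a') :
    (∀ lam ∈ rootSystemIn m a,
      restrictForm (haa'.trans_le inf_le_left) lam = α →
      (∀ mu ∈ rootSystemIn m a,
        restrictForm (haa'.trans_le inf_le_left) mu = α → mu = lam) →
      ∀ lamSharp ∈ a,
        (∀ Z : ↥a, -(killingForm ℝ L (Z : L) lamSharp) = lam Z) →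
        lamSharp ∈ a') ∧
    (∀ lam ∈ rootSystemIn m a, ∀ mu ∈ rootSystemIn m a, lam ≠ mu →
      restrictForm (haa'.trans_le inf_le_left) lam = α →
      restrictForm (haa'.trans_le inf_le_left) mu = α →
      ∀ lamSharp ∈ a,
        (∀ Z : ↥a, -(killingForm ℝ L (Z : L) lamSharp) = lam Z) →
      ∀ muSharp ∈ a,
        (∀ Z : ↥a, -(killingForm ℝ L (Z : L) muSharp) = mu Z) →
      ∀ Z ∈ a', -(killingForm ℝ L Z (lamSharp - muSharp)) = 0) := by
  have ha'a : a' ≤ a := haa'.trans_le inf_le_left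
  constructor
  · intro lam hlam hres huniq lamSharp hlsa hriesz
    obtain ⟨X₀, hX₀mem, hX₀ne⟩ := (Submodule.ne_bot_iff _).mp hα.2
    have hα0 : α ≠ 0 := hα.1
    have hm'm : m' ≤ m := hm'.1
    have ha'm' : a' ≤ m' := ha'.1
    have hXW : X₀ ∈ rootSpaceIn m a' α := ⟨hm'm hX₀mem.1, hX₀mem.2⟩
    have hXN : X₀ ∈ rootSpaceIn m a lam :=
      root_space_le hkill k m hkm hmm a' a ha ha'a α hα0 lam huniq hXW
    have hX₀m' : X₀ ∈ m' := hX₀mem.1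
    have hpol : ∀ u u' : ↥a, ⁅(u : L), ⁅(u' : L), X₀⁆⁆ = (-(lam u * lam u')) • X₀ :=
      polar ha.2.1 hXN.2
    obtain ⟨Z₀, hZ₀⟩ : ∃ Z : ↥a', α Z ≠ 0 := by
      by_contra hc; push_neg at hc; exact hα0 (LinearMap.ext hc)
    set z₀ : ↥a := Submodule.inclusion ha'a Z₀ with hz₀def
    have hz₀L : (z₀ : L) = (Z₀ : L) := rfl
    have hlamz₀ : lam z₀ = α Z₀ := by rw [← hres]; rfl
    set H : L := ⁅⁅(z₀ : L), X₀⁆, X₀⁆ with hHdef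
    have hHm' : H ∈ m' := by
      rw [hHdef, hz₀L]
      exact hm'.2 _ (ha'm' Z₀.2) _ hX₀m' _ hX₀m'
    have hκX : killingForm ℝ L X₀ X₀ < 0 := hkill X₀ hX₀ne
    have hHin : ∀ u : ↥a, killingForm ℝ L (u : L) H
        = -(lam u * lam z₀) * killingForm ℝ L X₀ X₀ := by
      intro u
      rw [hHdef, ← kf_inv (u : L) ⁅(z₀ : L), X₀⁆ X₀, hpol u z₀, map_smul,
        LinearMap.smul_apply, smul_eq_mul]
    -- the operator given by summing second-order brackets over a basis of a'
    set n' := Module.finrank ℝ ↥a' with hn'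
    set bY : Module.Basis (Fin n') ℝ ↥a' := Module.finBasis ℝ ↥a' with hbY
    set YL : Fin n' → L := fun i => ((bY i : L)) with hYL
    have hYa' : ∀ i, YL i ∈ a' := fun i => (bY i).2
    set SL : Module.End ℝ L :=
      ∑ i, (LieAlgebra.ad ℝ L (YL i)) ∘ₗ (LieAlgebra.ad ℝ L (YL i)) with hSLdef
    have hSLapp : ∀ x, SL x = ∑ i, ⁅YL i, ⁅YL i, x⁆⁆ := by
      intro x
      rw [hSLdef, LinearMap.sum_apply]
      rfl
    have hbrkt : ∀ (y x : L), ⁅y, ⁅y, x⁆⁆ = ⁅⁅x, y⁆, y⁆ := by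
      intro y x
      rw [lie_lie, lie_self, lie_zero, zero_sub, ← lie_skew x y, lie_neg, neg_neg]
    have hSLm' : ∀ x ∈ m', SL x ∈ m' := by
      intro x hx
      rw [hSLapp]
      refine Submodule.sum_mem _ fun i _ => ?_
      rw [hbrkt]
      exact hm'.2 _ hx _ (ha'm' (hYa' i)) _ (ha'm' (hYa' i))
    have hSLsym : ∀ x y, killingForm ℝ L (SL x) y = killingForm ℝ L x (SL y) := by
      intro x y
      rw [hSLapp, hSLapp, map_sum, LinearMap.sum_apply, map_sum]
      refine Finset.sum_congr rfl fun i _ => ?_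
      rw [kf_skew (YL i) ⁅YL i, x⁆ y, kf_skew (YL i) x ⁅YL i, y⁆, neg_neg]
    set TL : ↥m' →ₗ[ℝ] ↥m' := SL.restrict hSLm' with hTLdef
    have hTLcoe : ∀ v : ↥m', ((TL v : ↥m') : L) = SL (v : L) := fun v => rfl
    have hdisj : Disjoint (LinearMap.ker TL) (LinearMap.range TL) := by
      rw [Submodule.disjoint_def]
      intro x hxk hxr
      obtain ⟨y, hy⟩ := hxr
      have h1 : SL (x : L) = 0 := by
        have h := congrArg (fun z : ↥m' => (z : L)) (show TL x = 0 from hxk)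
        simpa [hTLcoe] using h
      have h2 : SL (y : L) = (x : L) := by
        have h := congrArg (fun z : ↥m' => (z : L)) hy
        simpa [hTLcoe] using h
      have hzero : killingForm ℝ L (x : L) (x : L) = 0 := by
        calc killingForm ℝ L (x : L) (x : L)
            = killingForm ℝ L (SL (y : L)) (x : L) := by rw [h2]
          _ = killingForm ℝ L (y : L) (SL (x : L)) := hSLsym _ _
          _ = 0 := by rw [h1]; simp
      exact Subtype.ext (kf_zero hkill hzero)
    have hsplit : LinearMap.ker TL ⊔ LinearMap.range TL = ⊤ := by
      apply Submodule.eq_top_of_finrank_eq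
      have h1 := LinearMap.finrank_range_add_finrank_ker TL
      have h2 := Submodule.finrank_sup_add_finrank_inf_eq
        (LinearMap.ker TL) (LinearMap.range TL)
      rw [disjoint_iff.mp hdisj] at h2
      simp only [finrank_bot, add_zero] at h2
      omega
    have hHsup : (⟨H, hHm'⟩ : ↥m') ∈ LinearMap.ker TL ⊔ LinearMap.range TL := by
      rw [hsplit]; trivial
    obtain ⟨h₀, hh₀, hr, hhr, hsum⟩ := Submodule.mem_sup.mp hHsup
    obtain ⟨kk, hkk'⟩ := hhr
    have hh₀a' : (h₀ : L) ∈ a' := by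
      have hSL0 : SL (h₀ : L) = 0 := by
        have h := congrArg (fun z : ↥m' => (z : L)) (show TL h₀ = 0 from hh₀)
        simpa [hTLcoe] using h
      have hsum0 : ∑ i, -killingForm ℝ L ⁅YL i, (h₀ : L)⁆ ⁅YL i, (h₀ : L)⁆ = 0 := by
        have h1 : killingForm ℝ L (SL (h₀ : L)) (h₀ : L) = 0 := by rw [hSL0]; simp
        rw [hSLapp, map_sum, LinearMap.sum_apply] at h1
        rw [← h1]
        refine Finset.sum_congr rfl fun i _ => ?_
        rw [kf_skew (YL i) ⁅YL i, (h₀ : L)⁆ (h₀ : L)]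
      have hnn : ∀ i ∈ Finset.univ,
          0 ≤ -killingForm ℝ L ⁅YL i, (h₀ : L)⁆ ⁅YL i, (h₀ : L)⁆ :=
        fun i _ => neg_nonneg.mpr (kf_nonpos hkill _)
      have hzero := (Finset.sum_eq_zero_iff_of_nonneg hnn).mp hsum0
      have hbr : ∀ i, ⁅YL i, (h₀ : L)⁆ = 0 := by
        intro i
        have h := hzero i (Finset.mem_univ i)
        exact kf_zero hkill (by linarith)
      have hbrall : ∀ Y : ↥a', ⁅(Y : L), (h₀ : L)⁆ = 0 := by
        intro Y
        rw [coe_basis_expand bY Y, my_sum_lie]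
        refine Finset.sum_eq_zero fun i _ => ?_
        rw [smul_lie, show ((bY i : L)) = YL i from rfl, hbr i, smul_zero]
      set b' : Submodule ℝ L := a' ⊔ Submodule.span ℝ {(h₀ : L)} with hb'def
      have hb'm' : b' ≤ m' :=
        sup_le ha'.1 ((Submodule.span_singleton_le_iff_mem _ _).mpr h₀.2)
      have hb'flat : IsFlat b' := by
        intro x hx y hy
        obtain ⟨x1, hx1, x2, hx2, rfl⟩ := Submodule.mem_sup.mp hx
        obtain ⟨y1, hy1, y2, hy2, rfl⟩ := Submodule.mem_sup.mp hy
        obtain ⟨s, rfl⟩ := Submodule.mem_span_singleton.mp hx2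
        obtain ⟨s', rfl⟩ := Submodule.mem_span_singleton.mp hy2
        have e1 : ⁅x1, y1⁆ = (0 : L) := ha'.2.1 x1 hx1 y1 hy1
        have e2 : ⁅x1, (h₀ : L)⁆ = 0 := hbrall ⟨x1, hx1⟩
        have e3 : ⁅(h₀ : L), y1⁆ = 0 := by
          rw [← lie_skew (h₀ : L) y1, hbrall ⟨y1, hy1⟩, neg_zero]
        simp [add_lie, lie_add, smul_lie, lie_smul, e1, e2, e3]
      have hb'eq := ha'.2.2 b' hb'm' hb'flat le_sup_left
      rw [← hb'eq]
      exact (le_sup_right : Submodule.span ℝ {(h₀ : L)} ≤ b')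
        (Submodule.mem_span_singleton_self _)
    have hperp : ∀ u : ↥a, killingForm ℝ L (u : L) (SL (kk : L)) = 0 := by
      intro u
      rw [hSLapp, map_sum]
      refine Finset.sum_eq_zero fun i _ => ?_
      rw [← kf_inv, ha.2.1 (u : L) u.2 (YL i) (ha'a (hYa' i))]
      simp
    have hHdec : H = (h₀ : L) + SL (kk : L) := by
      have h := congrArg (fun z : ↥m' => (z : L)) hsum
      simp only [Submodule.coe_add] at h
      rw [← h, ← hkk', hTLcoe]
    set t : ℝ := lam z₀ * killingForm ℝ L X₀ X₀ with htdef
    have ht0 : t ≠ 0 := mul_ne_zero (by rw [hlamz₀]; exact hZ₀) hκX.ne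
    have hfin : ∀ u : ↥a, killingForm ℝ L (u : L) ((h₀ : L) - t • lamSharp) = 0 := by
      intro u
      have e1 : killingForm ℝ L (u : L) H = killingForm ℝ L (u : L) (h₀ : L) := by
        rw [hHdec, map_add, hperp u, add_zero]
      have e2 := hHin u
      have e3 := hriesz u
      have h4 : killingForm ℝ L (u : L) (h₀ : L)
          = -(lam u * lam z₀) * killingForm ℝ L X₀ X₀ := by rw [← e1, e2]
      have h5 : killingForm ℝ L (u : L) lamSharp = -(lam u) := by linarith [e3]
      rw [map_sub, map_smul, smul_eq_mul, h4, h5, htdef]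
      ring
    have hda : (h₀ : L) - t • lamSharp ∈ a := a.sub_mem (ha'a hh₀a') (a.smul_mem t hlsa)
    have hdd := hfin ⟨_, hda⟩
    have hd0 : (h₀ : L) - t • lamSharp = 0 := kf_zero hkill hdd
    have hts : t • lamSharp = (h₀ : L) := (sub_eq_zero.mp hd0).symm
    have hfinal : lamSharp = t⁻¹ • (h₀ : L) := by
      rw [← hts, smul_smul, inv_mul_cancel₀ ht0, one_smul]
    rw [hfinal]
    exact a'.smul_mem _ hh₀a'

  · intro lam hlam mu hmu hne hrl hrm lamSharp hls hrzl muSharp hms hrzm Z hZ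
    have hZa : Z ∈ a := ha'a hZ
    have h1 : -(killingForm ℝ L Z lamSharp) = lam ⟨Z, hZa⟩ := hrzl ⟨Z, hZa⟩
    have h2 : -(killingForm ℝ L Z muSharp) = mu ⟨Z, hZa⟩ := hrzm ⟨Z, hZa⟩
    have e1 : lam ⟨Z, hZa⟩ = α ⟨Z, hZ⟩ := by
      rw [← hrl]; rfl
    have e2 : mu ⟨Z, hZa⟩ = α ⟨Z, hZ⟩ := by
      rw [← hrm]; rfl
    have : killingForm ℝ L Z (lamSharp - muSharp)
        = killingForm ℝ L Z lamSharp - killingForm ℝ L Z muSharp := by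
      simp
    rw [this]
    linarith [h1, h2, e1, e2]
end

section
/- Let m' ⊆ m be a Lie triple system, a' a Cartan subalgebra of m', a a Cartan subalgebra of m with a' = a ∩ m', and α ∈ Δ(m',a'). Suppose there exist exactly two roots λ, μ ∈ Δ(m,a) with λ|_{a'} = α = μ|_{a'}, and suppose α^♯ = a·λ^♯ + b·μ^♯ for some nonzero real numbers a, b (here α^♯ ∈ a' ⊆ a). Then a > 0 and b > 0, and there exist a linear subspace m_λ' ⊆ m_λ and a linear isometry Φ : m_λ' → m_μ (with respect to ⟨·,·⟩) such that m'_α = {x + √(b/a)·Φ(x) : x ∈ m_λ'}. In particular, dim m'_α ≤ min(dim m_λ, dim m_μ). -/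
open Module

section GeneralLemmas

variable {E : Type} [AddCommGroup E] [Module ℝ E]

/-- If the product of two real linear forms vanishes identically, one of them is zero. -/
lemma formprod_eq_zero (f g : E →ₗ[ℝ] ℝ) (h : ∀ x, f x * g x = 0) : f = 0 ∨ g = 0 := by
  by_contra hc
  push_neg at hc
  obtain ⟨hf, hg⟩ := hc
  obtain ⟨x, hx⟩ : ∃ x, f x ≠ 0 := by
    by_contra h'; push_neg at h'; exact hf (LinearMap.ext fun x => h' x)
  obtain ⟨y, hy⟩ : ∃ y, g y ≠ 0 := by
    by_contra h'; push_neg at h'; exact hg (LinearMap.ext fun y => h' y)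
  have hgx : g x = 0 := by
    have := h x; rcases mul_eq_zero.1 this with h1 | h1
    · exact absurd h1 hx
    · exact h1
  have hfy : f y = 0 := by
    have := h y; rcases mul_eq_zero.1 this with h1 | h1
    · exact h1
    · exact absurd h1 hy
  have := h (x + y)
  simp only [map_add, hgx, hfy, add_zero, zero_add] at this
  rcases mul_eq_zero.1 this with h1 | h1
  · exact hx h1
  · exact hy h1

end GeneralLemmas

section Proj

variable {E : Type} [AddCommGroup E] [Module ℝ E] [FiniteDimensional ℝ E]

lemma exists_B_proj (B : LinearMap.BilinForm ℝ E)
    (hsymm : ∀ x y, B x y = B y x) (hdef : ∀ x : E, x ≠ 0 → 0 < B x x)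
    (W : Submodule ℝ E) (x : E) : ∃ w ∈ W, ∀ u ∈ W, B (x - w) u = 0 := by
  have hrefl : B.IsRefl := fun u v huv => by rw [hsymm]; exact huv
  have hnd : (B.restrict W).Nondegenerate := by
    refine (LinearMap.IsRefl.nondegenerate_iff_separatingLeft (B := B.restrict W) (fun u v huv => hrefl _ _ huv)).2 ?_
    intro m hm
    by_contra hm0
    have : (m : E) ≠ 0 := fun h => hm0 (Subtype.ext h)
    have := hdef m this
    have h2 := hm m
    simp only [LinearMap.BilinForm.restrict_apply, LinearMap.domRestrict_apply] at h2
    exact absurd h2 (ne_of_gt this)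
  have hc := LinearMap.BilinForm.isCompl_orthogonal_of_restrict_nondegenerate hrefl hnd
  have htop : W ⊔ B.orthogonal W = ⊤ := hc.sup_eq_top
  have hx : x ∈ W ⊔ B.orthogonal W := htop ▸ Submodule.mem_top
  obtain ⟨w, hw, v, hv, hwv⟩ := Submodule.mem_sup.1 hx
  refine ⟨w, hw, fun u hu => ?_⟩
  have : x - w = v := by rw [← hwv]; abel
  rw [this, hsymm]
  exact hv u hu

end Proj

section CommonEigen

variable {E : Type} [AddCommGroup E] [Module ℝ E] [FiniteDimensional ℝ E]

lemma common_eigenvector (B : LinearMap.BilinForm ℝ E)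
    (hsymm : ∀ x y, B x y = B y x) (hdef : ∀ x : E, x ≠ 0 → 0 < B x x)
    (l : List (E →ₗ[ℝ] E)) (hTsym : ∀ T ∈ l, ∀ x y, B (T x) y = B x (T y))
    (hcomm : ∀ T ∈ l, ∀ S ∈ l, T ∘ₗ S = S ∘ₗ T)
    (U : Submodule ℝ E) (hU : U ≠ ⊥) (hinv : ∀ T ∈ l, ∀ x ∈ U, T x ∈ U) :
    ∃ y ∈ U, y ≠ 0 ∧ ∀ T ∈ l, ∃ c : ℝ, T y = c • y := by
  letI core : InnerProductSpace.Core ℝ E :=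
    { inner := fun x y => B x y
      conj_inner_symm := fun x y => by simp [hsymm x y]
      re_inner_nonneg := fun x => by
        by_cases hx : x = 0
        · simp [hx]
        · exact le_of_lt (by simpa using hdef x hx)
      add_left := fun x y z => by simp
      smul_left := fun x y r => by simp [mul_comm]
      definite := fun x hx => by
        by_contra hx0
        exact absurd hx (ne_of_gt (by simpa using hdef x hx0)) }
  letI : NormedAddCommGroup E := core.toNormedAddCommGroup
  letI : InnerProductSpace ℝ E := InnerProductSpace.ofCore core.toCore
  induction l generalizing U with
  | nil =>
    obtain ⟨y, hy, hy0⟩ := Submodule.ne_bot_iff U |>.1 hU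
    exact ⟨y, hy, hy0, fun T hT => absurd hT (List.not_mem_nil (a := T))⟩
  | cons T l ih =>
    have hTU : ∀ x ∈ U, T x ∈ U := hinv T (List.mem_cons_self (a := T) (l := l))
    have hTsymT := hTsym T (List.mem_cons_self (a := T) (l := l))
    haveI : Nontrivial ↥U := Submodule.nontrivial_iff_ne_bot.2 hU
    set Tr : ↥U →ₗ[ℝ] ↥U := T.restrict hTU with hTr
    have hTrsym : Tr.IsSymmetric := by
      intro x y
      have : ∀ u v : ↥U, (inner ℝ u v : ℝ) = B (u : E) (v : E) := fun u v => rfl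
      rw [this, this]
      exact hTsymT x y
    obtain ⟨c, v, hvU, hveig, hv0⟩ :
        ∃ c : ℝ, ∃ v : E, v ∈ U ∧ T v = c • v ∧ v ≠ 0 := by
      have hev := hTrsym.hasEigenvalue_iSup_of_finiteDimensional
      obtain ⟨v, hv⟩ := hev.exists_hasEigenvector
      obtain ⟨c0, hc0⟩ : ∃ c0 : ℝ, Module.End.HasEigenvector Tr c0 v := ⟨_, hv⟩
      refine ⟨c0, (v : E), v.2, ?_, fun h => hc0.2 (Subtype.ext h)⟩
      have h1 := hc0.apply_eq_smul
      calc T (v : E) = ((Tr v : ↥U) : E) := rfl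
        _ = c0 • (v : E) := by rw [h1]; rfl
    set E1 : Submodule ℝ E :=
      { carrier := {x | x ∈ U ∧ T x = c • x}
        zero_mem' := ⟨U.zero_mem, by simp⟩
        add_mem' := fun ha hb => ⟨U.add_mem ha.1 hb.1, by
          rw [map_add, ha.2, hb.2, smul_add]⟩
        smul_mem' := fun r x hx => ⟨U.smul_mem r hx.1, by
          rw [map_smul, hx.2, smul_comm]⟩ } with hE1def
    have hE1le : E1 ≤ U := fun x hx => hx.1
    have hE1ne : E1 ≠ ⊥ := Submodule.ne_bot_iff _ |>.2 ⟨v, ⟨hvU, hveig⟩, hv0⟩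
    have hE1eig : ∀ x ∈ E1, T x = c • x := fun x hx => hx.2
    have hE1inv : ∀ S ∈ l, ∀ x ∈ E1, S x ∈ E1 := by
      intro S hS x hx
      refine ⟨hinv S (List.mem_cons_of_mem T hS) x hx.1, ?_⟩
      have h3 : T (S x) = S (T x) := by
        have := congrArg (fun f => f x) (hcomm T (List.mem_cons_self (a := T) (l := l)) S (List.mem_cons_of_mem T hS))
        simpa using this
      rw [h3, hx.2, map_smul]
    obtain ⟨y, hyE1, hy0, hyl⟩ := ih (fun S hS => hTsym S (List.mem_cons_of_mem T hS))
      (fun S hS S' hS' => hcomm S (List.mem_cons_of_mem T hS) S' (List.mem_cons_of_mem T hS'))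
      E1 hE1ne hE1inv
    refine ⟨y, hE1le hyE1, hy0, fun S hS => ?_⟩
    rcases List.mem_cons.1 hS with rfl | hS'
    · exact ⟨c, hE1eig y hyE1⟩
    · exact hyl S hS'

set_option maxHeartbeats 2000000 in
/-- Proposition 2.4 ("skew" root spaces): if `α` is a composite root of the Lie triple system
`m'` lying above exactly two roots `lam, mu` of `m`, and `α^♯ = s·lam^♯ + t·mu^♯` with
`s, t ≠ 0`, then `s, t > 0` and `m'_α` is the graph of `√(t/s)·Φ` for a linear isometry
`Φ` from a subspace of `m_lam` into `m_mu`; in particular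
`dim m'_α ≤ min (dim m_lam) (dim m_mu)`. -/
theorem stmt2 {L : Type} [LieRing L] [LieAlgebra ℝ L] [Module.Finite ℝ L]
    (hkill : ∀ X : L, X ≠ 0 → killingForm ℝ L X X < 0)
    (k m : Submodule ℝ L) (hcompl : IsCompl k m)
    (hkk : ∀ x ∈ k, ∀ y ∈ k, ⁅x, y⁆ ∈ k)
    (hkm : ∀ x ∈ k, ∀ y ∈ m, ⁅x, y⁆ ∈ m)
    (hmm : ∀ x ∈ m, ∀ y ∈ m, ⁅x, y⁆ ∈ k)
    (m' : Submodule ℝ L) (hm' : IsLieTripleSystemIn m m')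
    (a' a : Submodule ℝ L)
    (ha' : IsCartanSubalgebraIn m' a') (ha : IsCartanSubalgebraIn m a)
    (haa' : a' = a ⊓ m')
    (α : ↥a' →ₗ[ℝ] ℝ) (hα : α ∈ rootSystemIn m' a')
    (lam mu : ↥a →ₗ[ℝ] ℝ)
    (hlam : lam ∈ rootSystemIn m a) (hmu : mu ∈ rootSystemIn m a) (hlammu : lam ≠ mu)
    (hrl : restrictForm (haa'.trans_le inf_le_left) lam = α)
    (hrm : restrictForm (haa'.trans_le inf_le_left) mu = α)
    (honly : ∀ nu ∈ rootSystemIn m a,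
      restrictForm (haa'.trans_le inf_le_left) nu = α → nu = lam ∨ nu = mu)
    (alphaSharp : L) (halphaSharp : alphaSharp ∈ a')
    (halphaChar : ∀ Z : ↥a', -(killingForm ℝ L (Z : L) alphaSharp) = α Z)
    (lamSharp : L) (hlamSharp : lamSharp ∈ a)
    (hlamChar : ∀ Z : ↥a, -(killingForm ℝ L (Z : L) lamSharp) = lam Z)
    (muSharp : L) (hmuSharp : muSharp ∈ a)
    (hmuChar : ∀ Z : ↥a, -(killingForm ℝ L (Z : L) muSharp) = mu Z)
    (s t : ℝ) (hs : s ≠ 0) (ht : t ≠ 0)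
    (hcomb : alphaSharp = s • lamSharp + t • muSharp) :
    0 < s ∧ 0 < t ∧
    ∃ mlam' : Submodule ℝ L, mlam' ≤ rootSpaceIn m a lam ∧
      ∃ Φ : ↥mlam' →ₗ[ℝ] L,
        (∀ x : ↥mlam', Φ x ∈ rootSpaceIn m a mu) ∧
        (∀ x y : ↥mlam',
          -(killingForm ℝ L (Φ x) (Φ y)) = -(killingForm ℝ L (x : L) (y : L))) ∧
        (rootSpaceIn m' a' α : Set L) =
          {z | ∃ x : ↥mlam', z = (x : L) + Real.sqrt (t / s) • Φ x} ∧
        Module.finrank ℝ ↥(rootSpaceIn m' a' α) ≤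
          min (Module.finrank ℝ ↥(rootSpaceIn m a lam))
              (Module.finrank ℝ ↥(rootSpaceIn m a mu)) := by
  classical
  obtain ⟨hm'm, htrip⟩ := hm'
  obtain ⟨ham, haflat, hamax⟩ := ha
  obtain ⟨ha'm', ha'flat, ha'max⟩ := ha'
  have haa : a' ≤ a := haa'.trans_le inf_le_left
  set B : LinearMap.BilinForm ℝ L := -killingForm ℝ L with hBdef
  have hBapp : ∀ x y : L, B x y = -(killingForm ℝ L x y) := fun x y => rfl
  have bsymm : ∀ x y : L, B x y = B y x := by
    intro x y; simp only [hBapp]; rw [LieModule.traceForm_comm]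
  have bdef : ∀ x : L, x ≠ 0 → 0 < B x x := by
    intro x hx; have := hkill x hx; simp only [hBapp]; linarith
  have b0 : ∀ x : L, B x x = 0 → x = 0 := by
    intro x hx; by_contra h; exact absurd hx (ne_of_gt (bdef x h))
  have binv : ∀ z x y : L, B ⁅z, x⁆ y = -B x ⁅z, y⁆ := by
    intro z x y; simp only [hBapp]
    rw [LieModule.traceForm_apply_lie_apply']
  have adcomm : ∀ z ∈ a, ∀ w ∈ a, ∀ x : L, ⁅z, ⁅w, x⁆⁆ = ⁅w, ⁅z, x⁆⁆ := by
    intro z hz w hw x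
    rw [leibniz_lie, haflat z hz w hw, zero_lie, zero_add]
  have hcancel : ∀ (r1 r2 : ℝ) (v : L), v ≠ 0 → r1 • v = r2 • v → r1 = r2 := by
    intro r1 r2 v hv h
    have h2 : (r1 - r2) • v = 0 := by rw [sub_smul, h, sub_self]
    rcases smul_eq_zero.1 h2 with h3 | h3
    · linarith [sub_eq_zero.1 h3]
    · exact absurd h3 hv
  have memroot : ∀ {mm aa : Submodule ℝ L} {f : ↥aa →ₗ[ℝ] ℝ} {x : L},
      x ∈ rootSpaceIn mm aa f ↔ x ∈ mm ∧ ∀ Z : ↥aa, ⁅(Z:L), ⁅(Z:L), x⁆⁆ = (-(f Z ^ 2)) • x :=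
    fun {mm aa f x} => Iff.rfl
  have hmax' : ∀ y ∈ m', (∀ z ∈ a', ⁅z, y⁆ = (0:L)) → y ∈ a' := by
    intro y hy hzy
    have hble : a' ⊔ (ℝ ∙ y) ≤ m' :=
      sup_le ha'm' ((Submodule.span_singleton_le_iff_mem y m').2 hy)
    have hbflat : IsFlat (a' ⊔ (ℝ ∙ y)) := by
      intro u hu v hv
      obtain ⟨u1, hu1, u2, hu2, rfl⟩ := Submodule.mem_sup.1 hu
      obtain ⟨v1, hv1, v2, hv2, rfl⟩ := Submodule.mem_sup.1 hv
      obtain ⟨cu, rfl⟩ := Submodule.mem_span_singleton.1 hu2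
      obtain ⟨cv, rfl⟩ := Submodule.mem_span_singleton.1 hv2
      have h11 := ha'flat u1 hu1 v1 hv1
      have h1y := hzy u1 hu1
      have hy1 := hzy v1 hv1
      have hyy' : ⁅y, v1⁆ = (0:L) := by rw [← lie_skew, hy1, neg_zero]
      simp [lie_add, add_lie, lie_smul, smul_lie, h11, h1y, hyy']
    have heq := ha'max _ hble hbflat le_sup_left
    exact heq ▸ Submodule.mem_sup_right (Submodule.mem_span_singleton_self y)
  -- orthogonal projection of m' onto a'
  have hproj : ∀ x ∈ m', ∃ x0 ∈ a', ∀ w ∈ a, B (x - x0) w = 0 := by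
    set V : Submodule ℝ L := ⨆ Z : ↥a',
      Submodule.map ((LieAlgebra.ad ℝ L (Z:L)) ∘ₗ (LieAlgebra.ad ℝ L (Z:L))) m' with hVdef
    have hadad : ∀ (z u : L), ((LieAlgebra.ad ℝ L z) ∘ₗ (LieAlgebra.ad ℝ L z)) u = ⁅z, ⁅z, u⁆⁆ := by
      intro z u; simp [LieAlgebra.ad_apply]
    have hVm' : V ≤ m' := by
      apply iSup_le
      rintro Z x ⟨u, hu, rfl⟩
      have h1 : ⁅⁅u, (Z:L)⁆, (Z:L)⁆ ∈ m' := htrip u hu (Z:L) (ha'm' Z.2) (Z:L) (ha'm' Z.2)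
      have heq : ⁅(Z:L), ⁅(Z:L), u⁆⁆ = ⁅⁅u, (Z:L)⁆, (Z:L)⁆ := by
        rw [← lie_skew u (Z:L), neg_lie, lie_skew (Z:L) ⁅(Z:L), u⁆]
      rw [hadad, heq]
      exact h1
    have hgen : ∀ (z : L), z ∈ a' → ∀ u ∈ m', ⁅z, ⁅z, u⁆⁆ ∈ V := by
      intro z hz u hu
      have : ⁅z, ⁅z, u⁆⁆ ∈ Submodule.map ((LieAlgebra.ad ℝ L z) ∘ₗ (LieAlgebra.ad ℝ L z)) m' :=
        ⟨u, hu, hadad z u⟩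
      exact le_iSup (fun Z : ↥a' =>
        Submodule.map ((LieAlgebra.ad ℝ L (Z:L)) ∘ₗ (LieAlgebra.ad ℝ L (Z:L))) m') ⟨z, hz⟩ this
    have hVorth : ∀ v ∈ V, ∀ w ∈ a, B v w = 0 := by
      intro v hv
      refine Submodule.iSup_induction _ (motive := fun v => ∀ w ∈ a, B v w = 0) hv ?_ ?_ ?_
      · rintro Z x ⟨u, hu, rfl⟩ w hw
        rw [hadad]
        rw [binv (Z:L) ⁅(Z:L), u⁆ w, haflat (Z:L) (haa Z.2) w hw]
        simp
      · intro w hw; simp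
      · intro x y hx hy w hw
        rw [map_add, LinearMap.add_apply, hx w hw, hy w hw, add_zero]
    have hm'R : m' ≤ a' ⊔ V := by
      intro x hx
      obtain ⟨r, hr, horthr⟩ := exists_B_proj B bsymm bdef (a' ⊔ V) x
      have hrm' : r ∈ m' := (sup_le ha'm' hVm') hr
      have hzm' : x - r ∈ m' := Submodule.sub_mem m' hx hrm'
      have hz0 : ∀ z ∈ a', ⁅z, x - r⁆ = (0:L) := by
        intro z hz
        have humem : ⁅z, ⁅z, x - r⁆⁆ ∈ a' ⊔ V := Submodule.mem_sup_right (hgen z hz _ hzm')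
        have h1 : B ⁅z, x - r⁆ ⁅z, x - r⁆ = -B (x - r) ⁅z, ⁅z, x - r⁆⁆ := binv _ _ _
        rw [horthr _ humem, neg_zero] at h1
        exact b0 _ h1
      have hxa' : x - r ∈ a' := hmax' _ hzm' hz0
      have : x = (x - r) + r := by abel
      rw [this]
      exact Submodule.add_mem _ (Submodule.mem_sup_left hxa') hr
    intro x hx
    obtain ⟨x0, hx0, v, hv, hxv⟩ := Submodule.mem_sup.1 (hm'R hx)
    refine ⟨x0, hx0, fun w hw => ?_⟩
    have hxr : x - x0 = v := by rw [← hxv]; abel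
    rw [hxr]
    exact hVorth v hv w hw
  set mlam := rootSpaceIn m a lam with hmlamdef
  set mmu := rootSpaceIn m a mu with hmmudef
  set A' := rootSpaceIn m' a' α with hA'def
  obtain ⟨Z1, hZ1⟩ : ∃ Z1 : ↥a', α Z1 ≠ 0 := by
    by_contra h; push_neg at h; exact hα.1 (LinearMap.ext h)
  have hlam_res : ∀ Z : ↥a', lam ⟨(Z:L), haa Z.2⟩ = α Z := by
    intro Z
    have h1 := DFunLike.congr_fun hrl Z
    have h2 : Submodule.inclusion (haa'.trans_le inf_le_left) Z = (⟨(Z:L), haa Z.2⟩ : ↥a) :=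
      Subtype.ext rfl
    rw [restrictForm, LinearMap.comp_apply, h2] at h1
    exact h1
  have hmu_res : ∀ Z : ↥a', mu ⟨(Z:L), haa Z.2⟩ = α Z := by
    intro Z
    have h1 := DFunLike.congr_fun hrm Z
    have h2 : Submodule.inclusion (haa'.trans_le inf_le_left) Z = (⟨(Z:L), haa Z.2⟩ : ↥a) :=
      Subtype.ext rfl
    rw [restrictForm, LinearMap.comp_apply, h2] at h1
    exact h1
  obtain ⟨Zs, hZs⟩ : ∃ Zs : ↥a, (lam Zs)^2 ≠ (mu Zs)^2 := by
    by_contra h; push_neg at h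
    have hprod : ∀ Z : ↥a, ((lam - mu) Z) * ((lam + mu) Z) = 0 := by
      intro Z
      have h2 : ((lam - mu) Z) * ((lam + mu) Z) = (lam Z)^2 - (mu Z)^2 := by
        simp only [LinearMap.sub_apply, LinearMap.add_apply]; ring
      rw [h2, h Z, sub_self]
    rcases formprod_eq_zero _ _ hprod with h1 | h1
    · exact hlammu (sub_eq_zero.1 h1)
    · have hlm : lam = -mu := eq_neg_of_add_eq_zero_left h1
      have h3 := hlam_res Z1
      rw [hlm] at h3
      simp only [LinearMap.neg_apply] at h3
      rw [hmu_res Z1] at h3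
      have : α Z1 = 0 := by linarith
      exact hZ1 this
  have hdisj : mlam ⊓ mmu = ⊥ := by
    rw [eq_bot_iff]
    intro x hx
    rw [Submodule.mem_bot]
    by_contra hx0
    obtain ⟨hx1, hx2⟩ := memroot.1 hx.1
    obtain ⟨hy1, hy2⟩ := memroot.1 hx.2
    have := hcancel _ _ x hx0 ((hx2 Zs).symm.trans (hy2 Zs))
    have : (lam Zs)^2 = (mu Zs)^2 := by linarith
    exact hZs this
  have horth : ∀ x ∈ mlam, ∀ y ∈ mmu, B x y = 0 := by
    intro x hx y hy
    obtain ⟨hx1, hx2⟩ := memroot.1 hx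
    obtain ⟨hy1, hy2⟩ := memroot.1 hy
    have h1 : B ⁅(Zs:L), ⁅(Zs:L), x⁆⁆ y = B x ⁅(Zs:L), ⁅(Zs:L), y⁆⁆ := by
      rw [binv, binv, neg_neg]
    rw [hx2 Zs, hy2 Zs, map_smul, LinearMap.smul_apply, map_smul] at h1
    simp only [smul_eq_mul] at h1
    by_contra hB0
    have h2 : (lam Zs)^2 = (mu Zs)^2 := by
      have h3 : ((lam Zs)^2 - (mu Zs)^2) * B x y = 0 := by linarith
      rcases mul_eq_zero.1 h3 with h4 | h4
      · linarith
      · exact absurd h4 hB0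
    exact hZs h2
  -- polarization of root space relation
  have hpol : ∀ (f : ↥a →ₗ[ℝ] ℝ) (u : L), u ∈ rootSpaceIn m a f →
      ∀ zz ww : ↥a, ⁅(ww:L), ⁅(zz:L), u⁆⁆ = (-(f zz * f ww)) • u := by
    intro f u hu zz ww
    obtain ⟨hum, hue⟩ := memroot.1 hu
    have h1 := hue zz
    have h2 := hue ww
    have h3 := hue (zz + ww)
    rw [Submodule.coe_add, add_lie, add_lie, lie_add, lie_add] at h3
    rw [adcomm (zz:L) zz.2 (ww:L) ww.2 u] at h3
    rw [h1, h2, map_add] at h3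
    have h4 : ⁅(ww:L), ⁅(zz:L), u⁆⁆ + ⁅(ww:L), ⁅(zz:L), u⁆⁆
        = (-((f zz + f ww)^2)) • u - (-(f zz ^ 2)) • u - (-(f ww ^ 2)) • u := by
      rw [← h3]; abel
    have h5 : (2:ℝ) • ⁅(ww:L), ⁅(zz:L), u⁆⁆ = (2:ℝ) • ((-(f zz * f ww)) • u) := by
      rw [two_smul, h4, ← sub_smul, ← sub_smul, smul_smul]
      congr 1
      ring
    exact smul_right_injective L two_ne_zero h5
  have hOpm : ∀ z ∈ a, ∀ w ∈ a, ∀ x ∈ m, ⁅z, ⁅w, x⁆⁆ ∈ m := by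
    intro z hz w hw x hx
    have h1 : ⁅w, x⁆ ∈ k := hmm w (ham hw) x hx
    have h3 : ⁅z, ⁅w, x⁆⁆ = -⁅⁅w, x⁆, z⁆ := (lie_skew z ⁅w, x⁆).symm
    rw [h3]
    exact neg_mem (hkm _ h1 z (ham hz))
  have hOpsymB : ∀ z ∈ a, ∀ w ∈ a, ∀ x y : L, B ⁅z, ⁅w, x⁆⁆ y = B x ⁅z, ⁅w, y⁆⁆ := by
    intro z hz w hw x y
    rw [binv z ⁅w, x⁆ y, binv w x ⁅z, y⁆, neg_neg, adcomm w hw z hz y]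
  have hrootinv : ∀ (f : ↥a →ₗ[ℝ] ℝ) (z : L), z ∈ a → ∀ w ∈ a, ∀ x ∈ rootSpaceIn m a f,
      ⁅z, ⁅w, x⁆⁆ ∈ rootSpaceIn m a f := by
    intro f z hz w hw x hx
    obtain ⟨hx1, hx2⟩ := memroot.1 hx
    refine memroot.2 ⟨hOpm z hz w hw x hx1, fun Z => ?_⟩
    rw [adcomm (Z:L) Z.2 z hz ⁅w, x⁆, adcomm (Z:L) Z.2 w hw x,
        adcomm (Z:L) Z.2 z hz ⁅w, ⁅(Z:L), x⁆⁆, adcomm (Z:L) Z.2 w hw ⁅(Z:L), x⁆,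
        hx2 Z, lie_smul, lie_smul]
  have hWinv : ∀ (z : L), z ∈ a → ∀ w ∈ a, ∀ x ∈ rootSpaceIn m a' α,
      ⁅z, ⁅w, x⁆⁆ ∈ rootSpaceIn m a' α := by
    intro z hz w hw x hx
    obtain ⟨hx1, hx2⟩ := memroot.1 hx
    refine memroot.2 ⟨hOpm z hz w hw x hx1, fun Z => ?_⟩
    rw [adcomm (Z:L) (haa Z.2) z hz ⁅w, x⁆, adcomm (Z:L) (haa Z.2) w hw x,
        adcomm (Z:L) (haa Z.2) z hz ⁅w, ⁅(Z:L), x⁆⁆, adcomm (Z:L) (haa Z.2) w hw ⁅(Z:L), x⁆,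
        hx2 Z, lie_smul, lie_smul]
  have hdec : A' ≤ mlam ⊔ mmu := by
    set Wsub := rootSpaceIn m a' α with hWdef
    have hA'W : A' ≤ Wsub := by
      intro x hx
      obtain ⟨hx1, hx2⟩ := memroot.1 hx
      exact memroot.2 ⟨hm'm hx1, hx2⟩
    set P' := (mlam ⊔ mmu) ⊓ Wsub with hP'def
    have hP'inv : ∀ (z : L), z ∈ a → ∀ w ∈ a, ∀ x ∈ P', ⁅z, ⁅w, x⁆⁆ ∈ P' := by
      intro z hz w hw x hx
      obtain ⟨hx1, hx2⟩ := hx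
      refine ⟨?_, hWinv z hz w hw x hx2⟩
      obtain ⟨x1, h1, x2, h2, rfl⟩ := Submodule.mem_sup.1 hx1
      rw [lie_add, lie_add]
      exact Submodule.add_mem _ (Submodule.mem_sup_left (hrootinv lam z hz w hw x1 h1))
        (Submodule.mem_sup_right (hrootinv mu z hz w hw x2 h2))
    intro X hXA'
    have hXW : X ∈ Wsub := hA'W hXA'
    obtain ⟨r, hr, horthr⟩ := exists_B_proj B bsymm bdef P' X
    by_cases hz : X - r = 0
    · have hXr : X = r := by
        have := sub_eq_zero.1 hz; exact this
      rw [hXr]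
      exact ((inf_le_left : P' ≤ mlam ⊔ mmu) hr)
    · exfalso
      have hzW : X - r ∈ Wsub := Submodule.sub_mem _ hXW (((inf_le_right : (mlam ⊔ mmu) ⊓ Wsub ≤ Wsub)) hr)
      set U := Wsub ⊓ LinearMap.BilinForm.orthogonal B P' with hUdef
      have hzU : X - r ∈ U := by
        refine ⟨hzW, ?_⟩
        show X - r ∈ LinearMap.BilinForm.orthogonal B P'
        rw [LinearMap.BilinForm.mem_orthogonal_iff]
        intro u hu
        show B u (X - r) = 0
        rw [bsymm]
        exact horthr u hu
      have hUne : U ≠ ⊥ := Submodule.ne_bot_iff _ |>.2 ⟨X - r, hzU, hz⟩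
      set n := Module.finrank ℝ ↥a with hn
      set bas := Module.finBasis ℝ ↥a with hbas
      set Zc : Fin n → L := fun i => ((bas i : ↥a) : L) with hZc
      have hZca : ∀ i, Zc i ∈ a := fun i => (bas i : ↥a).2
      set ops : List (L →ₗ[ℝ] L) :=
        ((List.finRange n) ×ˢ (List.finRange n)).map
          (fun p => (LieAlgebra.ad ℝ L (Zc p.1)) ∘ₗ (LieAlgebra.ad ℝ L (Zc p.2))) with hops
      have hopapply : ∀ z w x : L, ((LieAlgebra.ad ℝ L z) ∘ₗ (LieAlgebra.ad ℝ L w)) x = ⁅z, ⁅w, x⁆⁆ := by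
        intro z w x; simp [LieAlgebra.ad_apply]
      have hopsmem : ∀ T ∈ ops, ∃ z, z ∈ a ∧ ∃ w, w ∈ a ∧
          T = (LieAlgebra.ad ℝ L z) ∘ₗ (LieAlgebra.ad ℝ L w) := by
        intro T hT
        obtain ⟨p, hp, rfl⟩ := List.mem_map.1 hT
        exact ⟨Zc p.1, hZca p.1, Zc p.2, hZca p.2, rfl⟩
      obtain ⟨y, hyU, hy0, heig⟩ := common_eigenvector B bsymm bdef ops
        (by
          rintro T hT x y'
          obtain ⟨z, hz', w, hw', rfl⟩ := hopsmem T hT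
          rw [hopapply, hopapply]
          exact hOpsymB z hz' w hw' x y')
        (by
          rintro T hT S hS
          obtain ⟨z1, hz1, w1, hw1, rfl⟩ := hopsmem T hT
          obtain ⟨z2, hz2, w2, hw2, rfl⟩ := hopsmem S hS
          apply LinearMap.ext; intro x
          simp only [LinearMap.comp_apply, LieAlgebra.ad_apply]
          rw [adcomm w1 hw1 z2 hz2 ⁅w2, x⁆, adcomm z1 hz1 z2 hz2 ⁅w1, ⁅w2, x⁆⁆,
              adcomm w1 hw1 w2 hw2 x, adcomm z1 hz1 w2 hw2 ⁅w1, x⁆])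
        U hUne
        (by
          rintro T hT x hx
          obtain ⟨z, hz', w, hw', rfl⟩ := hopsmem T hT
          rw [hopapply]
          refine ⟨hWinv z hz' w hw' x hx.1, ?_⟩
          show ⁅z, ⁅w, x⁆⁆ ∈ LinearMap.BilinForm.orthogonal B P'
          rw [LinearMap.BilinForm.mem_orthogonal_iff]
          intro u hu
          show B u ⁅z, ⁅w, x⁆⁆ = 0
          rw [← hOpsymB z hz' w hw' u x]
          have h2 : x ∈ LinearMap.BilinForm.orthogonal B P' := hx.2
          rw [LinearMap.BilinForm.mem_orthogonal_iff] at h2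
          exact h2 _ (hP'inv z hz' w hw' u hu))
      have hij : ∀ i j : Fin n, ⁅Zc i, ⁅Zc j, y⁆⁆ ∈ (ℝ ∙ y) := by
        intro i j
        have hmem : ((LieAlgebra.ad ℝ L (Zc i)) ∘ₗ (LieAlgebra.ad ℝ L (Zc j))) ∈ ops := by
          rw [hops]
          exact List.mem_map.2 ⟨(i, j),
            List.mem_product.2 ⟨List.mem_finRange i, List.mem_finRange j⟩, rfl⟩
        obtain ⟨c, hc⟩ := heig _ hmem
        rw [hopapply] at hc
        exact Submodule.mem_span_singleton.2 ⟨c, hc.symm⟩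
      have hZZ : ∀ zz ww : ↥a, ⁅(zz:L), ⁅(ww:L), y⁆⁆ ∈ (ℝ ∙ y) := by
        have hspan : Submodule.span ℝ (Set.range bas) = ⊤ := bas.span_eq
        have step1 : ∀ i : Fin n, ∀ ww : ↥a, ⁅Zc i, ⁅(ww:L), y⁆⁆ ∈ (ℝ ∙ y) := by
          intro i
          set g : ↥a →ₗ[ℝ] L :=
            (LieAlgebra.ad ℝ L (Zc i)) ∘ₗ ((-(LieAlgebra.ad ℝ L y)) ∘ₗ a.subtype) with hg
          have hgapp : ∀ ww : ↥a, g ww = ⁅Zc i, ⁅(ww:L), y⁆⁆ := by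
            intro ww
            have h0 : g ww = (LieAlgebra.ad ℝ L (Zc i)) ((-(LieAlgebra.ad ℝ L y)) ((ww:L))) := rfl
            rw [h0, LinearMap.neg_apply, LieAlgebra.ad_apply, LieAlgebra.ad_apply,
              lie_skew (ww:L) y]
          have hcom : (⊤ : Submodule ℝ ↥a) ≤ Submodule.comap g (ℝ ∙ y) := by
            rw [← hspan, Submodule.span_le]
            rintro _ ⟨j, rfl⟩
            show g (bas j) ∈ (ℝ ∙ y)
            rw [hgapp]
            exact hij i j
          intro ww
          have h1 := hcom (Submodule.mem_top : ww ∈ ⊤)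
          rw [Submodule.mem_comap, hgapp] at h1
          exact h1
        intro zz ww
        set g2 : ↥a →ₗ[ℝ] L := (-(LieAlgebra.ad ℝ L ⁅(ww:L), y⁆)) ∘ₗ a.subtype with hg2
        have h2app : ∀ uu : ↥a, g2 uu = ⁅(uu:L), ⁅(ww:L), y⁆⁆ := by
          intro uu
          have h0 : g2 uu = (-(LieAlgebra.ad ℝ L ⁅(ww:L), y⁆)) ((uu:L)) := rfl
          rw [h0, LinearMap.neg_apply, LieAlgebra.ad_apply, lie_skew (uu:L) ⁅(ww:L), y⁆]
        have hcom2 : (⊤ : Submodule ℝ ↥a) ≤ Submodule.comap g2 (ℝ ∙ y) := by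
          rw [← hspan, Submodule.span_le]
          rintro _ ⟨j, rfl⟩
          show g2 (bas j) ∈ (ℝ ∙ y)
          rw [h2app]
          exact step1 j ww
        have h1 := hcom2 (Submodule.mem_top : zz ∈ ⊤)
        rw [Submodule.mem_comap, h2app] at h1
        exact h1
      have hyW := memroot.1 hyU.1
      by_cases hAy : ∀ zz : ↥a, ⁅(zz:L), y⁆ = 0
      · have hZ10 : α Z1 = 0 := by
          have h1 := hyW.2 Z1
          have h2 : ⁅((Z1:L)), y⁆ = 0 := hAy ⟨(Z1:L), haa Z1.2⟩
          rw [h2, lie_zero] at h1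
          rcases smul_eq_zero.1 h1.symm with h4 | h4
          · have h5 : (α Z1)^2 = 0 := by linarith
            exact pow_eq_zero_iff two_ne_zero |>.1 h5
          · exact absurd h4 hy0
        exact hZ1 hZ10
      · push_neg at hAy
        obtain ⟨z0, hz0⟩ := hAy
        have hcf : ∀ zz ww : ↥a, ∃ c : ℝ, ⁅(zz:L), ⁅(ww:L), y⁆⁆ = c • y := by
          intro zz ww
          obtain ⟨c, hc⟩ := Submodule.mem_span_singleton.1 (hZZ zz ww)
          exact ⟨c, hc.symm⟩
        have hByy : 0 < B y y := bdef y hy0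
        have hBee : 0 < B ⁅(z0:L), y⁆ ⁅(z0:L), y⁆ := bdef _ hz0
        have hgram : ∀ zz ww : ↥a, ∀ c : ℝ, ⁅(zz:L), ⁅(ww:L), y⁆⁆ = c • y →
            B ⁅(zz:L), y⁆ ⁅(ww:L), y⁆ = -(c * B y y) := by
          intro zz ww c hc
          have h1 : B ⁅(zz:L), y⁆ ⁅(ww:L), y⁆ = -B y ⁅(zz:L), ⁅(ww:L), y⁆⁆ := binv _ _ _
          rw [h1, hc, map_smul, smul_eq_mul]
        have hkeysq : ∀ zz ww : ↥a,
            (B ⁅(zz:L), y⁆ ⁅(ww:L), y⁆)^2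
              = (B ⁅(zz:L), y⁆ ⁅(zz:L), y⁆) * (B ⁅(ww:L), y⁆ ⁅(ww:L), y⁆) := by
          intro zz ww
          obtain ⟨cwz, hcwz⟩ := hcf ww zz
          obtain ⟨cww, hcww⟩ := hcf ww ww
          have hA : B ⁅(ww:L), ⁅(zz:L), y⁆⁆ ⁅(ww:L), ⁅(zz:L), y⁆⁆ = cwz^2 * B y y := by
            rw [hcwz]
            simp only [map_smul, LinearMap.smul_apply, smul_eq_mul]
            ring
          have h2 : ⁅(ww:L), ⁅(ww:L), ⁅(zz:L), y⁆⁆⁆ = cww • ⁅(zz:L), y⁆ := by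
            rw [adcomm (ww:L) ww.2 (zz:L) zz.2 y, adcomm (ww:L) ww.2 (zz:L) zz.2 ⁅(ww:L), y⁆,
                hcww, lie_smul]
          have hB2 : B ⁅(ww:L), ⁅(zz:L), y⁆⁆ ⁅(ww:L), ⁅(zz:L), y⁆⁆
              = -(cww * B ⁅(zz:L), y⁆ ⁅(zz:L), y⁆) := by
            have h1 : B ⁅(ww:L), ⁅(zz:L), y⁆⁆ ⁅(ww:L), ⁅(zz:L), y⁆⁆
                = -B ⁅(zz:L), y⁆ ⁅(ww:L), ⁅(ww:L), ⁅(zz:L), y⁆⁆⁆ := binv _ _ _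
            rw [h1, h2, map_smul, smul_eq_mul]
          have heq := hA.symm.trans hB2
          have hg1 := hgram ww zz cwz hcwz
          have hg2 := hgram ww ww cww hcww
          have hy1 : B ⁅(zz:L), y⁆ ⁅(ww:L), y⁆ = B ⁅(ww:L), y⁆ ⁅(zz:L), y⁆ := bsymm _ _
          calc (B ⁅(zz:L), y⁆ ⁅(ww:L), y⁆)^2 = (-(cwz * B y y))^2 := by rw [hy1, hg1]
            _ = (cwz^2 * B y y) * B y y := by ring
            _ = -(cww * (B ⁅(zz:L), y⁆ ⁅(zz:L), y⁆)) * B y y := by rw [heq]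
            _ = (B ⁅(zz:L), y⁆ ⁅(zz:L), y⁆) * -(cww * B y y) := by ring
            _ = (B ⁅(zz:L), y⁆ ⁅(zz:L), y⁆) * (B ⁅(ww:L), y⁆ ⁅(ww:L), y⁆) := by rw [← hg2]
        set d : ℝ := Real.sqrt (B ⁅(z0:L), y⁆ ⁅(z0:L), y⁆ * B y y) with hd
        have hd0 : 0 < d := Real.sqrt_pos.2 (by positivity)
        have hd2 : d^2 = B ⁅(z0:L), y⁆ ⁅(z0:L), y⁆ * B y y := Real.sq_sqrt (by positivity)
        set ν : ↥a →ₗ[ℝ] ℝ :=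
          { toFun := fun zz => B ⁅(zz:L), y⁆ ⁅(z0:L), y⁆ / d
            map_add' := by
              intro u v
              simp only [Submodule.coe_add, add_lie, map_add, LinearMap.add_apply, add_div]
            map_smul' := by
              intro r u
              simp only [Submodule.coe_smul, smul_lie, map_smul, LinearMap.smul_apply,
                smul_eq_mul, RingHom.id_apply, mul_div_assoc] } with hν
        have hνapp : ∀ zz : ↥a, ν zz = B ⁅(zz:L), y⁆ ⁅(z0:L), y⁆ / d := fun _ => rfl
        have hνsq : ∀ zz : ↥a, ⁅(zz:L), ⁅(zz:L), y⁆⁆ = (-(ν zz ^ 2)) • y := by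
          intro zz
          obtain ⟨c, hc⟩ := hcf zz zz
          have hgzz := hgram zz zz c hc
          have hkey := hkeysq zz z0
          have hne1 : B ⁅(z0:L), y⁆ ⁅(z0:L), y⁆ ≠ 0 := ne_of_gt hBee
          have hne2 : B y y ≠ 0 := ne_of_gt hByy
          have hc2 : (ν zz)^2 = -c := by
            rw [hνapp, div_pow, hd2, hkey, hgzz]
            field_simp
          rw [hc, show c = -(ν zz ^ 2) from by linarith [hc2]]
        have hym : y ∈ m := hyW.1
        have hyroot : y ∈ rootSpaceIn m a ν := memroot.2 ⟨hym, fun Z => hνsq Z⟩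
        have hν0 : ν ≠ 0 := by
          intro h
          have h1 : ν z0 = 0 := by rw [h]; rfl
          rw [hνapp] at h1
          rcases div_eq_zero_iff.1 h1 with h2 | h2
          · exact absurd h2 (ne_of_gt hBee)
          · exact absurd h2 (ne_of_gt hd0)
        have hνroot : ν ∈ rootSystemIn m a := ⟨hν0, Submodule.ne_bot_iff _ |>.2 ⟨y, hyroot, hy0⟩⟩
        have hres2 : ∀ Z : ↥a', (ν ⟨(Z:L), haa Z.2⟩)^2 = (α Z)^2 := by
          intro Z
          have h1 := hyW.2 Z
          have h2 : ⁅(Z:L), ⁅(Z:L), y⁆⁆ = (-(ν ⟨(Z:L), haa Z.2⟩ ^ 2)) • y :=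
            hνsq ⟨(Z:L), haa Z.2⟩
          have h3 := hcancel _ _ y hy0 (h2.symm.trans h1)
          linarith
        have hresfact : restrictForm (haa'.trans_le inf_le_left) ν = α ∨
            restrictForm (haa'.trans_le inf_le_left) ν = -α := by
          have hprod : ∀ Z : ↥a',
              ((restrictForm (haa'.trans_le inf_le_left) ν - α) Z)
                * ((restrictForm (haa'.trans_le inf_le_left) ν + α) Z) = 0 := by
            intro Z
            have h0 : restrictForm (haa'.trans_le inf_le_left) ν Z = ν ⟨(Z:L), haa Z.2⟩ := rfl
            simp only [LinearMap.sub_apply, LinearMap.add_apply, h0]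
            have h5 := hres2 Z
            nlinarith [h5]
          rcases formprod_eq_zero _ _ hprod with h | h
          · exact Or.inl (sub_eq_zero.1 h)
          · exact Or.inr (eq_neg_of_add_eq_zero_left h)
        have hmemiff : ∀ x : L, x ∈ rootSpaceIn m a (-ν) ↔ x ∈ rootSpaceIn m a ν := by
          intro x
          constructor
          · intro hx
            obtain ⟨h1, h0⟩ := memroot.1 hx
            refine memroot.2 ⟨h1, fun Z => ?_⟩
            have h6 := h0 Z
            simpa only [LinearMap.neg_apply, neg_sq] using h6
          · intro hx
            obtain ⟨h1, h0⟩ := memroot.1 hx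
            refine memroot.2 ⟨h1, fun Z => ?_⟩
            have h6 := h0 Z
            simpa only [LinearMap.neg_apply, neg_sq] using h6
        have hyP : y ∈ mlam ⊔ mmu := by
          rcases hresfact with h | h
          · rcases honly ν hνroot h with h' | h'
            · refine Submodule.mem_sup_left ?_
              show y ∈ rootSpaceIn m a lam
              rw [← h']
              exact hyroot
            · refine Submodule.mem_sup_right ?_
              show y ∈ rootSpaceIn m a mu
              rw [← h']
              exact hyroot
          · have hνneg : (-ν) ∈ rootSystemIn m a :=
              ⟨neg_ne_zero.2 hν0, Submodule.ne_bot_iff _ |>.2 ⟨y, (hmemiff y).2 hyroot, hy0⟩⟩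
            have hres' : restrictForm (haa'.trans_le inf_le_left) (-ν) = α := by
              have h4 : restrictForm (haa'.trans_le inf_le_left) (-ν)
                  = -(restrictForm (haa'.trans_le inf_le_left) ν) := by
                apply LinearMap.ext; intro Z; rfl
              rw [h4, h, neg_neg]
            rcases honly (-ν) hνneg hres' with h' | h'
            · refine Submodule.mem_sup_left ?_
              show y ∈ rootSpaceIn m a lam
              rw [← h']
              exact (hmemiff y).2 hyroot
            · refine Submodule.mem_sup_right ?_
              show y ∈ rootSpaceIn m a mu
              rw [← h']
              exact (hmemiff y).2 hyroot
        have hyP' : y ∈ P' := ⟨hyP, hyU.1⟩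
        have hBy0 : B y y = 0 := by
          have h5 : y ∈ LinearMap.BilinForm.orthogonal B P' := hyU.2
          rw [LinearMap.BilinForm.mem_orthogonal_iff] at h5
          exact h5 y hyP'
        exact (ne_of_gt hByy) hBy0
  have hlsw : ∀ w : ↥a, B lamSharp (w:L) = lam w := fun w => by
    rw [bsymm, hBapp]; exact hlamChar w
  have hmsw : ∀ w : ↥a, B muSharp (w:L) = mu w := fun w => by
    rw [bsymm, hBapp]; exact hmuChar w
  have hasw : ∀ Z : ↥a', B alphaSharp (Z:L) = α Z := fun Z => by
    rw [bsymm, hBapp]; exact halphaChar Z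
  -- muSharp is not in a'
  have hmua : muSharp ∉ a' := by
    intro hmem
    have hαμ : alphaSharp = muSharp := by
      have hdm : alphaSharp - muSharp ∈ a' := Submodule.sub_mem _ halphaSharp hmem
      have hzz : ∀ Z : ↥a', B (Z:L) (alphaSharp - muSharp) = 0 := by
        intro Z
        rw [map_sub]
        have e1 : B (Z:L) alphaSharp = α Z := by rw [hBapp]; exact halphaChar Z
        have e2 : B (Z:L) muSharp = α Z := by
          have h3 : B (Z:L) muSharp = mu ⟨(Z:L), haa Z.2⟩ := by
            rw [hBapp]; exact hmuChar ⟨(Z:L), haa Z.2⟩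
          rw [h3, hmu_res Z]
        rw [e1, e2, sub_self]
      have h4 : B (alphaSharp - muSharp) (alphaSharp - muSharp) = 0 := by
        have h5 := hzz ⟨alphaSharp - muSharp, hdm⟩
        rw [bsymm] at h5
        exact h5
      exact sub_eq_zero.1 (b0 _ h4)
    have hsl : s • lamSharp = (1 - t) • muSharp := by
      have h6 : muSharp = s • lamSharp + t • muSharp := by
        have h6a := hcomb; rw [hαμ] at h6a; exact h6a
      have h7 : s • lamSharp = muSharp - t • muSharp := eq_sub_of_add_eq h6.symm
      rw [h7, sub_smul, one_smul]
    have hlm : ∀ w : ↥a, s * lam w = (1 - t) * mu w := by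
      intro w
      have h8 := congrArg (fun v => B v (w:L)) hsl
      simp only [map_smul, LinearMap.smul_apply, smul_eq_mul] at h8
      rw [hlsw w, hmsw w] at h8
      exact h8
    have hs1t : s = 1 - t := by
      have h9 := hlm ⟨(Z1:L), haa Z1.2⟩
      rw [hlam_res Z1, hmu_res Z1] at h9
      exact mul_right_cancel₀ hZ1 h9
    have hlmeq : lam = mu := by
      apply LinearMap.ext; intro w
      have h10 := hlm w
      rw [← hs1t] at h10
      exact mul_left_cancel₀ hs h10
    exact hlammu hlmeq
  -- s + t = 1
  have hst1 : s + t = 1 := by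
    have ha0 : alphaSharp ≠ 0 := by
      intro h
      have h1 := hasw Z1
      rw [h] at h1
      simp only [map_zero, LinearMap.zero_apply] at h1
      exact hZ1 h1.symm
    have hBa : 0 < B alphaSharp alphaSharp := bdef _ ha0
    have e1 : B alphaSharp lamSharp = B alphaSharp alphaSharp := by
      have h2 : B lamSharp alphaSharp = lam ⟨alphaSharp, haa halphaSharp⟩ :=
        hlsw ⟨alphaSharp, haa halphaSharp⟩
      rw [bsymm, h2, hlam_res ⟨alphaSharp, halphaSharp⟩]
      exact (hasw ⟨alphaSharp, halphaSharp⟩).symm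
    have e2 : B alphaSharp muSharp = B alphaSharp alphaSharp := by
      have h2 : B muSharp alphaSharp = mu ⟨alphaSharp, haa halphaSharp⟩ :=
        hmsw ⟨alphaSharp, haa halphaSharp⟩
      rw [bsymm, h2, hmu_res ⟨alphaSharp, halphaSharp⟩]
      exact (hasw ⟨alphaSharp, halphaSharp⟩).symm
    have h3 := congrArg (fun v => B alphaSharp v) hcomb
    simp only [map_add, map_smul, smul_eq_mul] at h3
    rw [e1, e2] at h3
    have h4 : (s + t - 1) * B alphaSharp alphaSharp = 0 := by linarith [h3]
    rcases mul_eq_zero.1 h4 with h5 | h5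
    · linarith
    · exact absurd h5 (ne_of_gt hBa)
  -- the norm identity
  have hNI : ∀ X1 ∈ mlam, ∀ X2 ∈ mmu, X1 + X2 ∈ A' → s * B X2 X2 = t * B X1 X1 := by
    intro X1 h1 X2 h2 hX
    set Z : ↥a' := (α Z1)⁻¹ • Z1 with hZ
    have hαZ : α Z = 1 := by
      rw [hZ, map_smul, smul_eq_mul]; exact inv_mul_cancel₀ hZ1
    set ZA : ↥a := ⟨(Z:L), haa Z.2⟩ with hZA2
    have hlamZ : lam ZA = 1 := (hlam_res Z).trans hαZ
    have hmuZ : mu ZA = 1 := (hmu_res Z).trans hαZ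
    set X := X1 + X2 with hX12
    set N := ⁅X, ⁅(Z:L), X⁆⁆ with hN
    obtain ⟨hXm', hXeig⟩ := memroot.1 hX
    have hNm' : N ∈ m' := by
      have h3 : ⁅⁅(Z:L), X⁆, X⁆ ∈ m' := htrip _ (ha'm' Z.2) _ hXm' _ hXm'
      have h4 : N = -⁅⁅(Z:L), X⁆, X⁆ := by
        rw [hN, ← lie_skew]
      rw [h4]
      exact neg_mem h3
    have h02 : B X2 X1 = 0 := by rw [bsymm]; exact horth X1 h1 X2 h2
    have h01 : B X1 X2 = 0 := horth X1 h1 X2 h2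
    have hBNw : ∀ w : ↥a, B N (w:L) = lam w * B X1 X1 + mu w * B X2 X2 := by
      intro w
      have hpair : ∀ (f : ↥a →ₗ[ℝ] ℝ) (xj : L), xj ∈ rootSpaceIn m a f → ∀ xi : L,
          B ⁅(Z:L), xi⁆ ⁅(w:L), xj⁆ = (f ZA * f w) * B xi xj := by
        intro f xj hxj xi
        have h6 : B ⁅(Z:L), xi⁆ ⁅(w:L), xj⁆ = -B xi ⁅(Z:L), ⁅(w:L), xj⁆⁆ := binv _ _ _
        have h7 : ⁅((Z:L)), ⁅(w:L), xj⁆⁆ = (-(f w * f ZA)) • xj := hpol f xj hxj w ZA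
        rw [h6, h7, map_smul, smul_eq_mul]
        ring
      have h5 : B N (w:L) = B ⁅(Z:L), X⁆ ⁅(w:L), X⁆ := by
        rw [hN, binv X ⁅(Z:L), X⁆ (w:L)]
        rw [show ⁅X, (w:L)⁆ = -⁅(w:L), X⁆ from (lie_skew X (w:L)).symm]
        rw [map_neg, neg_neg]
      rw [h5, hX12, lie_add, lie_add]
      simp only [map_add, LinearMap.add_apply]
      rw [hpair lam X1 h1 X1, hpair mu X2 h2 X2, hpair mu X2 h2 X1, hpair lam X1 h1 X2]
      rw [h01, h02, hlamZ, hmuZ]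
      ring
    obtain ⟨N0, hN0, hNorth⟩ := hproj N hNm'
    have hN0eq : N0 = B X1 X1 • lamSharp + B X2 X2 • muSharp := by
      have hBD : ∀ w : ↥a, B (N0 - (B X1 X1 • lamSharp + B X2 X2 • muSharp)) (w:L) = 0 := by
        intro w
        have h8 := hBNw w
        have h9 : B N0 (w:L) = B N (w:L) := by
          have h9a := hNorth (w:L) w.2
          rw [map_sub, LinearMap.sub_apply] at h9a
          linarith
        rw [map_sub, LinearMap.sub_apply, map_add, LinearMap.add_apply,
          map_smul, LinearMap.smul_apply, map_smul, LinearMap.smul_apply,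
          smul_eq_mul, smul_eq_mul, hlsw w, hmsw w, h9, h8]
        ring
      have hDa : N0 - (B X1 X1 • lamSharp + B X2 X2 • muSharp) ∈ a :=
        Submodule.sub_mem _ (haa hN0) (Submodule.add_mem _
          (Submodule.smul_mem _ _ hlamSharp) (Submodule.smul_mem _ _ hmuSharp))
      have h10 := hBD ⟨_, hDa⟩
      exact sub_eq_zero.1 (b0 _ h10)
    by_contra hne
    have hq : (s * B X2 X2 - t * B X1 X1) ≠ 0 := fun h => hne (by linarith [sub_eq_zero.1 h])
    have hel : s • N0 - (B X1 X1) • alphaSharp ∈ a' :=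
      Submodule.sub_mem _ (Submodule.smul_mem _ _ hN0) (Submodule.smul_mem _ _ halphaSharp)
    have h11 : s • N0 - (B X1 X1) • alphaSharp = (s * B X2 X2 - t * B X1 X1) • muSharp := by
      rw [hN0eq, hcomb]
      module
    have h12 : muSharp ∈ a' := by
      have h13 := Submodule.smul_mem a' (s * B X2 X2 - t * B X1 X1)⁻¹ (h11 ▸ hel)
      rwa [smul_smul, inv_mul_cancel₀ hq, one_smul] at h13
    exact hmua h12
  -- positivity of s and t
  obtain ⟨X0, hX0A, hX00⟩ : ∃ X0 : L, X0 ∈ A' ∧ X0 ≠ 0 := by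
    obtain ⟨x, hx, h0⟩ := Submodule.ne_bot_iff _ |>.1 hα.2
    exact ⟨x, hx, h0⟩
  obtain ⟨X01, hX01, X02, hX02, hX0eq⟩ := Submodule.mem_sup.1 (hdec hX0A)
  have hNI0 := hNI X01 hX01 X02 hX02 (by rw [hX0eq]; exact hX0A)
  have hX01ne : X01 ≠ 0 := by
    intro h
    rw [h] at hNI0
    simp only [map_zero, LinearMap.zero_apply, mul_zero] at hNI0
    rcases mul_eq_zero.1 hNI0 with h5 | h5
    · exact hs h5
    · have h6 : X02 = 0 := b0 _ h5
      apply hX00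
      rw [← hX0eq, h, h6, add_zero]
  have hX02ne : X02 ≠ 0 := by
    intro h
    rw [h] at hNI0
    simp only [map_zero, LinearMap.zero_apply, mul_zero, zero_mul] at hNI0
    rcases mul_eq_zero.1 hNI0.symm with h5 | h5
    · exact ht h5
    · have h6 : X01 = 0 := b0 _ h5
      apply hX00
      rw [← hX0eq, h, h6, add_zero]
  have hBp1 : 0 < B X01 X01 := bdef _ hX01ne
  have hBp2 : 0 < B X02 X02 := bdef _ hX02ne
  have hspos : 0 < s := by
    rcases lt_trichotomy s 0 with h | h | h
    · have ht' : t < 0 := by nlinarith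
      linarith
    · exact absurd h hs
    · exact h
  have htpos : 0 < t := by nlinarith
  -- uniqueness of the decomposition
  have huniq : ∀ x1 ∈ mlam, ∀ x2 ∈ mmu, ∀ y1 ∈ mlam, ∀ y2 ∈ mmu,
      x1 + x2 = y1 + y2 → x1 = y1 ∧ x2 = y2 := by
    intro x1 hx1 x2 hx2 y1 hy1 y2 hy2 heq
    have h5 : x1 - y1 ∈ mlam ⊓ mmu := by
      refine ⟨Submodule.sub_mem _ hx1 hy1, ?_⟩
      have h6 : x1 - y1 = y2 - x2 :=
        sub_eq_sub_iff_add_eq_add.2 (heq.trans (add_comm y1 y2))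
      rw [h6]
      exact Submodule.sub_mem _ hy2 hx2
    rw [hdisj] at h5
    have h7 : x1 = y1 := sub_eq_zero.1 (Submodule.mem_bot ℝ |>.1 h5)
    refine ⟨h7, ?_⟩
    have h8 := heq
    rw [h7] at h8
    exact add_left_cancel h8
  have hdecX : ∀ X : ↥A', ∃ p : L × L, p.1 ∈ mlam ∧ p.2 ∈ mmu ∧ (X:L) = p.1 + p.2 := by
    intro X
    obtain ⟨x1, hx1, x2, hx2, heq⟩ := Submodule.mem_sup.1 (hdec X.2)
    exact ⟨(x1, x2), hx1, hx2, heq.symm⟩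
  choose dp hdp1 hdp2 hdpeq using hdecX
  have hkey : ∀ (X : ↥A') (x1 x2 : L), x1 ∈ mlam → x2 ∈ mmu → (X:L) = x1 + x2 →
      dp X = (x1, x2) := by
    intro X x1 x2 hx1 hx2 heq
    have h5 := huniq (dp X).1 (hdp1 X) (dp X).2 (hdp2 X) x1 hx1 x2 hx2
      (by rw [← hdpeq X, heq])
    exact Prod.ext h5.1 h5.2
  set c1 : ↥A' →ₗ[ℝ] L :=
    { toFun := fun X => (dp X).1
      map_add' := by
        intro X Y
        have h := hkey (X + Y) ((dp X).1 + (dp Y).1) ((dp X).2 + (dp Y).2)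
          (Submodule.add_mem _ (hdp1 X) (hdp1 Y)) (Submodule.add_mem _ (hdp2 X) (hdp2 Y))
          (by rw [Submodule.coe_add, hdpeq X, hdpeq Y]; abel)
        show (dp (X + Y)).1 = (dp X).1 + (dp Y).1
        rw [h]
      map_smul' := by
        intro r X
        have h := hkey (r • X) (r • (dp X).1) (r • (dp X).2)
          (Submodule.smul_mem _ _ (hdp1 X)) (Submodule.smul_mem _ _ (hdp2 X))
          (by rw [Submodule.coe_smul, hdpeq X, smul_add])
        show (dp (r • X)).1 = r • (dp X).1
        rw [h] } with hc1def
  set c2 : ↥A' →ₗ[ℝ] L :=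
    { toFun := fun X => (dp X).2
      map_add' := by
        intro X Y
        have h := hkey (X + Y) ((dp X).1 + (dp Y).1) ((dp X).2 + (dp Y).2)
          (Submodule.add_mem _ (hdp1 X) (hdp1 Y)) (Submodule.add_mem _ (hdp2 X) (hdp2 Y))
          (by rw [Submodule.coe_add, hdpeq X, hdpeq Y]; abel)
        show (dp (X + Y)).2 = (dp X).2 + (dp Y).2
        rw [h]
      map_smul' := by
        intro r X
        have h := hkey (r • X) (r • (dp X).1) (r • (dp X).2)
          (Submodule.smul_mem _ _ (hdp1 X)) (Submodule.smul_mem _ _ (hdp2 X))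
          (by rw [Submodule.coe_smul, hdpeq X, smul_add])
        show (dp (r • X)).2 = r • (dp X).2
        rw [h] } with hc2def
  have hc1mem : ∀ X : ↥A', c1 X ∈ mlam := fun X => hdp1 X
  have hc2mem : ∀ X : ↥A', c2 X ∈ mmu := fun X => hdp2 X
  have hsum : ∀ X : ↥A', (X:L) = c1 X + c2 X := fun X => hdpeq X
  have hNIX : ∀ X : ↥A', s * B (c2 X) (c2 X) = t * B (c1 X) (c1 X) := fun X =>
    hNI _ (hc1mem X) _ (hc2mem X) (by rw [← hsum X]; exact X.2)
  have hpolar : ∀ X Y : ↥A', s * B (c2 X) (c2 Y) = t * B (c1 X) (c1 Y) := by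
    intro X Y
    have h1 := hNIX (X + Y)
    rw [map_add, map_add] at h1
    simp only [map_add, LinearMap.add_apply] at h1
    have h2 := hNIX X
    have h3 := hNIX Y
    have h4 : B (c2 X) (c2 Y) = B (c2 Y) (c2 X) := bsymm _ _
    have h5 : B (c1 X) (c1 Y) = B (c1 Y) (c1 X) := bsymm _ _
    linear_combination h1/2 - h2/2 - h3/2 + (s/2) * h4 - (t/2) * h5
  have hc1inj : Function.Injective c1 := by
    intro X Y hXY
    have h0 : c1 (X - Y) = 0 := by rw [map_sub, hXY, sub_self]
    have h1 := hNIX (X - Y)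
    rw [h0] at h1
    simp only [map_zero, LinearMap.zero_apply, mul_zero] at h1
    rcases mul_eq_zero.1 h1 with h5 | h5
    · exact absurd h5 hs
    · have h6 : c2 (X - Y) = 0 := b0 _ h5
      have h7 : ((X - Y : ↥A') : L) = 0 := by rw [hsum (X - Y), h0, h6, add_zero]
      have h8 : X - Y = 0 := Subtype.ext h7
      exact sub_eq_zero.1 h8
  set mlam'' : Submodule ℝ L := LinearMap.range c1 with hmlam''
  have hml : mlam'' ≤ mlam := by rintro _ ⟨X, rfl⟩; exact hc1mem X
  set eiso : ↥A' ≃ₗ[ℝ] ↥mlam'' := LinearEquiv.ofInjective c1 hc1inj with heiso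
  set Φ : ↥mlam'' →ₗ[ℝ] L := Real.sqrt (s / t) • (c2 ∘ₗ (eiso.symm.toLinearMap)) with hΦdef
  have hΦapp : ∀ x : ↥mlam'', Φ x = Real.sqrt (s/t) • c2 (eiso.symm x) := fun _ => rfl
  have hback : ∀ x : ↥mlam'', c1 (eiso.symm x) = (x : L) := by
    intro x
    have h1 := eiso.apply_symm_apply x
    have h2 : ((eiso (eiso.symm x)) : L) = c1 (eiso.symm x) :=
      LinearEquiv.ofInjective_apply c1 (eiso.symm x)
    rw [← h2, h1]
  have hΦmem : ∀ x : ↥mlam'', Φ x ∈ mmu := fun x => by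
    rw [hΦapp]; exact Submodule.smul_mem _ _ (hc2mem _)
  have hstq : (0:ℝ) < s / t := div_pos hspos htpos
  have hsqst : Real.sqrt (s/t) * Real.sqrt (s/t) = s / t := Real.mul_self_sqrt (le_of_lt hstq)
  have hiso : ∀ x y : ↥mlam'', B (Φ x) (Φ y) = B (x:L) (y:L) := by
    intro x y
    rw [hΦapp, hΦapp]
    simp only [map_smul, LinearMap.smul_apply, smul_eq_mul]
    have hp := hpolar (eiso.symm x) (eiso.symm y)
    rw [hback, hback] at hp
    have hsne : s ≠ 0 := hs
    have htne : t ≠ 0 := ht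
    have h6 : B (c2 (eiso.symm x)) (c2 (eiso.symm y)) = (t / s) * B (x:L) (y:L) := by
      field_simp
      linarith
    rw [h6, ← mul_assoc, hsqst]
    field_simp
  have hts1 : Real.sqrt (t/s) * Real.sqrt (s/t) = 1 := by
    rw [← Real.sqrt_mul (by positivity)]
    rw [show t/s*(s/t) = 1 from by field_simp]
    exact Real.sqrt_one
  have hgraph : (A' : Set L) = {z | ∃ x : ↥mlam'', z = (x : L) + Real.sqrt (t / s) • Φ x} := by
    ext z
    simp only [SetLike.mem_coe, Set.mem_setOf_eq]
    constructor
    · intro hz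
      refine ⟨eiso ⟨z, hz⟩, ?_⟩
      have h1 : ((eiso ⟨z, hz⟩ : ↥mlam'') : L) = c1 ⟨z, hz⟩ :=
        LinearEquiv.ofInjective_apply c1 ⟨z, hz⟩
      rw [hΦapp, LinearEquiv.symm_apply_apply, h1, smul_smul, hts1, one_smul]
      exact hsum ⟨z, hz⟩
    · rintro ⟨x, rfl⟩
      rw [hΦapp, smul_smul, hts1, one_smul]
      have h2 := hsum (eiso.symm x)
      rw [hback x] at h2
      rw [← h2]
      exact (eiso.symm x).2
  have hfr1 : Module.finrank ℝ ↥A' = Module.finrank ℝ ↥mlam'' := eiso.finrank_eq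
  have hd1 : Module.finrank ℝ ↥A' ≤ Module.finrank ℝ ↥mlam := by
    rw [hfr1]; exact Submodule.finrank_mono hml
  set Φr : ↥mlam'' →ₗ[ℝ] ↥mmu := Φ.codRestrict mmu hΦmem with hΦr
  have hΦrinj : Function.Injective Φr := by
    intro x y hxy
    have h1 : Φ x = Φ y := congrArg Subtype.val hxy
    have h2 : Φ (x - y) = 0 := by rw [map_sub, h1, sub_self]
    have h3 := hiso (x - y) (x - y)
    rw [h2] at h3
    simp only [map_zero, LinearMap.zero_apply] at h3
    have h4 : ((x - y : ↥mlam'') : L) = 0 := b0 _ h3.symm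
    have h5 : x - y = 0 := Subtype.ext h4
    exact sub_eq_zero.1 h5
  have hd2 : Module.finrank ℝ ↥A' ≤ Module.finrank ℝ ↥mmu := by
    rw [hfr1]
    exact LinearMap.finrank_le_finrank_of_injective hΦrinj
  refine ⟨hspos, htpos, mlam'', hml, Φ, hΦmem, ?_, hgraph, le_min hd1 hd2⟩
  intro x y
  have h9 := hiso x y
  rw [hBapp, hBapp] at h9
  exact h9
end CommonEigen
end

section
/- For all u, v, w ∈ m the following two matrix identities hold: ⁅ι(u), ι(v)⁆ = fromBlocks (vᴴ·u − uᴴ·v) 0 0 (v·uᴴ − u·vᴴ), and −⁅⁅ι(u), ι(v)⁆, ι(w)⁆ = ι((u·vᴴ − v·uᴴ)·w + w·(vᴴ·u − uᴴ·v)) = ι(R(u,v)w). (This realizes the curvature tensor of G₂(ℍ^{n+2}) as R(u,v)w = −⁅⁅u,v⁆,w⁆ in sp(n+2).) -/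
open Matrix

noncomputable section

/-- The quaternions. -/
abbrev ℍq : Type := Quaternion ℝ

/-- The tangent space `m` of `G₂(ℍ^{n+2})`: the `n × 2` quaternionic matrices. -/
abbrev MatH (n : ℕ) : Type := Matrix (Fin n) (Fin 2) ℍq

/-- The curvature tensor of `G₂(ℍ^{n+2})`:
`R(u,v)w = (u vᴴ − v uᴴ) w + w (vᴴ u − uᴴ v)`. -/
def Rcurv {n : ℕ} (u v w : MatH n) : MatH n :=
  (u * vᴴ - v * uᴴ) * w + w * (vᴴ * u - uᴴ * v)

/-- A subset of `m` is a Lie triple system if it is a real-linear subspace which is closed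
under the curvature tensor. -/
def IsLTS {n : ℕ} (s : Set (MatH n)) : Prop :=
  (∃ p : Submodule ℝ (MatH n), (p : Set (MatH n)) = s) ∧
    ∀ u ∈ s, ∀ v ∈ s, ∀ w ∈ s, Rcurv u v w ∈ s

/-- The first row index (row "1" in the paper's 1-based notation). -/
def r0 {n : ℕ} (hn : 2 ≤ n) : Fin n := ⟨0, by omega⟩

/-- The second row index (row "2" in the paper's 1-based notation). -/
def r1 {n : ℕ} (hn : 2 ≤ n) : Fin n := ⟨1, by omega⟩

/-- `q·E₁₁`: the matrix whose only nonzero entry is `q`, in position (1,1). -/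
def E11 {n : ℕ} (hn : 2 ≤ n) (q : ℍq) : MatH n := Matrix.single (r0 hn) 0 q

/-- `q·E₂₂`: the matrix whose only nonzero entry is `q`, in position (2,2). -/
def E22 {n : ℕ} (hn : 2 ≤ n) (q : ℍq) : MatH n := Matrix.single (r1 hn) 1 q

/-- `H₊ = E₁₁`. -/
def Hp {n : ℕ} (hn : 2 ≤ n) : MatH n := E11 hn 1

/-- `H₋ = E₂₂`. -/
def Hm {n : ℕ} (hn : 2 ≤ n) : MatH n := E22 hn 1

/-- The matrix `M_{c,ε}`: entry `(2,1)` equals `c/√2`, entry `(1,2)` equals `ε·conj(c)/√2`,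
all other entries vanish. -/
def Mce {n : ℕ} (hn : 2 ≤ n) (c : ℍq) (ε : ℝ) : MatH n :=
  Matrix.single (r1 hn) 0 ((Real.sqrt 2)⁻¹ • c) +
    Matrix.single (r0 hn) 1 ((ε * (Real.sqrt 2)⁻¹) • star c)

/-- The quaternionic inner product `⟨v,w⟩ = trace (vᴴ w)` on `m`. -/
def qip {n : ℕ} (v w : MatH n) : ℍq := Matrix.trace (vᴴ * w)

/-- The norm on `m`: `‖v‖ = √(Σ |v i j|²)`. -/
def hnorm {n : ℕ} (v : MatH n) : ℝ := Real.sqrt (∑ i, ∑ j, Quaternion.normSq (v i j))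

/-- The symplectic group `Sp(k)` of quaternionic `k × k` matrices. -/
def SpH (k : ℕ) : Set (Matrix (Fin k) (Fin k) ℍq) := {B | Bᴴ * B = 1}

/-- The `j`-th column of a matrix in `m`. -/
def col {n : ℕ} (j : Fin 2) (v : MatH n) : Fin n → ℍq := fun i => v i j

/-- The quaternionic inner product `⟨a,b⟩ = Σᵢ conj(aᵢ)·bᵢ` on `ℍⁿ`. -/
def vip {n : ℕ} (a b : Fin n → ℍq) : ℍq := ∑ i, star (a i) * b i

/-- The imaginary part `Im(q) = (q - conj q)/2` of a quaternion. -/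
def imPart (q : ℍq) : ℍq := (q - star q) / 2

/-- Componentwise right multiplication of a vector by a quaternion. -/
def rightMulV {n : ℕ} (u : Fin n → ℍq) (c : ℍq) : Fin n → ℍq := fun i => u i * c

end

noncomputable section

/-- The block embedding `ι(u) = fromBlocks 0 (−uᴴ) u 0` of `m` into `sp(n+2)`. -/
def iotaBlk {n : ℕ} (u : MatH n) : Matrix (Fin 2 ⊕ Fin n) (Fin 2 ⊕ Fin n) ℍq :=
  Matrix.fromBlocks 0 (-uᴴ) u 0

set_option maxHeartbeats 1000000 in
/-- The Lie bracket and the curvature tensor of `G₂(ℍ^{n+2})`, realized in `sp(n+2)`: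
`⁅ι u, ι v⁆ = fromBlocks (vᴴu − uᴴv) 0 0 (vuᴴ − uvᴴ)` and
`−⁅⁅ι u, ι v⁆, ι w⁆ = ι((uvᴴ − vuᴴ)w + w(vᴴu − uᴴv)) = ι(R(u,v)w)`. -/
theorem stmt3 (n : ℕ) (hn : 2 ≤ n) (u v w : MatH n) :
    iotaBlk u * iotaBlk v - iotaBlk v * iotaBlk u =
      Matrix.fromBlocks (vᴴ * u - uᴴ * v) 0 0 (v * uᴴ - u * vᴴ) ∧
    -((iotaBlk u * iotaBlk v - iotaBlk v * iotaBlk u) * iotaBlk w -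
        iotaBlk w * (iotaBlk u * iotaBlk v - iotaBlk v * iotaBlk u)) =
      iotaBlk ((u * vᴴ - v * uᴴ) * w + w * (vᴴ * u - uᴴ * v)) ∧
    iotaBlk ((u * vᴴ - v * uᴴ) * w + w * (vᴴ * u - uᴴ * v)) = iotaBlk (Rcurv u v w) := by
  refine ⟨?_, ?_, rfl⟩ <;>
  · simp only [iotaBlk, sub_eq_add_neg, Matrix.fromBlocks_multiply,
      Matrix.fromBlocks_neg, Matrix.fromBlocks_add, Matrix.conjTranspose_add,
      Matrix.conjTranspose_mul, Matrix.conjTranspose_neg,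
      Matrix.conjTranspose_conjTranspose, Matrix.fromBlocks_inj]
    refine ⟨?_, ?_, ?_, ?_⟩ <;>
    · simp only [Matrix.mul_zero, Matrix.zero_mul, Matrix.neg_mul, Matrix.mul_neg,
        Matrix.add_mul, Matrix.mul_add, Matrix.smul_mul, Matrix.mul_smul,
        neg_neg, add_zero, zero_add, neg_zero, neg_smul, one_smul, smul_smul, neg_mul, mul_neg]
      try abel

end
end

section
/- For every v ∈ Matrix (Fin n) (Fin 2) ℍ there exist B ∈ Sp(2) and real numbers t₁, t₂ with t₁ ≥ 0, t₂ ≥ 0 and t₁ + t₂ = ‖v‖², such that Bᴴ·(vᴴ·v)·B is the diagonal 2×2 matrix with diagonal entries t₁ and t₂ (regarded as quaternions). In particular, the self-adjoint positive semidefinite matrix vᴴ·v is real-diagonalizable with nonnegative real eigenvalues summing to ‖v‖². -/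
open Matrix

noncomputable section

theorem coe_sm (r : ℝ) : (r : ℍq) = r • 1 := by
  rw [← Quaternion.algebraMap_def, Algebra.algebraMap_eq_smul_one]

theorem fin2_ext {α : Type*} {a b c d a' b' c' d' : α} (h00 : a = a') (h01 : b = b')
    (h10 : c = c') (h11 : d = d') : !![a, b; c, d] = !![a', b'; c', d'] := by
  subst h00 h01 h10 h11; rfl

theorem diag2 (x y : ℍq) : Matrix.diagonal ![x, y] = !![x, 0; 0, y] := by
  apply Matrix.ext; intro i j; fin_cases i <;> fin_cases j <;> simp [Matrix.diagonal]

theorem diag_entry {n : ℕ} (w : MatH n) (j : Fin 2) :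
    (wᴴ * w) j j = ((∑ k, Quaternion.normSq (w k j) : ℝ) : ℍq) := by
  simp [Matrix.mul_apply, Quaternion.star_mul_self, ← Quaternion.algebraMap_def, map_sum]

theorem nonneg_aux (n : ℕ) (v : MatH n) (B : Matrix (Fin 2) (Fin 2) ℍq) (t₁ t₂ : ℝ)
    (h : Bᴴ * (vᴴ * v) * B = Matrix.diagonal ![(t₁ : ℍq), (t₂ : ℍq)]) : 0 ≤ t₁ ∧ 0 ≤ t₂ := by
  have hw : Bᴴ * (vᴴ * v) * B = (v * B)ᴴ * (v * B) := by
    rw [conjTranspose_mul, Matrix.mul_assoc, Matrix.mul_assoc, Matrix.mul_assoc]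
  rw [hw] at h
  have h0 := congrFun (congrFun h 0) 0
  have h1 := congrFun (congrFun h 1) 1
  rw [diag_entry] at h0; rw [diag_entry] at h1
  simp [Matrix.diagonal] at h0 h1
  constructor
  · rw [← h0]; exact Finset.sum_nonneg fun k _ => Quaternion.normSq_nonneg
  · rw [← h1]; exact Finset.sum_nonneg fun k _ => Quaternion.normSq_nonneg

theorem hA_aux (n : ℕ) (v : MatH n) :
    vᴴ * v = !![((∑ k, Quaternion.normSq (v k 0) : ℝ) : ℍq), (vᴴ * v) 0 1;
                star ((vᴴ * v) 0 1), ((∑ k, Quaternion.normSq (v k 1) : ℝ) : ℍq)] := by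
  apply Matrix.ext; intro i j
  fin_cases i <;> fin_cases j <;>
    simp [Matrix.mul_apply, Quaternion.star_mul_self, ← Quaternion.algebraMap_def, map_sum,
      star_sum, StarMul.star_mul]

theorem exists_cs (a d β : ℝ) (hβ : 0 < β) :
    ∃ c s : ℝ, c ^ 2 + s ^ 2 = 1 ∧ (d - a) * (c * s) + (c ^ 2 - s ^ 2) * β = 0 := by
  obtain ⟨δ, hδ⟩ : ∃ δ, δ = (a - d) / 2 := ⟨_, rfl⟩
  obtain ⟨ρ, hρnn, hρ2⟩ : ∃ ρ, 0 ≤ ρ ∧ ρ ^ 2 = δ ^ 2 + β ^ 2 :=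
    ⟨Real.sqrt (δ ^ 2 + β ^ 2), Real.sqrt_nonneg _, Real.sq_sqrt (by positivity)⟩
  have hρδ : 0 < ρ - δ := by nlinarith [sq_nonneg (ρ + δ)]
  obtain ⟨N, hNpos, hN2⟩ : ∃ N, 0 < N ∧ N ^ 2 = β ^ 2 + (ρ - δ) ^ 2 :=
    ⟨Real.sqrt _, Real.sqrt_pos.2 (by positivity), Real.sq_sqrt (by positivity)⟩
  refine ⟨β / N, (ρ - δ) / N, ?_, ?_⟩
  · field_simp; linarith [hN2]
  · have hda : d - a = -2 * δ := by rw [hδ]; ring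
    rw [hda]
    field_simp
    linear_combination (-β) * hρ2


set_option maxHeartbeats 2000000 in
/-- Proposition 4.1(a): for `v ∈ m`, the self-adjoint positive semidefinite endomorphism
`vᴴv` of `ℍ²` is symplectically diagonalizable with nonnegative real eigenvalues `t₁, t₂`
satisfying `t₁ + t₂ = ‖v‖²`. -/
theorem stmt6 (n : ℕ) (hn : 2 ≤ n) (v : MatH n) :
    ∃ B ∈ SpH 2, ∃ t₁ t₂ : ℝ, 0 ≤ t₁ ∧ 0 ≤ t₂ ∧
      t₁ + t₂ = ∑ i, ∑ j, Quaternion.normSq (v i j) ∧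
      Bᴴ * (vᴴ * v) * B = Matrix.diagonal ![(t₁ : ℍq), (t₂ : ℍq)] := by
  obtain ⟨a, ha⟩ : ∃ a, a = ∑ k, Quaternion.normSq (v k 0) := ⟨_, rfl⟩
  obtain ⟨d, hd⟩ : ∃ d, d = ∑ k, Quaternion.normSq (v k 1) := ⟨_, rfl⟩
  obtain ⟨b, hbdef⟩ : ∃ b, b = (vᴴ * v) 0 1 := ⟨_, rfl⟩
  have hA : vᴴ * v = !![(a : ℍq), b; star b, (d : ℍq)] := by
    rw [ha, hd, hbdef]; exact hA_aux n v
  have hsum : a + d = ∑ i, ∑ j, Quaternion.normSq (v i j) := by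
    rw [ha, hd, ← Finset.sum_add_distrib]
    refine Finset.sum_congr rfl fun i _ => ?_
    simp [Fin.sum_univ_two]
  have hann : 0 ≤ a := ha ▸ Finset.sum_nonneg fun _ _ => Quaternion.normSq_nonneg
  have hdnn : 0 ≤ d := hd ▸ Finset.sum_nonneg fun _ _ => Quaternion.normSq_nonneg
  by_cases hb : b = 0
  · refine ⟨1, by simp [SpH], a, d, hann, hdnn, hsum, ?_⟩
    rw [conjTranspose_one, Matrix.one_mul, Matrix.mul_one, hA, hb, diag2]
    simp
  · have hnsq : 0 < Quaternion.normSq b :=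
      lt_of_le_of_ne Quaternion.normSq_nonneg (Ne.symm (Quaternion.normSq_ne_zero.2 hb))
    obtain ⟨β, hβpos, hβ2⟩ : ∃ β, 0 < β ∧ β ^ 2 = Quaternion.normSq b :=
      ⟨Real.sqrt _, Real.sqrt_pos.2 hnsq, Real.sq_sqrt hnsq.le⟩
    obtain ⟨c, s, hcs, hkey⟩ := exists_cs a d β hβpos
    have hbsb : b * star b = Quaternion.normSq b • (1 : ℍq) := by
      rw [Quaternion.self_mul_star, coe_sm]
    have hsbb : star b * b = Quaternion.normSq b • (1 : ℍq) := by
      rw [Quaternion.star_mul_self, coe_sm]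
    obtain ⟨B, hB⟩ : ∃ B : Matrix (Fin 2) (Fin 2) ℍq,
        B = !![c • 1, (-s) • 1; (s * β⁻¹) • star b, (c * β⁻¹) • star b] := ⟨_, rfl⟩
    have hBH : Bᴴ = !![c • 1, (s * β⁻¹) • b; (-s) • 1, (c * β⁻¹) • b] := by
      rw [hB]; apply Matrix.ext; intro i j
      fin_cases i <;> fin_cases j <;> simp [conjTranspose_apply, Quaternion.star_smul]
    have hmain : Bᴴ * (vᴴ * v) * B =
        Matrix.diagonal ![((a * c ^ 2 + 2 * (c * s) * β + d * s ^ 2 : ℝ) : ℍq),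
          ((a * s ^ 2 - 2 * (c * s) * β + d * c ^ 2 : ℝ) : ℍq)] := by
      rw [hA, hBH, hB, diag2, Matrix.mul_fin_two, Matrix.mul_fin_two]
      apply fin2_ext <;>
        · simp only [coe_sm, add_mul, mul_add, smul_mul_assoc, mul_smul_comm, smul_smul, hbsb, hsbb,
            one_mul, mul_one]
          rw [← hβ2]
          match_scalars
          all_goals field_simp
          all_goals try ring
          all_goals try linear_combination (β ^ 3) * hkey
          all_goals try linear_combination (β ^ 2) * hkey
          all_goals try linear_combination β * hkey
          all_goals try linear_combination (β ^ 3) * hcs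
          all_goals try linear_combination (β ^ 2) * hcs
          all_goals try linear_combination β * hcs
          all_goals try linear_combination hkey
          all_goals linear_combination hcs
    obtain ⟨h1, h2⟩ := nonneg_aux n v B _ _ hmain
    refine ⟨B, ?_, _, _, h1, h2, by rw [← hsum]; nlinarith [hcs], hmain⟩
    show Bᴴ * B = 1
    rw [hBH, hB, Matrix.mul_fin_two, Matrix.one_fin_two]
    apply fin2_ext <;>
      · simp only [add_mul, mul_add, smul_mul_assoc, mul_smul_comm, smul_smul, hbsb, hsbb, one_mul, mul_one]
        rw [← hβ2]
        match_scalars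
        all_goals field_simp
        all_goals try ring
        all_goals try linear_combination (β ^ 3) * hkey
        all_goals try linear_combination (β ^ 2) * hkey
        all_goals try linear_combination β * hkey
        all_goals try linear_combination (β ^ 3) * hcs
        all_goals try linear_combination (β ^ 2) * hcs
        all_goals try linear_combination β * hcs
        all_goals linear_combination hcs

end
end

section
/- For every v ∈ m with v ≠ 0 there exist an angle φ ∈ [0, π/4], a matrix A ∈ Sp(2) with A·A = 1 and A ≠ ±1, and matrices H₊, H₋ ∈ m with H₊·A = H₊, H₋·A = −H₋, ‖H₊‖ = ‖H₋‖ = 1 and H₊ᴴ·H₋ = 0, such that v = ‖v‖·(cos(φ)·H₊ + sin(φ)·H₋). (This is the canonical representation of v; φ is the characteristic angle of v.) -/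
open Matrix

noncomputable section

namespace S7
def nf {n : ℕ} (x : MatH n) : ℝ := ∑ i, ∑ j, Quaternion.normSq (x i j)

lemma nf_nonneg {n : ℕ} (x : MatH n) : 0 ≤ nf x := by
  apply Finset.sum_nonneg; intro i _; apply Finset.sum_nonneg; intro j _
  exact Quaternion.normSq_nonneg

lemma hnorm_eq {n : ℕ} (x : MatH n) : hnorm x = Real.sqrt (nf x) := rfl

lemma hnorm_nonneg {n : ℕ} (x : MatH n) : 0 ≤ hnorm x := Real.sqrt_nonneg _

lemma sq_hnorm {n : ℕ} (x : MatH n) : hnorm x ^ 2 = nf x :=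
  Real.sq_sqrt (nf_nonneg x)

lemma coe_sum {ι : Type*} (s : Finset ι) (f : ι → ℝ) :
    ((∑ i ∈ s, f i : ℝ) : ℍq) = ∑ i ∈ s, ((f i : ℝ) : ℍq) :=
  map_sum (algebraMap ℝ ℍq) f s

lemma nf_eq_zero {n : ℕ} {x : MatH n} (h : nf x = 0) : x = 0 := by
  apply Matrix.ext; intro i j
  have h1 : ∀ i ∈ Finset.univ, (0:ℝ) ≤ ∑ j, Quaternion.normSq (x i j) := by
    intro i _; apply Finset.sum_nonneg; intro j _; exact Quaternion.normSq_nonneg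
  have h2 := (Finset.sum_eq_zero_iff_of_nonneg h1).mp h i (Finset.mem_univ i)
  have h3 := (Finset.sum_eq_zero_iff_of_nonneg (fun j _ => Quaternion.normSq_nonneg)).mp h2 j (Finset.mem_univ j)
  rw [Matrix.zero_apply]
  exact Quaternion.normSq_eq_zero.mp h3

lemma hnorm_eq_zero {n : ℕ} {x : MatH n} (h : hnorm x = 0) : x = 0 :=
  nf_eq_zero (by rwa [hnorm_eq, Real.sqrt_eq_zero (nf_nonneg x)] at h)

lemma hnorm_pos {n : ℕ} {x : MatH n} (h : x ≠ 0) : 0 < hnorm x :=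
  lt_of_le_of_ne (hnorm_nonneg x) (fun h' => h (hnorm_eq_zero h'.symm))

lemma nf_smul {n : ℕ} (r : ℝ) (x : MatH n) : nf (r • x) = r ^ 2 * nf x := by
  unfold nf
  rw [Finset.mul_sum]
  congr 1; ext i
  rw [Finset.mul_sum]
  congr 1; ext j
  have : (r • x) i j = (r : ℍq) * x i j := by
    simp [Matrix.smul_apply, Quaternion.coe_mul_eq_smul]
  rw [this, _root_.map_mul, Quaternion.normSq_coe]

lemma hnorm_smul {n : ℕ} {r : ℝ} (hr : 0 ≤ r) (x : MatH n) :
    hnorm (r • x) = r * hnorm x := by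
  rw [hnorm_eq, hnorm_eq, nf_smul, Real.sqrt_mul (sq_nonneg r), Real.sqrt_sq hr]

lemma trace_conj_mul_self {n : ℕ} (x : MatH n) :
    Matrix.trace (xᴴ * x) = ((nf x : ℝ) : ℍq) := by
  unfold nf
  rw [Matrix.trace]
  rw [show ((∑ i, ∑ j, Quaternion.normSq (x i j) : ℝ) : ℍq)
      = ∑ j : Fin 2, ∑ i, ((Quaternion.normSq (x i j) : ℝ) : ℍq) by
    rw [Finset.sum_comm, coe_sum]
    apply Finset.sum_congr rfl; intro j _; rw [coe_sum]]
  apply Finset.sum_congr rfl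
  intro j _
  rw [Matrix.diag_apply, Matrix.mul_apply]
  push_cast
  apply Finset.sum_congr rfl
  intro i _
  rw [Matrix.conjTranspose_apply, Quaternion.star_mul_self]

lemma nf_add_of_orth {n : ℕ} {x y : MatH n} (h : xᴴ * y = 0) :
    nf (x + y) = nf x + nf y := by
  have h' : yᴴ * x = 0 := by
    have := congrArg Matrix.conjTranspose h
    simpa using this
  have e1 : (x + y)ᴴ * (x + y) = xᴴ * x + yᴴ * y := by
    rw [Matrix.conjTranspose_add, Matrix.add_mul, Matrix.mul_add, Matrix.mul_add, h, h']
    abel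
  have e2 := congrArg Matrix.trace e1
  rw [Matrix.trace_add, trace_conj_mul_self, trace_conj_mul_self, trace_conj_mul_self] at e2
  exact_mod_cast congrArg QuaternionAlgebra.re e2


lemma mat2_ext {M N : Matrix (Fin 2) (Fin 2) ℍq} (h00 : M 0 0 = N 0 0)
    (h01 : M 0 1 = N 0 1) (h10 : M 1 0 = N 1 0) (h11 : M 1 1 = N 1 1) : M = N := by
  apply Matrix.ext; intro i j; fin_cases i <;> fin_cases j <;> assumption

lemma coe_smul_one (r : ℝ) : ((r:ℝ):ℍq) = r • (1:ℍq) := by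
  rw [← Quaternion.coe_mul_eq_smul, mul_one]

lemma exists_involution {S : Matrix (Fin 2) (Fin 2) ℍq} (hS : Sᴴ = S) :
    ∃ A : Matrix (Fin 2) (Fin 2) ℍq,
      A * A = 1 ∧ Aᴴ = A ∧ S * A = A * S ∧ A ≠ 1 ∧ A ≠ -1 := by
  have h00 : star (S 0 0) = S 0 0 := by
    conv_lhs => rw [← Matrix.conjTranspose_apply, hS]
  have h11 : star (S 1 1) = S 1 1 := by
    conv_lhs => rw [← Matrix.conjTranspose_apply, hS]
  have h10 : S 1 0 = star (S 0 1) := by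
    conv_lhs => rw [← hS]
    rw [Matrix.conjTranspose_apply]
  set a : ℝ := (S 0 0).re with ha
  set c : ℝ := (S 1 1).re with hc
  set b : ℍq := S 0 1 with hb
  have hS00 : S 0 0 = ((a : ℝ) : ℍq) := Quaternion.star_eq_self.mp h00
  have hS11 : S 1 1 = ((c : ℝ) : ℍq) := Quaternion.star_eq_self.mp h11
  set d : ℝ := (a - c) / 2 with hd
  by_cases hbz : b = 0
  · -- S is diagonal, use A = diag(1,-1)
    have h10' : S 1 0 = 0 := by rw [h10, hbz, star_zero]
    refine ⟨!![1, 0; 0, -1], ?_, ?_, ?_, ?_, ?_⟩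
    · apply mat2_ext <;>
        simp [Matrix.mul_apply, Fin.sum_univ_two, Matrix.one_apply]
    · apply mat2_ext <;>
        simp [Matrix.conjTranspose_apply]
    · apply mat2_ext <;>
        simp [Matrix.mul_apply, Fin.sum_univ_two, ← hb, hbz, h10']
    · intro h
      have h2 := congrFun (congrFun h 1) 1
      simp [Matrix.one_apply] at h2
      have h3 := congrArg QuaternionAlgebra.re h2
      norm_num [Quaternion.re_one] at h3
    · intro h
      have h2 := congrFun (congrFun h 0) 0
      simp [Matrix.one_apply] at h2
      have h3 := congrArg QuaternionAlgebra.re h2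
      norm_num [Quaternion.re_one] at h3
  · -- generic case
    have hnb : 0 < Quaternion.normSq b := by
      rcases lt_or_eq_of_le (Quaternion.normSq_nonneg (a := b)) with h | h
      · exact h
      · exact absurd (Quaternion.normSq_eq_zero.mp h.symm) hbz
    set ρ : ℝ := Real.sqrt (d ^ 2 + Quaternion.normSq b) with hρ
    have hρpos : 0 < ρ := Real.sqrt_pos.mpr (by nlinarith)
    have hρsq : ρ ^ 2 = d ^ 2 + Quaternion.normSq b :=
      Real.sq_sqrt (by nlinarith)
    set T : Matrix (Fin 2) (Fin 2) ℍq := !![((d:ℝ):ℍq), b; star b, -((d:ℝ):ℍq)] with hT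
    set A : Matrix (Fin 2) (Fin 2) ℍq := ρ⁻¹ • T with hA
    have hsms : star b * b = (Quaternion.normSq b : ℝ) • (1:ℍq) := by
      rw [Quaternion.star_mul_self, coe_smul_one]
    have hmss : b * star b = (Quaternion.normSq b : ℝ) • (1:ℍq) := by
      rw [Quaternion.self_mul_star, coe_smul_one]
    have hTT : T * T = (ρ ^ 2 : ℝ) • (1 : Matrix (Fin 2) (Fin 2) ℍq) := by
      rw [hρsq]
      apply mat2_ext <;>
        · simp only [hT, Matrix.of_apply, Matrix.mul_apply, Fin.sum_univ_two, Matrix.smul_apply,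
            Matrix.one_apply, Matrix.cons_val', Matrix.cons_val_zero, Matrix.cons_val_one,
            Matrix.head_cons, Matrix.head_fin_const, Matrix.empty_val',
            Matrix.cons_val_fin_one, mul_neg, neg_mul, neg_neg]
          simp only [hsms, hmss, Quaternion.coe_mul_eq_smul, Quaternion.mul_coe_eq_smul,
            coe_smul_one, smul_mul_assoc, mul_smul_comm, one_mul, mul_one, smul_smul,
            if_true, if_false, reduceIte, smul_zero]
          first
            | module
            | simp
    have hAA : A * A = 1 := by
      rw [hA, Matrix.smul_mul, Matrix.mul_smul, hTT, smul_smul, smul_smul]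
      rw [show ρ⁻¹ * ρ⁻¹ * ρ ^ 2 = 1 by field_simp, one_smul]
    refine ⟨A, hAA, ?_, ?_, ?_, ?_⟩
    · rw [hA]
      apply mat2_ext <;>
        simp [hT, Matrix.conjTranspose_apply, Matrix.smul_apply, Quaternion.star_coe,
          star_smul]
    · -- S * A = A * S
      have hST : S * T = T * S := by
        apply mat2_ext <;>
          · simp only [hT, Matrix.of_apply, Matrix.mul_apply, Fin.sum_univ_two, Matrix.cons_val',
              Matrix.cons_val_zero, Matrix.cons_val_one, Matrix.head_cons,
              Matrix.head_fin_const, Matrix.empty_val', Matrix.cons_val_fin_one,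
              mul_neg, neg_mul]
            simp only [hS00, hS11, h10, ← hb]
            simp only [hsms, hmss, Quaternion.coe_mul_eq_smul, Quaternion.mul_coe_eq_smul,
              coe_smul_one, smul_mul_assoc, mul_smul_comm, one_mul, mul_one, smul_smul]
            match_scalars <;> ring
      rw [hA, Matrix.mul_smul, Matrix.smul_mul, hST]
    · intro h
      have h01 := congrFun (congrFun h 0) 1
      simp [hA, hT, Matrix.smul_apply, Matrix.one_apply] at h01
      rcases h01 with h' | h'
      · exact absurd h' (by positivity)
      · exact hbz h'
    · intro h
      have h01 := congrFun (congrFun h 0) 1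
      simp [hA, hT, Matrix.smul_apply, Matrix.one_apply] at h01
      rcases h01 with h' | h'
      · exact absurd h' (by positivity)
      · exact hbz h'

lemma q_star_smul (r : ℝ) (q : ℍq) : star (r • q) = r • star q := by
  rw [← Quaternion.coe_mul_eq_smul, StarMul.star_mul, Quaternion.star_coe,
    Quaternion.mul_coe_eq_smul]

lemma conjT_smul {n : ℕ} (r : ℝ) (X : MatH n) : (r • X)ᴴ = r • Xᴴ := by
  apply Matrix.ext; intro i j
  rw [Matrix.conjTranspose_apply, Matrix.smul_apply, Matrix.smul_apply,
    Matrix.conjTranspose_apply, q_star_smul]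

lemma exists_orth {n : ℕ} (hn : 2 ≤ n) (w : Fin n → ℍq) :
    ∃ u : Fin n → ℍq, u ≠ 0 ∧ ∑ i, star (w i) * u i = 0 := by
  by_cases hw : w = 0
  · refine ⟨Pi.single (⟨0, by omega⟩ : Fin n) 1, ?_, ?_⟩
    · intro h
      have := congrFun h (⟨0, by omega⟩ : Fin n)
      rw [Pi.single_eq_same] at this
      simp at this
    · apply Finset.sum_eq_zero; intro i _
      rw [hw]; simp
  · set N : ℝ := ∑ i, Quaternion.normSq (w i) with hN
    have hNpos : 0 < N := by
      obtain ⟨i0, hi0⟩ := Function.ne_iff.mp hw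
      apply Finset.sum_pos' (fun i _ => Quaternion.normSq_nonneg)
      refine ⟨i0, Finset.mem_univ i0, ?_⟩
      have := Quaternion.normSq_ne_zero.mpr (by simpa using hi0)
      rcases lt_or_eq_of_le (Quaternion.normSq_nonneg (a := w i0)) with h | h
      · exact h
      · exact absurd h.symm this
    have hNsum : ∑ i, star (w i) * w i = ((N : ℝ) : ℍq) := by
      rw [hN, coe_sum]
      apply Finset.sum_congr rfl; intro i _
      rw [Quaternion.star_mul_self]
    have key : ∀ k : Fin n,
        ∑ i, star (w i) * ((if i = k then (1:ℍq) else 0) - w i * (((N⁻¹:ℝ):ℍq) * star (w k))) = 0 := by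
      intro k
      have e1 : ∀ i : Fin n, star (w i) * ((if i = k then (1:ℍq) else 0) - w i * (((N⁻¹:ℝ):ℍq) * star (w k)))
          = (if i = k then star (w i) else 0) - (star (w i) * w i) * (((N⁻¹:ℝ):ℍq) * star (w k)) := by
        intro i
        rw [mul_sub]
        congr 1
        · split <;> simp
        · rw [mul_assoc]
      simp only [e1]
      rw [Finset.sum_sub_distrib, ← Finset.sum_mul, hNsum, Finset.sum_ite_eq']
      simp only [Finset.mem_univ, if_true]
      rw [← mul_assoc, ← Quaternion.coe_mul, mul_inv_cancel₀ hNpos.ne', Quaternion.coe_one,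
        one_mul, sub_self]
    set k0 : Fin n := ⟨0, by omega⟩ with hk0
    set k1 : Fin n := ⟨1, by omega⟩ with hk1
    have hk01 : k0 ≠ k1 := by simp [hk0, hk1]
    set u0 : Fin n → ℍq := fun i => (if i = k0 then (1:ℍq) else 0) - w i * (((N⁻¹:ℝ):ℍq) * star (w k0)) with hu0
    set u1 : Fin n → ℍq := fun i => (if i = k1 then (1:ℍq) else 0) - w i * (((N⁻¹:ℝ):ℍq) * star (w k1)) with hu1
    by_cases h0 : u0 = 0
    · refine ⟨u1, ?_, key k1⟩
      intro h1
      have e0 : ∀ i, (if i = k0 then (1:ℍq) else 0) = w i * (((N⁻¹:ℝ):ℍq) * star (w k0)) := by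
        intro i
        have := congrFun h0 i
        rw [hu0] at this
        simpa [sub_eq_zero] using this
      have e1 : ∀ i, (if i = k1 then (1:ℍq) else 0) = w i * (((N⁻¹:ℝ):ℍq) * star (w k1)) := by
        intro i
        have := congrFun h1 i
        rw [hu1] at this
        simpa [sub_eq_zero] using this
      have ha := e0 k1   -- 0 = w k1 * c0
      rw [if_neg (Ne.symm hk01)] at ha
      have hb := e1 k1
      rw [if_pos rfl] at hb
      have hwk1 : w k1 ≠ 0 := by
        intro h
        rw [h, zero_mul] at hb
        exact one_ne_zero hb
      have hc0 : (((N⁻¹:ℝ):ℍq) * star (w k0)) = 0 := by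
        rcases mul_eq_zero.mp ha.symm with h | h
        · exact absurd h hwk1
        · exact h
      have hcc := e0 k0
      rw [if_pos rfl, hc0, mul_zero] at hcc
      exact one_ne_zero hcc
    · exact ⟨u0, h0, key k0⟩

lemma exists_Hminus {n : ℕ} (hn : 2 ≤ n) {v : MatH n} {A : Matrix (Fin 2) (Fin 2) ℍq}
    (hAA : A * A = 1) (hAh : Aᴴ = A) (hA1 : A ≠ 1) (hvA : v * A = v) (hv : v ≠ 0) :
    ∃ H : MatH n, H * A = -H ∧ hnorm H = 1 ∧ vᴴ * H = 0 := by
  -- find a nonzero entry of A - 1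
  obtain ⟨i0, j0, hij⟩ : ∃ i j, (A - 1) i j ≠ 0 := by
    by_contra h
    push_neg at h
    exact hA1 (by rw [← sub_eq_zero]; exact Matrix.ext fun i j => h i j)
  set e : Fin 2 → ℍq := fun k => (A - 1) k j0 with he
  have hei0 : e i0 ≠ 0 := hij
  -- A acts as -1 on e
  have hAe : ∀ i, ∑ k, A i k * e k = -e i := by
    have hm : A * (A - 1) = -(A - 1) := by
      rw [Matrix.mul_sub, hAA, Matrix.mul_one, neg_sub]
    intro i
    have h2 := congrFun (congrFun hm i) j0
    simpa [Matrix.mul_apply, Matrix.sub_apply, Matrix.neg_apply, he] using h2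
  -- v annihilates e
  have hve : ∀ i, v i 0 * e 0 + v i 1 * e 1 = 0 := by
    have hm : v * (A - 1) = 0 := by
      rw [Matrix.mul_sub, hvA, Matrix.mul_one, sub_self]
    intro i
    have h2 := congrFun (congrFun hm i) j0
    simpa [Matrix.mul_apply, Fin.sum_univ_two, he] using h2
  -- columns of v are right multiples of a single vector w
  obtain ⟨w, qf, hwq⟩ : ∃ (w : Fin n → ℍq) (qf : Fin 2 → ℍq), ∀ i j, v i j = w i * qf j := by
    by_cases h0 : e 0 = 0
    · have h1 : e 1 ≠ 0 := by
        intro h1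
        apply hei0
        fin_cases i0 <;> assumption
      refine ⟨fun i => v i 0, ![1, 0], ?_⟩
      intro i j
      have hv1 : v i 1 = 0 := by
        have h2 := hve i
        rw [h0, mul_zero, zero_add] at h2
        rcases mul_eq_zero.mp h2 with h | h
        · exact h
        · exact absurd h h1
      fin_cases j <;> simp [hv1]
    · refine ⟨fun i => v i 1, ![-(e 1 * (e 0)⁻¹), 1], ?_⟩
      intro i j
      have h2 : v i 0 * e 0 = -(v i 1 * e 1) := eq_neg_of_add_eq_zero_left (hve i)
      have h3 : v i 0 = -(v i 1 * e 1) * (e 0)⁻¹ := by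
        rw [← h2, mul_assoc, mul_inv_cancel₀ h0, mul_one]
      fin_cases j <;> simp [h3, mul_assoc]
  -- a nonzero vector orthogonal to w
  obtain ⟨u, hu0, hu⟩ := exists_orth hn w
  obtain ⟨iu, hiu⟩ := Function.ne_iff.mp hu0
  have hiu' : u iu ≠ 0 := by simpa using hiu
  set H0 : MatH n := Matrix.of fun i j => u i * star (e j) with hH0
  have hH0A : H0 * A = -H0 := by
    apply Matrix.ext; intro i j
    rw [Matrix.mul_apply, Matrix.neg_apply]
    have h2 : ∀ k, H0 i k * A k j = u i * (star (e k) * A k j) := by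
      intro k
      rw [hH0, Matrix.of_apply, mul_assoc]
    simp only [h2]
    rw [← Finset.mul_sum]
    have h3 : ∑ k, star (e k) * A k j = -star (e j) := by
      have h4 : ∑ k, star (e k) * A k j = star (∑ k, A j k * e k) := by
        rw [star_sum]
        apply Finset.sum_congr rfl; intro k _
        rw [StarMul.star_mul]
        congr 1
        conv_lhs => rw [← hAh]
        rw [Matrix.conjTranspose_apply]
      rw [h4, hAe j, star_neg]
    rw [h3, mul_neg, hH0, Matrix.of_apply]
  have hH0ne : H0 ≠ 0 := by
    intro h
    have h2 := congrFun (congrFun h iu) i0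
    rw [hH0, Matrix.of_apply, Matrix.zero_apply] at h2
    exact (mul_ne_zero hiu' (star_ne_zero.mpr hei0)) h2
  have hvH0 : vᴴ * H0 = 0 := by
    apply Matrix.ext; intro j j'
    rw [Matrix.mul_apply, Matrix.zero_apply]
    have h2 : ∀ i, vᴴ j i * H0 i j' = star (qf j) * (star (w i) * u i * star (e j')) := by
      intro i
      rw [Matrix.conjTranspose_apply, hH0, Matrix.of_apply, hwq i j, StarMul.star_mul]
      simp [mul_assoc]
    simp only [h2]
    rw [← Finset.mul_sum]
    have h3 : ∑ i, star (w i) * u i * star (e j') = (∑ i, star (w i) * u i) * star (e j') := by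
      rw [Finset.sum_mul]
    rw [h3, hu, zero_mul, mul_zero]
  refine ⟨(hnorm H0)⁻¹ • H0, ?_, ?_, ?_⟩
  · rw [Matrix.smul_mul, hH0A, smul_neg]
  · rw [hnorm_smul (inv_nonneg.mpr (hnorm_nonneg H0)) H0, inv_mul_cancel₀ (hnorm_pos hH0ne).ne']
  · rw [Matrix.mul_smul, hvH0, smul_zero]

set_option maxHeartbeats 2000000 in
lemma key {n : ℕ} (hn : 2 ≤ n) (v : MatH n) (hv : v ≠ 0) (A : Matrix (Fin 2) (Fin 2) ℍq)
    (hAA : A * A = 1) (hAh : Aᴴ = A) (hcomm : A * (vᴴ * v) = (vᴴ * v) * A)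
    (hA1 : A ≠ 1) (hAm1 : A ≠ -1)
    (hge : hnorm ((2:ℝ)⁻¹ • (v - v * A)) ≤ hnorm ((2:ℝ)⁻¹ • (v + v * A))) :
    ∃ φ : ℝ, 0 ≤ φ ∧ φ ≤ Real.pi / 4 ∧
      ∃ A : Matrix (Fin 2) (Fin 2) ℍq, A ∈ SpH 2 ∧ A * A = 1 ∧ A ≠ 1 ∧ A ≠ -1 ∧
        ∃ Hplus Hminus : MatH n,
          Hplus * A = Hplus ∧ Hminus * A = -Hminus ∧
          hnorm Hplus = 1 ∧ hnorm Hminus = 1 ∧ Hplusᴴ * Hminus = 0 ∧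
          v = hnorm v • (Real.cos φ • Hplus + Real.sin φ • Hminus) := by
  have hSp : A ∈ SpH 2 := by
    show Aᴴ * A = 1
    rw [hAh, hAA]
  set P : MatH n := (2:ℝ)⁻¹ • (v + v * A) with hP
  set M : MatH n := (2:ℝ)⁻¹ • (v - v * A) with hM
  have hsum : P + M = v := by
    rw [hP, hM]
    module
  have hPA : P * A = P := by
    rw [hP, Matrix.smul_mul]
    congr 1
    rw [Matrix.add_mul, Matrix.mul_assoc, hAA, Matrix.mul_one]
    exact add_comm _ _
  have hMA : M * A = -M := by
    rw [hM, Matrix.smul_mul]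
    rw [Matrix.sub_mul, Matrix.mul_assoc, hAA, Matrix.mul_one, ← neg_sub v (v * A), smul_neg]
  have hPh : Pᴴ = (2:ℝ)⁻¹ • (vᴴ + A * vᴴ) := by
    rw [hP, conjT_smul, Matrix.conjTranspose_add, Matrix.conjTranspose_mul, hAh]
  have horth : Pᴴ * M = 0 := by
    rw [hPh, hM, Matrix.smul_mul, Matrix.mul_smul, smul_smul]
    have ha1 : vᴴ * (v * A) = (vᴴ * v) * A := (Matrix.mul_assoc _ _ _).symm
    have ha2 : A * (vᴴ * (v * A)) = vᴴ * v := by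
      rw [ha1, ← Matrix.mul_assoc, hcomm, Matrix.mul_assoc, hAA, Matrix.mul_one]
    have e1 : (vᴴ + A * vᴴ) * (v - v * A)
        = vᴴ * v - vᴴ * (v * A) + (A * (vᴴ * v) - A * (vᴴ * (v * A))) := by
      simp only [Matrix.add_mul, Matrix.mul_sub, Matrix.mul_assoc]
      abel
    rw [e1, ha2, ha1, hcomm]
    rw [show vᴴ * v - vᴴ * v * A + (vᴴ * v * A - vᴴ * v) = 0 by abel, smul_zero]
  have hnfv : nf v = nf P + nf M := by
    rw [← hsum]
    exact nf_add_of_orth horth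
  have hvpos : 0 < hnorm v := hnorm_pos hv
  set α : ℝ := hnorm P with hα
  set β : ℝ := hnorm M with hβ
  have hsq : α ^ 2 + β ^ 2 = hnorm v ^ 2 := by
    rw [hα, hβ, sq_hnorm, sq_hnorm, sq_hnorm, hnfv]
  have hβα : β ≤ α := hge
  have hβ0 : 0 ≤ β := hnorm_nonneg M
  have hαpos : 0 < α := by nlinarith
  by_cases hM0 : M = 0
  · -- degenerate case
    have hPv : P = v := by rw [← hsum, hM0, add_zero]
    have hvA : v * A = v := by rw [← hPv]; exact hPA
    obtain ⟨H, hHA, hH1, hvH⟩ := exists_Hminus hn hAA hAh hA1 hvA hv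
    refine ⟨0, le_refl 0, div_nonneg Real.pi_pos.le (by norm_num), A, hSp, hAA, hA1, hAm1,
      (hnorm v)⁻¹ • v, H, ?_, hHA, ?_, hH1, ?_, ?_⟩
    · rw [Matrix.smul_mul, hvA]
    · rw [hnorm_smul (inv_nonneg.mpr hvpos.le) v, inv_mul_cancel₀ hvpos.ne']
    · rw [conjT_smul, Matrix.smul_mul, hvH, smul_zero]
    · rw [Real.cos_zero, Real.sin_zero, one_smul, zero_smul, add_zero, smul_smul,
        mul_inv_cancel₀ hvpos.ne', one_smul]
  · -- generic case
    have hβpos : 0 < β := hnorm_pos hM0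
    set φ : ℝ := Real.arctan (β / α) with hφ
    have h0φ : 0 ≤ φ := by
      rw [hφ, ← Real.arctan_zero]
      exact Real.arctan_strictMono.monotone (by positivity)
    have hφ4 : φ ≤ Real.pi / 4 := by
      rw [hφ, ← Real.arctan_one]
      exact Real.arctan_strictMono.monotone (by rw [div_le_one hαpos]; exact hβα)
    have hsqrt : Real.sqrt (1 + (β / α) ^ 2) = hnorm v / α := by
      rw [show 1 + (β / α) ^ 2 = (hnorm v / α) ^ 2 by field_simp; nlinarith]
      exact Real.sqrt_sq (by positivity)
    have hcos : Real.cos φ = α / hnorm v := by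
      rw [hφ, Real.cos_arctan, hsqrt, one_div, inv_div]
    have hsin : Real.sin φ = β / hnorm v := by
      rw [hφ, Real.sin_arctan, hsqrt]
      field_simp
    refine ⟨φ, h0φ, hφ4, A, hSp, hAA, hA1, hAm1, α⁻¹ • P, β⁻¹ • M, ?_, ?_, ?_, ?_, ?_, ?_⟩
    · rw [Matrix.smul_mul, hPA]
    · rw [Matrix.smul_mul, hMA, smul_neg]
    · rw [hnorm_smul (inv_nonneg.mpr hαpos.le) P, inv_mul_cancel₀ hαpos.ne']
    · rw [hnorm_smul (inv_nonneg.mpr hβpos.le) M, inv_mul_cancel₀ hβpos.ne']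
    · rw [conjT_smul, Matrix.smul_mul, Matrix.mul_smul, horth, smul_zero, smul_zero]
    · have eP : Real.cos φ • (α⁻¹ • P) = (hnorm v)⁻¹ • P := by
        rw [hcos, smul_smul, div_eq_mul_inv]
        congr 1
        field_simp
      have eM : Real.sin φ • (β⁻¹ • M) = (hnorm v)⁻¹ • M := by
        rw [hsin, smul_smul, div_eq_mul_inv]
        congr 1
        field_simp
      rw [eP, eM, ← smul_add, smul_smul, mul_inv_cancel₀ hvpos.ne', one_smul, hsum]

end S7


set_option maxHeartbeats 1000000 in
/-- Proposition 4.1(b): canonical representation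
`v = ‖v‖·(cos(φ)·H₊ + sin(φ)·H₋)` of a nonzero tangent vector of `G₂(ℍ^{n+2})`,
where `φ ∈ [0, π/4]` is the characteristic angle of `v`. -/
theorem stmt7 (n : ℕ) (hn : 2 ≤ n) (v : MatH n) (hv : v ≠ 0) :
    ∃ φ : ℝ, 0 ≤ φ ∧ φ ≤ Real.pi / 4 ∧
      ∃ A : Matrix (Fin 2) (Fin 2) ℍq, A ∈ SpH 2 ∧ A * A = 1 ∧ A ≠ 1 ∧ A ≠ -1 ∧
        ∃ Hplus Hminus : MatH n,
          Hplus * A = Hplus ∧ Hminus * A = -Hminus ∧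
          hnorm Hplus = 1 ∧ hnorm Hminus = 1 ∧ Hplusᴴ * Hminus = 0 ∧
          v = hnorm v • (Real.cos φ • Hplus + Real.sin φ • Hminus) := by
  have hS : (vᴴ * v)ᴴ = vᴴ * v := by
    rw [Matrix.conjTranspose_mul, Matrix.conjTranspose_conjTranspose]
  obtain ⟨A, hAA, hAh, hcommSA, hA1, hAm1⟩ := S7.exists_involution hS
  rcases le_total (hnorm ((2:ℝ)⁻¹ • (v - v * A))) (hnorm ((2:ℝ)⁻¹ • (v + v * A))) with h | h
  · exact S7.key hn v hv A hAA hAh hcommSA.symm hA1 hAm1 h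
  · have h1 : (-A) * (-A) = 1 := by rw [Matrix.neg_mul, Matrix.mul_neg, neg_neg, hAA]
    have h2 : (-A)ᴴ = -A := by rw [Matrix.conjTranspose_neg, hAh]
    have h3 : (-A) * (vᴴ * v) = (vᴴ * v) * (-A) := by
      rw [Matrix.neg_mul, Matrix.mul_neg, hcommSA]
    have h4 : (-A) ≠ 1 := by
      intro hc
      exact hAm1 (by rw [← neg_neg A, hc])
    have h5 : (-A) ≠ -1 := by
      intro hc
      exact hA1 (by rw [← neg_neg A, hc, neg_neg])
    have h6 : hnorm ((2:ℝ)⁻¹ • (v - v * (-A))) ≤ hnorm ((2:ℝ)⁻¹ • (v + v * (-A))) := by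
      rw [Matrix.mul_neg, sub_neg_eq_add]
      rw [show v + -(v * A) = v - v * A by abel]
      exact h
    exact S7.key hn v hv (-A) h1 h2 h3 h4 h5 h6

end
end

section
/- Let v, ṽ ∈ Matrix (Fin n) (Fin 2) ℍ with ‖v‖ = ‖ṽ‖ = 1. Then there exist B₁ ∈ Sp(2) and B₂ ∈ Sp(n) with ṽ = B₂·v·B₁ᴴ if and only if there exists B ∈ Sp(2) with ṽᴴ·ṽ = B·(vᴴ·v)·Bᴴ. (Hence the orbits of the isotropy action of Sp(2) × Sp(n) on the unit sphere of m are exactly the sets of unit vectors with a fixed characteristic angle.) -/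
open Matrix

noncomputable section
namespace Stmt8Aux
open Matrix

variable {n : ℕ}

lemma coe_sum {ι : Type*} [DecidableEq ι] (s : Finset ι) (f : ι → ℝ) :
    ((∑ i ∈ s, f i : ℝ) : ℍq) = ∑ i ∈ s, ((f i : ℝ) : ℍq) := by
  induction s using Finset.induction with
  | empty => simp
  | @insert _ _ h ih => rw [Finset.sum_insert h, Finset.sum_insert h, Quaternion.coe_add, ih]

/-! ### Basic facts about `vip` -/

lemma vip_star (a b : Fin n → ℍq) : star (vip a b) = vip b a := by
  simp [vip, StarMul.star_mul]

lemma vip_rmul_right (a b : Fin n → ℍq) (c : ℍq) :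
    vip a (rightMulV b c) = vip a b * c := by
  simp [vip, rightMulV, Finset.sum_mul, mul_assoc]

lemma vip_rmul_left (a b : Fin n → ℍq) (c : ℍq) :
    vip (rightMulV a c) b = star c * vip a b := by
  simp [vip, rightMulV, Finset.mul_sum, StarMul.star_mul, mul_assoc]

lemma vip_add_right (a b c : Fin n → ℍq) : vip a (b + c) = vip a b + vip a c := by
  simp [vip, mul_add, Finset.sum_add_distrib]

lemma vip_sub_right (a b c : Fin n → ℍq) : vip a (b - c) = vip a b - vip a c := by
  simp [vip, mul_sub, Finset.sum_sub_distrib]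

lemma vip_sub_left (a b c : Fin n → ℍq) : vip (a - b) c = vip a c - vip b c := by
  simp [vip, sub_mul, Finset.sum_sub_distrib]

lemma vip_self_coe (a : Fin n → ℍq) :
    vip a a = ((∑ i, Quaternion.normSq (a i) : ℝ) : ℍq) := by
  rw [coe_sum]
  simp [vip, Quaternion.star_mul_self]

lemma vip_self_pos {a : Fin n → ℍq} (ha : a ≠ 0) :
    0 < ∑ i, Quaternion.normSq (a i) := by
  have h1 : ∃ i, a i ≠ 0 := by
    by_contra h
    push_neg at h
    exact ha (funext fun i => h i)
  obtain ⟨i, hi⟩ := h1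
  have : 0 < Quaternion.normSq (a i) := by
    have := Quaternion.normSq_ne_zero.2 hi
    have h2 := Quaternion.normSq_nonneg (a := a i)
    exact lt_of_le_of_ne h2 (Ne.symm this)
  exact Finset.sum_pos' (fun j _ => Quaternion.normSq_nonneg) ⟨i, Finset.mem_univ i, this⟩

lemma eq_zero_of_vip_self_eq_zero {a : Fin n → ℍq} (h : vip a a = 0) : a = 0 := by
  by_contra ha
  have := vip_self_pos ha
  rw [vip_self_coe] at h
  have h0 : (∑ i, Quaternion.normSq (a i) : ℝ) = 0 := by
    have h2 : ((∑ i, Quaternion.normSq (a i) : ℝ) : ℍq) = ((0 : ℝ) : ℍq) := by simpa using h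
    exact Quaternion.coe_injective h2
  linarith

/-! ### `rightMulV` -/

lemma rmul_rmul (a : Fin n → ℍq) (c d : ℍq) :
    rightMulV (rightMulV a c) d = rightMulV a (c * d) := by
  funext i; simp [rightMulV, mul_assoc]

lemma rmul_coe_coe (a : Fin n → ℍq) {s t : ℝ} (h : s * t = 1) :
    rightMulV (rightMulV a (s : ℍq)) (t : ℍq) = a := by
  rw [rmul_rmul]
  have : ((s : ℍq) * t) = ((s * t : ℝ) : ℍq) := by norm_cast
  rw [this, h]
  funext i; simp [rightMulV]

lemma mulVec_rmul (B : Matrix (Fin n) (Fin n) ℍq) (x : Fin n → ℍq) (c : ℍq) :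
    B *ᵥ rightMulV x c = rightMulV (B *ᵥ x) c := by
  funext i
  simp [Matrix.mulVec, dotProduct, rightMulV, Finset.sum_mul, mul_assoc]

/-! ### Orthonormal families -/

def Orth {k : ℕ} (u : Fin k → (Fin n → ℍq)) : Prop :=
  ∀ i j, vip (u i) (u j) = if i = j then 1 else 0

/-- The `vecMul` linear map. -/
def vmLin (U : Matrix (Fin n) (Fin k) ℍq) : (Fin n → ℍq) →ₗ[ℍq] (Fin k → ℍq) where
  toFun y := y ᵥ* U
  map_add' x y := by
    funext j
    simp [Matrix.vecMul, dotProduct, add_mul, Finset.sum_add_distrib]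
  map_smul' c x := by
    funext j
    simp [Matrix.vecMul, dotProduct, Finset.mul_sum, smul_eq_mul, mul_assoc]

lemma exists_orth_unit {k : ℕ} (hk : k < n) (u : Fin k → (Fin n → ℍq)) :
    ∃ x : Fin n → ℍq, vip x x = 1 ∧ ∀ i, vip (u i) x = 0 := by
  classical
  set U : Matrix (Fin n) (Fin k) ℍq := fun a i => u i a with hU
  have hni : ¬ Function.Injective (vmLin U) := by
    intro hinj
    have h1 := LinearMap.finrank_le_finrank_of_injective hinj
    rw [Module.finrank_pi, Module.finrank_pi] at h1
    simp at h1
    omega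
  have hker : LinearMap.ker (vmLin U) ≠ ⊥ := fun hb => hni (LinearMap.ker_eq_bot.mp hb)
  obtain ⟨y, hy, hy0⟩ := (Submodule.ne_bot_iff _).mp hker
  have hy0' := hy0
  have hyk : vmLin U y = 0 := hy
  rename' hy0' => hy0
  set x₀ : Fin n → ℍq := fun i => star (y i) with hx₀
  have hx₀0 : x₀ ≠ 0 := by
    intro h
    apply hy0
    funext i
    have := congrFun h i
    simpa [hx₀, star_eq_zero] using this
  have horth : ∀ i, vip (u i) x₀ = 0 := by
    intro i
    have h1 : (y ᵥ* U) i = 0 := congrFun hyk i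
    have h2 : vip (u i) x₀ = star ((y ᵥ* U) i) := by
      simp [vip, hx₀, Matrix.vecMul, dotProduct, hU, star_sum, StarMul.star_mul]
    rw [h2, h1, star_zero]
  set r : ℝ := ∑ i, Quaternion.normSq (x₀ i) with hr
  have hrpos : 0 < r := vip_self_pos hx₀0
  set t : ℝ := (Real.sqrt r)⁻¹ with ht
  refine ⟨rightMulV x₀ (t : ℍq), ?_, ?_⟩
  · rw [vip_rmul_right, vip_rmul_left, Quaternion.star_coe, vip_self_coe, ← hr]
    have : ((t : ℍq) * r) * t = ((t * r * t : ℝ) : ℍq) := by norm_cast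
    rw [this]
    have hs : Real.sqrt r ≠ 0 := by positivity
    have h2 : t * r * t = 1 := by
      have h3 : r = Real.sqrt r * Real.sqrt r := (Real.mul_self_sqrt hrpos.le).symm
      rw [ht, h3]
      field_simp
      rw [Real.sqrt_sq (Real.sqrt_nonneg _)]
    rw [h2]; norm_num
  · intro i
    rw [vip_rmul_right, horth i, zero_mul]

/-- Extend an orthonormal family of size `k ≤ n` to size `n`. -/
lemma orth_extend_aux (d : ℕ) : ∀ (k : ℕ) (h : k ≤ n), n - k ≤ d →
    ∀ u : Fin k → (Fin n → ℍq), Orth u →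
    ∃ U : Fin n → (Fin n → ℍq), Orth U ∧ ∀ i : Fin k, U (Fin.castLE h i) = u i := by
  induction d with
  | zero =>
    intro k h hd u hu
    have hk : k = n := by omega
    subst hk
    exact ⟨u, hu, fun i => by rw [show Fin.castLE h i = i from Fin.ext rfl]⟩
  | succ d ih =>
    intro k h hd u hu
    by_cases hk : k = n
    · subst hk
      exact ⟨u, hu, fun i => by rw [show Fin.castLE h i = i from Fin.ext rfl]⟩
    · have hkn : k < n := lt_of_le_of_ne h hk
      obtain ⟨x, hx1, hx2⟩ := exists_orth_unit hkn u
      set u' : Fin (k + 1) → (Fin n → ℍq) := Fin.snoc u x with hu'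
      have horth' : Orth u' := by
        intro i j
        refine Fin.lastCases ?_ ?_ i <;> [skip; intro i'] <;>
          refine Fin.lastCases ?_ ?_ j <;> try intro j'
        · simp [hu', hx1]
        · -- i = last, j = castSucc j'
          have h1 : vip x (u j') = 0 := by
            rw [← vip_star, hx2 j', star_zero]
          simp [hu', h1, (Fin.castSucc_lt_last j').ne']
        · simp [hu', hx2 i', (Fin.castSucc_lt_last i').ne]
        · simp only [hu', Fin.snoc_castSucc]
          rw [hu i' j']
          simp [Fin.castSucc_inj]
      obtain ⟨U, hU, hres⟩ := ih (k + 1) (by omega) (by omega) u' horth'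
      refine ⟨U, hU, fun i => ?_⟩
      have h1 : Fin.castLE h i = Fin.castLE (show k + 1 ≤ n by omega) (Fin.castSucc i) := by
        ext; simp
      rw [h1, hres (Fin.castSucc i)]
      simp [hu']

lemma orth_extend {k : ℕ} (h : k ≤ n) (u : Fin k → (Fin n → ℍq)) (hu : Orth u) :
    ∃ U : Fin n → (Fin n → ℍq), Orth U ∧ ∀ i : Fin k, U (Fin.castLE h i) = u i :=
  orth_extend_aux (n - k) k h le_rfl u hu

/-! ### Unitarity -/

lemma mul_eq_one_commH {A B : Matrix (Fin n) (Fin n) ℍq} (h : A * B = 1) : B * A = 1 := by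
  classical
  have hcomp : ∀ (M N : Matrix (Fin n) (Fin n) ℍq) (y : Fin n → ℍq),
      vmLin (M * N) y = vmLin N (vmLin M y) := by
    intro M N y
    simp [vmLin, Matrix.vecMul_vecMul]
  have hid : ∀ y : Fin n → ℍq, vmLin (1 : Matrix (Fin n) (Fin n) ℍq) y = y := by
    intro y; simp [vmLin, Matrix.vecMul_one]
  have hinj : Function.Injective (vmLin A) := by
    intro y z hyz
    have h1 : vmLin B (vmLin A y) = vmLin B (vmLin A z) := by rw [hyz]
    rw [← hcomp, ← hcomp, h] at h1
    rw [← hid y, ← hid z]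
    exact h1
  have hsurj : Function.Surjective (vmLin A) := LinearMap.injective_iff_surjective.mp hinj
  have key : ∀ y : Fin n → ℍq, vmLin (B * A) y = y := by
    intro y
    obtain ⟨z, hz⟩ := hsurj y
    rw [hcomp, ← hz, ← hcomp, ← hcomp]
    rw [show A * (B * A) = (A * B) * A by rw [Matrix.mul_assoc], h, Matrix.one_mul]
  refine Matrix.ext fun i j => ?_
  have := congrFun (key (Pi.single i 1)) j
  simpa [vmLin, Matrix.single_one_vecMul, Matrix.one_apply, Pi.single_apply, eq_comm] using this

/-- Map one orthonormal family to another by a unitary matrix. -/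
lemma onb_map {k : ℕ} (h : k ≤ n) (u u' : Fin k → (Fin n → ℍq))
    (hu : Orth u) (hu' : Orth u') :
    ∃ B : Matrix (Fin n) (Fin n) ℍq, Bᴴ * B = 1 ∧ ∀ i, B *ᵥ u i = u' i := by
  classical
  obtain ⟨U, hU, hres⟩ := orth_extend h u hu
  obtain ⟨U', hU', hres'⟩ := orth_extend h u' hu'
  set MU : Matrix (Fin n) (Fin n) ℍq := fun a i => U i a with hMU
  set MU' : Matrix (Fin n) (Fin n) ℍq := fun a i => U' i a with hMU'
  have hMUu : MUᴴ * MU = 1 := by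
    refine Matrix.ext fun i j => ?_
    simp only [Matrix.mul_apply, Matrix.conjTranspose_apply, hMU, Matrix.one_apply]
    exact hU i j
  have hMU'u : MU'ᴴ * MU' = 1 := by
    refine Matrix.ext fun i j => ?_
    simp only [Matrix.mul_apply, Matrix.conjTranspose_apply, hMU', Matrix.one_apply]
    exact hU' i j
  have hMUr : MU * MUᴴ = 1 := mul_eq_one_commH hMUu
  refine ⟨MU' * MUᴴ, ?_, ?_⟩
  · rw [Matrix.conjTranspose_mul, Matrix.conjTranspose_conjTranspose]
    calc MU * MU'ᴴ * (MU' * MUᴴ) = MU * (MU'ᴴ * MU') * MUᴴ := by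
          rw [Matrix.mul_assoc, Matrix.mul_assoc, Matrix.mul_assoc]
      _ = MU * MUᴴ := by rw [hMU'u, Matrix.mul_one]
      _ = 1 := hMUr
  · intro i
    have h1 : MUᴴ *ᵥ U (Fin.castLE h i) = Pi.single (Fin.castLE h i) 1 := by
      funext j
      have : (MUᴴ *ᵥ U (Fin.castLE h i)) j = vip (U j) (U (Fin.castLE h i)) := by
        simp [Matrix.mulVec, dotProduct, Matrix.conjTranspose_apply, vip, hMU]
        rfl
      rw [this, hU j (Fin.castLE h i), Pi.single_apply]
    have h2 : MU' *ᵥ Pi.single (Fin.castLE h i) 1 = U' (Fin.castLE h i) := by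
      rw [Matrix.mulVec_single_one]
      funext a
      simp [hMU', Matrix.transpose_apply, Matrix.col]
      rfl
    rw [← hres i, ← Matrix.mulVec_mulVec, h1, h2]
    exact hres' i

/-! ### Normalization -/

lemma orth_single {a : Fin n → ℍq} (ha : a ≠ 0) :
    ∃ (R : ℝ), 0 < R ∧ vip a a = (R : ℍq) ∧
      Orth (fun _ : Fin 1 => rightMulV a (((Real.sqrt R)⁻¹ : ℝ) : ℍq)) := by
  refine ⟨∑ i, Quaternion.normSq (a i), vip_self_pos ha, vip_self_coe a, ?_⟩
  intro i j
  have hij : i = j := Subsingleton.elim i j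
  subst hij
  simp only [if_pos rfl]
  set R := ∑ i, Quaternion.normSq (a i) with hR
  have hRpos : 0 < R := vip_self_pos ha
  rw [vip_rmul_right, vip_rmul_left, Quaternion.star_coe, vip_self_coe, ← hR]
  have : (((Real.sqrt R)⁻¹ : ℝ) : ℍq) * R * ((Real.sqrt R)⁻¹ : ℝ) =
      (((Real.sqrt R)⁻¹ * R * (Real.sqrt R)⁻¹ : ℝ) : ℍq) := by norm_cast
  rw [this]
  have hs : Real.sqrt R ≠ 0 := by positivity
  have h2 : (Real.sqrt R)⁻¹ * R * (Real.sqrt R)⁻¹ = 1 := by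
    have h3 : R = Real.sqrt R * Real.sqrt R := (Real.mul_self_sqrt hRpos.le).symm
    rw [h3]
    field_simp
    rw [Real.sqrt_sq (Real.sqrt_nonneg _)]
  rw [h2]; norm_num

lemma t_norm {R : ℝ} (hR : 0 < R) :
    (((Real.sqrt R)⁻¹ : ℝ) : ℍq) * ((R : ℝ) : ℍq) * (((Real.sqrt R)⁻¹ : ℝ) : ℍq) = 1 := by
  have h1 : ((((Real.sqrt R)⁻¹ : ℝ) : ℍq) * R) * ((Real.sqrt R)⁻¹ : ℝ)
      = (((Real.sqrt R)⁻¹ * R * (Real.sqrt R)⁻¹ : ℝ) : ℍq) := by norm_cast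
  rw [h1]
  have h3 : R = Real.sqrt R * Real.sqrt R := (Real.mul_self_sqrt hR.le).symm
  have hs : Real.sqrt R ≠ 0 := by positivity
  have h2 : (Real.sqrt R)⁻¹ * R * (Real.sqrt R)⁻¹ = 1 := by rw [h3]; field_simp; rw [Real.sqrt_sq (Real.sqrt_nonneg _)]
  rw [h2]; norm_num

/-! ### Mapping pairs with equal Gram matrices -/

lemma orth_two {u₀ u₁ : Fin n → ℍq} (h₀ : vip u₀ u₀ = 1) (h₁ : vip u₁ u₁ = 1)
    (h01 : vip u₀ u₁ = 0) (h10 : vip u₁ u₀ = 0) : Orth ![u₀, u₁] := by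
  intro i j
  fin_cases i <;> fin_cases j <;>
    simp [Matrix.cons_val_zero, Matrix.cons_val_one, h₀, h₁, h01, h10]

lemma single_map (hn1 : 1 ≤ n) (a b : Fin n → ℍq) (h : vip a a = vip b b) :
    ∃ B : Matrix (Fin n) (Fin n) ℍq, Bᴴ * B = 1 ∧ B *ᵥ a = b := by
  by_cases ha : a = 0
  · have hb : b = 0 := by
      apply eq_zero_of_vip_self_eq_zero
      rw [← h, ha]
      simp [vip]
    refine ⟨1, by simp, ?_⟩
    rw [ha, hb, Matrix.mulVec_zero]
  · have hb : b ≠ 0 := by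
      intro hb0
      apply ha
      apply eq_zero_of_vip_self_eq_zero
      rw [h, hb0]
      simp [vip]
    obtain ⟨R, hRpos, hvipa, hOa⟩ := orth_single ha
    obtain ⟨R', hR'pos, hvipb, hOb⟩ := orth_single hb
    have hRR : R = R' := by
      exact Quaternion.coe_injective (hvipa.symm.trans (h.trans hvipb))
    subst hRR
    set t : ℝ := (Real.sqrt R)⁻¹ with ht
    obtain ⟨B, hB, hmap⟩ := onb_map hn1 _ _ hOa hOb
    refine ⟨B, hB, ?_⟩
    have hts : t * Real.sqrt R = 1 := by
      rw [ht]
      exact inv_mul_cancel₀ (by positivity)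
    have h1 : B *ᵥ rightMulV a (t : ℍq) = rightMulV b (t : ℍq) := hmap 0
    have h2 : B *ᵥ a = B *ᵥ rightMulV (rightMulV a (t : ℍq)) ((Real.sqrt R : ℝ) : ℍq) := by
      rw [rmul_coe_coe a hts]
    rw [h2, mulVec_rmul, h1, rmul_coe_coe b hts]

lemma pair_map (hn : 2 ≤ n) (a₀ a₁ b₀ b₁ : Fin n → ℍq)
    (h00 : vip a₀ a₀ = vip b₀ b₀) (h01 : vip a₀ a₁ = vip b₀ b₁)
    (h11 : vip a₁ a₁ = vip b₁ b₁) :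
    ∃ B : Matrix (Fin n) (Fin n) ℍq, Bᴴ * B = 1 ∧ B *ᵥ a₀ = b₀ ∧ B *ᵥ a₁ = b₁ := by
  by_cases h0 : a₀ = 0
  · have hb0 : b₀ = 0 := by
      apply eq_zero_of_vip_self_eq_zero
      rw [← h00, h0]; simp [vip]
    obtain ⟨B, hB, hmap⟩ := single_map (by omega) a₁ b₁ h11
    exact ⟨B, hB, by rw [h0, hb0, Matrix.mulVec_zero], hmap⟩
  · have hb0 : b₀ ≠ 0 := by
      intro hb
      exact h0 (eq_zero_of_vip_self_eq_zero (by rw [h00, hb]; simp [vip]))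
    obtain ⟨R₀, hR₀pos, hvipa0, _⟩ := orth_single h0
    have hvipb0 : vip b₀ b₀ = (R₀ : ℍq) := h00 ▸ hvipa0
    set t₀ : ℝ := (Real.sqrt R₀)⁻¹ with ht₀
    have hts : t₀ * Real.sqrt R₀ = 1 := inv_mul_cancel₀ (by positivity)
    set u₀ : Fin n → ℍq := rightMulV a₀ (t₀ : ℍq) with hu₀
    set u₀' : Fin n → ℍq := rightMulV b₀ (t₀ : ℍq) with hu₀'
    have hu₀u : vip u₀ u₀ = 1 := by
      rw [hu₀, vip_rmul_right, vip_rmul_left, Quaternion.star_coe, hvipa0, t_norm hR₀pos]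
    have hu₀'u : vip u₀' u₀' = 1 := by
      rw [hu₀', vip_rmul_right, vip_rmul_left, Quaternion.star_coe, hvipb0, t_norm hR₀pos]
    set c : ℍq := vip u₀ a₁ with hc
    have hc' : vip u₀' b₁ = c := by
      rw [hu₀', vip_rmul_left, Quaternion.star_coe, ← h01, hc, hu₀, vip_rmul_left,
        Quaternion.star_coe]
    set a₁' : Fin n → ℍq := a₁ - rightMulV u₀ c with ha₁'
    set b₁' : Fin n → ℍq := b₁ - rightMulV u₀' c with hb₁'
    have hdecomp_a : a₁ = a₁' + rightMulV u₀ c := by rw [ha₁']; abel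
    have hdecomp_b : b₁ = b₁' + rightMulV u₀' c := by rw [hb₁']; abel
    have horth_a : vip u₀ a₁' = 0 := by
      rw [ha₁', vip_sub_right, vip_rmul_right, hu₀u, one_mul, hc, sub_self]
    have horth_b : vip u₀' b₁' = 0 := by
      rw [hb₁', vip_sub_right, vip_rmul_right, hu₀'u, one_mul, hc', sub_self]
    have hself_a : vip a₁' a₁' = vip a₁ a₁ - star c * c := by
      have e1 : vip a₁ (rightMulV u₀ c) = star c * c := by
        rw [vip_rmul_right, show vip a₁ u₀ = star c by rw [← vip_star, ← hc]]
      have e2 : vip (rightMulV u₀ c) a₁ = star c * c := by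
        rw [vip_rmul_left, ← hc]
      have e3 : vip (rightMulV u₀ c) (rightMulV u₀ c) = star c * c := by
        rw [vip_rmul_right, vip_rmul_left, hu₀u, mul_one]
      rw [ha₁', vip_sub_right, vip_sub_left, vip_sub_left, e1, e2, e3]
      abel
    have hself_b : vip b₁' b₁' = vip b₁ b₁ - star c * c := by
      have e1 : vip b₁ (rightMulV u₀' c) = star c * c := by
        rw [vip_rmul_right, show vip b₁ u₀' = star c by rw [← vip_star, hc']]
      have e2 : vip (rightMulV u₀' c) b₁ = star c * c := by
        rw [vip_rmul_left, hc']
      have e3 : vip (rightMulV u₀' c) (rightMulV u₀' c) = star c * c := by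
        rw [vip_rmul_right, vip_rmul_left, hu₀'u, mul_one]
      rw [hb₁', vip_sub_right, vip_sub_left, vip_sub_left, e1, e2, e3]
      abel
    have hself_ab : vip a₁' a₁' = vip b₁' b₁' := by rw [hself_a, hself_b, h11]
    by_cases h1z : a₁' = 0
    · have hb1z : b₁' = 0 := by
        apply eq_zero_of_vip_self_eq_zero
        rw [← hself_ab, h1z]; simp [vip]
      have hO : Orth (fun _ : Fin 1 => u₀) := by
        intro i j
        rw [Subsingleton.elim i j, if_pos rfl, hu₀u]
      have hO' : Orth (fun _ : Fin 1 => u₀') := by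
        intro i j
        rw [Subsingleton.elim i j, if_pos rfl, hu₀'u]
      obtain ⟨B, hB, hmap⟩ := onb_map (by omega) _ _ hO hO'
      have hBu : B *ᵥ u₀ = u₀' := hmap 0
      refine ⟨B, hB, ?_, ?_⟩
      · rw [show a₀ = rightMulV u₀ ((Real.sqrt R₀ : ℝ) : ℍq) from (rmul_coe_coe a₀ hts).symm,
          mulVec_rmul, hBu, rmul_coe_coe b₀ hts]
      · rw [hdecomp_a, h1z, zero_add, mulVec_rmul, hBu, hdecomp_b, hb1z, zero_add]
    · have hb1z : b₁' ≠ 0 := by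
        intro hb
        exact h1z (eq_zero_of_vip_self_eq_zero (by rw [hself_ab, hb]; simp [vip]))
      obtain ⟨S, hSpos, hvipa1, _⟩ := orth_single h1z
      have hvipb1 : vip b₁' b₁' = (S : ℍq) := hself_ab ▸ hvipa1
      set t₁ : ℝ := (Real.sqrt S)⁻¹ with ht₁
      have hts1 : t₁ * Real.sqrt S = 1 := inv_mul_cancel₀ (by positivity)
      set u₁ : Fin n → ℍq := rightMulV a₁' (t₁ : ℍq) with hu₁
      set u₁' : Fin n → ℍq := rightMulV b₁' (t₁ : ℍq) with hu₁'
      have hu₁u : vip u₁ u₁ = 1 := by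
        rw [hu₁, vip_rmul_right, vip_rmul_left, Quaternion.star_coe, hvipa1, t_norm hSpos]
      have hu₁'u : vip u₁' u₁' = 1 := by
        rw [hu₁', vip_rmul_right, vip_rmul_left, Quaternion.star_coe, hvipb1, t_norm hSpos]
      have h01u : vip u₀ u₁ = 0 := by
        rw [hu₁, vip_rmul_right, horth_a, zero_mul]
      have h01u' : vip u₀' u₁' = 0 := by
        rw [hu₁', vip_rmul_right, horth_b, zero_mul]
      have h10u : vip u₁ u₀ = 0 := by rw [← vip_star, h01u, star_zero]
      have h10u' : vip u₁' u₀' = 0 := by rw [← vip_star, h01u', star_zero]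
      have hO : Orth ![u₀, u₁] := orth_two hu₀u hu₁u h01u h10u
      have hO' : Orth ![u₀', u₁'] := orth_two hu₀'u hu₁'u h01u' h10u'
      obtain ⟨B, hB, hmap⟩ := onb_map hn _ _ hO hO'
      have hBu0 : B *ᵥ u₀ = u₀' := by simpa using hmap 0
      have hBu1 : B *ᵥ u₁ = u₁' := by simpa using hmap 1
      refine ⟨B, hB, ?_, ?_⟩
      · rw [show a₀ = rightMulV u₀ ((Real.sqrt R₀ : ℝ) : ℍq) from (rmul_coe_coe a₀ hts).symm,
          mulVec_rmul, hBu0, rmul_coe_coe b₀ hts]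
      · rw [hdecomp_a, hdecomp_b, Matrix.mulVec_add, mulVec_rmul, hBu0,
          show a₁' = rightMulV u₁ ((Real.sqrt S : ℝ) : ℍq) from (rmul_coe_coe a₁' hts1).symm,
          mulVec_rmul, hBu1, rmul_coe_coe b₁' hts1]

/-- Equal Gram matrices imply `Sp(n)`-congruence. -/
lemma gram_map {n : ℕ} (hn : 2 ≤ n) (v w : MatH n) (hG : vᴴ * v = wᴴ * w) :
    ∃ B ∈ SpH n, w = B * v := by
  have hentry : ∀ i j : Fin 2, vip (_root_.col i v) (_root_.col j v)
      = vip (_root_.col i w) (_root_.col j w) := by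
    intro i j
    have h := congrArg (fun M => M i j) hG
    simpa [Matrix.mul_apply, Matrix.conjTranspose_apply, vip, _root_.col] using h
  obtain ⟨B, hB, h0, h1⟩ := pair_map hn (_root_.col 0 v) (_root_.col 1 v)
    (_root_.col 0 w) (_root_.col 1 w) (hentry 0 0) (hentry 0 1) (hentry 1 1)
  refine ⟨B, hB, ?_⟩
  refine Matrix.ext fun i j => ?_
  have key : (B *ᵥ _root_.col j v) i = _root_.col j w i := by
    fin_cases j
    · exact congrFun h0 i
    · exact congrFun h1 i
  calc w i j = (B *ᵥ _root_.col j v) i := key.symm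
    _ = (B * v) i j := by
        simp [Matrix.mul_apply, Matrix.mulVec, dotProduct, _root_.col]

end Stmt8Aux
end

noncomputable section

/-- Proposition 4.1(c): two unit vectors of `m` are congruent under the isotropy action of
`Sp(2) × Sp(n)` if and only if `vᴴv` and `ṽᴴṽ` are `Sp(2)`-conjugate (equivalently, iff the
two vectors have the same characteristic angle). -/
theorem stmt8 (n : ℕ) (hn : 2 ≤ n) (v w : MatH n)
    (hv : hnorm v = 1) (hw : hnorm w = 1) :
    (∃ B₁ ∈ SpH 2, ∃ B₂ ∈ SpH n, w = B₂ * v * B₁ᴴ) ↔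
      ∃ B ∈ SpH 2, wᴴ * w = B * (vᴴ * v) * Bᴴ := by
  constructor
  · rintro ⟨B₁, hB₁, B₂, hB₂, rfl⟩
    refine ⟨B₁, hB₁, ?_⟩
    have hB₂' : B₂ᴴ * B₂ = 1 := hB₂
    have h2 : B₂ᴴ * (B₂ * (v * B₁ᴴ)) = v * B₁ᴴ := by
      rw [← Matrix.mul_assoc, hB₂', Matrix.one_mul]
    rw [Matrix.conjTranspose_mul, Matrix.conjTranspose_mul, Matrix.conjTranspose_conjTranspose]
    simp only [Matrix.mul_assoc, h2]
  · rintro ⟨B, hB, hgram⟩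
    have hgram' : (v * Bᴴ)ᴴ * (v * Bᴴ) = wᴴ * w := by
      rw [Matrix.conjTranspose_mul, Matrix.conjTranspose_conjTranspose, hgram]
      simp only [Matrix.mul_assoc]
    obtain ⟨B₂, hB₂, hw2⟩ := Stmt8Aux.gram_map hn (v * Bᴴ) w hgram'
    exact ⟨B, hB, B₂, hB₂, by rw [hw2, Matrix.mul_assoc]⟩

end
end
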